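/- arXiv:1905.08049 — 4 statements merged into one kernel-verified Lean document; each statement's English description precedes it below -/
import Mathlib

section
/- The groups G_{n,D}^2 and G_{n+1}^2 / ⟨a_{i(n+1)}a_{j(n+1)} = a_{j(n+1)}a_{i(n+1)}⟩ are isomorphic; specifically, the homomorphisms ω (sending a_{ij} ↦ a_{ij} for i,j ≤ n and a_{i(n+1)} ↦ τ_i) and κ (sending a_{ij} ↦ a_{ij} and τ_i ↦ a_{i(n+1)}) are mutually inverse. -/
/-- Index type for the generators `a_{ij}`: two-element subsets of `Fin n`. -/
abbrev PairIdx (n : ℕ) := {s : Finset (Fin n) // s.card = 2}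

/-- The unordered pair `{i,j}` as an index. -/
def mkPair {n : ℕ} (i j : Fin n) (h : i ≠ j) : PairIdx n := ⟨{i, j}, Finset.card_pair h⟩

/-- Relations of the group `G_n^2`. -/
def gn2Rels (n : ℕ) : Set (FreeGroup (PairIdx n)) :=
  {r | (∃ (i j : Fin n) (h : i ≠ j),
          r = FreeGroup.of (mkPair i j h) * FreeGroup.of (mkPair i j h)) ∨
       (∃ (i j k l : Fin n) (hij : i ≠ j) (hkl : k ≠ l),
          i ≠ k ∧ i ≠ l ∧ j ≠ k ∧ j ≠ l ∧
          r = FreeGroup.of (mkPair i j hij) * FreeGroup.of (mkPair k l hkl) *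
              (FreeGroup.of (mkPair i j hij))⁻¹ * (FreeGroup.of (mkPair k l hkl))⁻¹) ∨
       (∃ (i j k : Fin n) (hij : i ≠ j) (hik : i ≠ k) (hjk : j ≠ k),
          r = FreeGroup.of (mkPair i j hij) * FreeGroup.of (mkPair i k hik) *
              FreeGroup.of (mkPair j k hjk) *
              (FreeGroup.of (mkPair j k hjk) * FreeGroup.of (mkPair i k hik) *
               FreeGroup.of (mkPair i j hij))⁻¹)}

/-- The group `G_n^2`. -/
abbrev Gn2 (n : ℕ) := PresentedGroup (gn2Rels n)

/-- The generator `a_{ij}` of `G_n^2`. -/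
def A2 {n : ℕ} (i j : Fin n) (h : i ≠ j) : Gn2 n := PresentedGroup.of (mkPair i j h)

/-- Relations of the group `G_{n,P}^2` (`G_n^2` with parity). -/
def gnP2Rels (n : ℕ) : Set (FreeGroup (PairIdx n × ZMod 2)) :=
  {r | (∃ (i j : Fin n) (h : i ≠ j) (ε : ZMod 2),
          r = FreeGroup.of (mkPair i j h, ε) * FreeGroup.of (mkPair i j h, ε)) ∨
       (∃ (i j k l : Fin n) (hij : i ≠ j) (hkl : k ≠ l) (ε₁ ε₂ : ZMod 2),
          i ≠ k ∧ i ≠ l ∧ j ≠ k ∧ j ≠ l ∧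
          r = FreeGroup.of (mkPair i j hij, ε₁) * FreeGroup.of (mkPair k l hkl, ε₂) *
              (FreeGroup.of (mkPair i j hij, ε₁))⁻¹ * (FreeGroup.of (mkPair k l hkl, ε₂))⁻¹) ∨
       (∃ (i j k : Fin n) (hij : i ≠ j) (hik : i ≠ k) (hjk : j ≠ k)
          (εij εik εjk : ZMod 2), εij + εik + εjk = 0 ∧
          r = FreeGroup.of (mkPair i j hij, εij) * FreeGroup.of (mkPair i k hik, εik) *
              FreeGroup.of (mkPair j k hjk, εjk) *
              (FreeGroup.of (mkPair j k hjk, εjk) * FreeGroup.of (mkPair i k hik, εik) *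
               FreeGroup.of (mkPair i j hij, εij))⁻¹)}

/-- The group `G_{n,P}^2`. -/
abbrev GnP2 (n : ℕ) := PresentedGroup (gnP2Rels n)

/-- The generator `a_{ij}^ε` of `G_{n,P}^2`. -/
def AP {n : ℕ} (i j : Fin n) (h : i ≠ j) (ε : ZMod 2) : GnP2 n :=
  PresentedGroup.of (mkPair i j h, ε)

/-- Alphabet of `G_{n,D}^2`: crossing generators `a_{ij}` and point generators `τ_i`. -/
abbrev DIdx (n : ℕ) := PairIdx n ⊕ Fin n

/-- Relations of the group `G_{n,D}^2` (`G_n^2` with points). -/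
def gnD2Rels (n : ℕ) : Set (FreeGroup (DIdx n)) :=
  {r | (∃ (i j : Fin n) (h : i ≠ j),
          r = FreeGroup.of (Sum.inl (mkPair i j h) : DIdx n) *
              FreeGroup.of (Sum.inl (mkPair i j h) : DIdx n)) ∨
       (∃ (i j k l : Fin n) (hij : i ≠ j) (hkl : k ≠ l),
          i ≠ k ∧ i ≠ l ∧ j ≠ k ∧ j ≠ l ∧
          r = FreeGroup.of (Sum.inl (mkPair i j hij) : DIdx n) *
              FreeGroup.of (Sum.inl (mkPair k l hkl) : DIdx n) *
              (FreeGroup.of (Sum.inl (mkPair i j hij) : DIdx n))⁻¹ *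
              (FreeGroup.of (Sum.inl (mkPair k l hkl) : DIdx n))⁻¹) ∨
       (∃ (i j k : Fin n) (hij : i ≠ j) (hik : i ≠ k) (hjk : j ≠ k),
          r = FreeGroup.of (Sum.inl (mkPair i j hij) : DIdx n) *
              FreeGroup.of (Sum.inl (mkPair i k hik) : DIdx n) *
              FreeGroup.of (Sum.inl (mkPair j k hjk) : DIdx n) *
              (FreeGroup.of (Sum.inl (mkPair j k hjk) : DIdx n) *
               FreeGroup.of (Sum.inl (mkPair i k hik) : DIdx n) *
               FreeGroup.of (Sum.inl (mkPair i j hij) : DIdx n))⁻¹) ∨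
       (∃ i : Fin n,
          r = FreeGroup.of (Sum.inr i : DIdx n) * FreeGroup.of (Sum.inr i : DIdx n)) ∨
       (∃ i j : Fin n,
          r = FreeGroup.of (Sum.inr i : DIdx n) * FreeGroup.of (Sum.inr j : DIdx n) *
              (FreeGroup.of (Sum.inr i : DIdx n))⁻¹ * (FreeGroup.of (Sum.inr j : DIdx n))⁻¹) ∨
       (∃ (i j : Fin n) (h : i ≠ j),
          r = FreeGroup.of (Sum.inr i : DIdx n) * FreeGroup.of (Sum.inr j : DIdx n) *
              FreeGroup.of (Sum.inl (mkPair i j h) : DIdx n) *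
              FreeGroup.of (Sum.inr j : DIdx n) * FreeGroup.of (Sum.inr i : DIdx n) *
              (FreeGroup.of (Sum.inl (mkPair i j h) : DIdx n))⁻¹) ∨
       (∃ (i j k : Fin n) (h : i ≠ j), k ≠ i ∧ k ≠ j ∧
          r = FreeGroup.of (Sum.inl (mkPair i j h) : DIdx n) *
              FreeGroup.of (Sum.inr k : DIdx n) *
              (FreeGroup.of (Sum.inl (mkPair i j h) : DIdx n))⁻¹ *
              (FreeGroup.of (Sum.inr k : DIdx n))⁻¹)}

/-- The group `G_{n,D}^2`. -/
abbrev GnD2 (n : ℕ) := PresentedGroup (gnD2Rels n)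

/-- The generator `a_{ij}` of `G_{n,D}^2`. -/
def AD {n : ℕ} (i j : Fin n) (h : i ≠ j) : GnD2 n := PresentedGroup.of (Sum.inl (mkPair i j h))

/-- The generator `τ_i` of `G_{n,D}^2`. -/
def T {n : ℕ} (i : Fin n) : GnD2 n := PresentedGroup.of (Sum.inr i)

open scoped commutatorElement

/-- The forbidden relators: commutators `[a_{i(n+1)}, a_{j(n+1)}]` in `G_{n+1}^2`. -/
def forbiddenRels (n : ℕ) : Set (Gn2 (n + 1)) :=
  {x | ∃ (i j : Fin n) (h : i ≠ j),
    x = ⁅A2 i.castSucc (Fin.last n) (Fin.castSucc_lt_last i).ne,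
         A2 j.castSucc (Fin.last n) (Fin.castSucc_lt_last j).ne⁆}

/-- The quotient `G_{n+1}^2 / ⟨a_{i(n+1)}a_{j(n+1)} = a_{j(n+1)}a_{i(n+1)}⟩`. -/
abbrev Gn2Quot (n : ℕ) := Gn2 (n + 1) ⧸ Subgroup.normalClosure (forbiddenRels n)

/-- The projection `G_{n+1}^2 → G_{n+1}^2 / ⟨a_{i(n+1)}a_{j(n+1)} = a_{j(n+1)}a_{i(n+1)}⟩`. -/
def toQuot (n : ℕ) : Gn2 (n + 1) →* Gn2Quot n :=
  QuotientGroup.mk' (Subgroup.normalClosure (forbiddenRels n))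

/-! ### Auxiliary machinery for `stmt12` -/

section Stmt12Aux

open PresentedGroup

/- Generic group lemmas -/
section Grp
variable {G : Type*} [Group G] {a b x : G}

private theorem comm_of_comm_rel (h : a * b * a⁻¹ * b⁻¹ = 1) : a * b = b * a := by
  have h2 : a * b * a⁻¹ = b := mul_inv_eq_one.mp h
  calc a * b = (a * b * a⁻¹) * a := by group
    _ = b * a := by rw [h2]

private theorem comm_rel_of_comm (h : a * b = b * a) : a * b * a⁻¹ * b⁻¹ = 1 := by
  rw [h]; group

private theorem comm_of_conj (ha : a * a = 1) (hb : b * b = 1)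
    (g : a * b * x * b * a = x) : a * b * x = x * (a * b) := by
  calc a * b * x = (a * b * x) * (b * ((a * a) * b)) := by rw [ha, one_mul, hb, mul_one]
    _ = (a * b * x * b * a) * (a * b) := by group
    _ = x * (a * b) := by rw [g]

private theorem conj_eq_self (ha : a * a = 1) (hb : b * b = 1)
    (hc : a * b * x = x * (a * b)) : a * b * x * b * a = x := by
  calc a * b * x * b * a = (x * (a * b)) * b * a := by rw [hc]
    _ = x * (a * (b * b) * a) := by group
    _ = x := by rw [hb, mul_one, ha, mul_one]

private theorem conj_swap (ha : a * a = 1) (hb : b * b = 1) (hab : a * b = b * a)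
    (hc : a * b * x = x * (a * b)) : a * x * b = b * x * a := by
  have h2 : b * a * x = x * (b * a) := by rw [← hab]; exact hc
  have e2 : a * x * a = b * x * b := by
    calc a * x * a = (b * b) * (a * x * a) := by rw [hb, one_mul]
      _ = b * ((b * a * x) * a) := by group
      _ = b * ((x * (b * a)) * a) := by rw [h2]
      _ = (b * x * b) * (a * a) := by group
      _ = b * x * b := by rw [ha, mul_one]
  calc a * x * b = a * x * ((a * a) * b) := by rw [ha, one_mul]
    _ = (a * x * a) * (a * b) := by group
    _ = (b * x * b) * (b * a) := by rw [e2, hab]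
    _ = b * x * ((b * b) * a) := by group
    _ = b * x * a := by rw [hb, one_mul]

end Grp

private theorem pg_rel {α : Type*} {rels : Set (FreeGroup α)} {r : FreeGroup α} (hr : r ∈ rels) :
    PresentedGroup.mk rels r = 1 :=
  (QuotientGroup.eq_one_iff r).2 (Subgroup.subset_normalClosure hr)

variable {n : ℕ}

theorem mkPair_comm (i j : Fin n) (h : i ≠ j) : mkPair i j h = mkPair j i h.symm :=
  Subtype.ext (Finset.pair_comm i j)

theorem pair_exists (s : PairIdx n) : ∃ (i j : Fin n) (h : i ≠ j), s = mkPair i j h := by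
  obtain ⟨i, j, hij, hs⟩ := Finset.card_eq_two.mp s.2
  exact ⟨i, j, hij, Subtype.ext hs⟩

theorem mem_mkPair_left (i j : Fin n) (h : i ≠ j) : i ∈ (mkPair i j h).1 := by
  simp [mkPair]

theorem mem_mkPair_right (i j : Fin n) (h : i ≠ j) : j ∈ (mkPair i j h).1 := by
  simp [mkPair]

/-! Basic relations in `GnD2 n` -/

theorem AD_symm (i j : Fin n) (h : i ≠ j) : AD i j h = AD j i h.symm := by
  unfold AD; rw [mkPair_comm]

theorem AD_sq (i j : Fin n) (h : i ≠ j) : AD i j h * AD i j h = 1 := by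
  have := pg_rel (rels := gnD2Rels n) (Or.inl ⟨i, j, h, rfl⟩)
  rw [map_mul] at this
  exact this

theorem T_sq (i : Fin n) : T i * T i = 1 := by
  have := pg_rel (rels := gnD2Rels n)
    (Or.inr (Or.inr (Or.inr (Or.inl ⟨i, rfl⟩))))
  rw [map_mul] at this
  exact this

theorem T_comm (i j : Fin n) : T i * T j = T j * T i := by
  have := pg_rel (rels := gnD2Rels n)
    (Or.inr (Or.inr (Or.inr (Or.inr (Or.inl ⟨i, j, rfl⟩)))))
  simp only [map_mul, map_inv] at this
  exact comm_of_comm_rel this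

theorem AD_far (i j k l : Fin n) (hij : i ≠ j) (hkl : k ≠ l)
    (hik : i ≠ k) (hil : i ≠ l) (hjk : j ≠ k) (hjl : j ≠ l) :
    AD i j hij * AD k l hkl = AD k l hkl * AD i j hij := by
  have := pg_rel (rels := gnD2Rels n)
    (Or.inr (Or.inl ⟨i, j, k, l, hij, hkl, hik, hil, hjk, hjl, rfl⟩))
  simp only [map_mul, map_inv] at this
  exact comm_of_comm_rel this

theorem AD_triple (i j k : Fin n) (hij : i ≠ j) (hik : i ≠ k) (hjk : j ≠ k) :
    AD i j hij * AD i k hik * AD j k hjk = AD j k hjk * AD i k hik * AD i j hij := by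
  have := pg_rel (rels := gnD2Rels n)
    (Or.inr (Or.inr (Or.inl ⟨i, j, k, hij, hik, hjk, rfl⟩)))
  simp only [map_mul, map_inv] at this
  exact mul_inv_eq_one.mp this

theorem TTAD (i j : Fin n) (h : i ≠ j) :
    T i * T j * AD i j h * T j * T i = AD i j h := by
  have := pg_rel (rels := gnD2Rels n)
    (Or.inr (Or.inr (Or.inr (Or.inr (Or.inr (Or.inl ⟨i, j, h, rfl⟩))))))
  simp only [map_mul, map_inv] at this
  exact mul_inv_eq_one.mp this

theorem AD_T (i j : Fin n) (h : i ≠ j) (k : Fin n) (hki : k ≠ i) (hkj : k ≠ j) :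
    AD i j h * T k = T k * AD i j h := by
  have := pg_rel (rels := gnD2Rels n)
    (Or.inr (Or.inr (Or.inr (Or.inr (Or.inr (Or.inr ⟨i, j, k, h, hki, hkj, rfl⟩))))))
  simp only [map_mul, map_inv] at this
  exact comm_of_comm_rel this

theorem TTA (i j : Fin n) (h : i ≠ j) :
    T i * T j * AD i j h = AD i j h * (T i * T j) :=
  comm_of_conj (T_sq i) (T_sq j) (TTAD i j h)

theorem case_i_last (j k : Fin n) (h : j ≠ k) :
    T j * T k * AD j k h = AD j k h * T k * T j := by
  rw [TTA j k h, T_comm j k, ← mul_assoc]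

theorem case_j_last (i k : Fin n) (h : i ≠ k) :
    T i * AD i k h * T k = T k * AD i k h * T i :=
  conj_swap (T_sq i) (T_sq k) (T_comm i k) (TTA i k h)

theorem case_k_last (i j : Fin n) (h : i ≠ j) :
    AD i j h * T i * T j = T j * T i * AD i j h := by
  rw [mul_assoc, ← TTA i j h, T_comm i j]

end Stmt12Aux
section Stmt12Aux2

open PresentedGroup

variable {n : ℕ}

/-! Basic relations in `Gn2 (n+1)` and its quotient -/

theorem A2_symm (i j : Fin n) (h : i ≠ j) : A2 i j h = A2 j i h.symm := by
  unfold A2; rw [mkPair_comm]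

theorem A2_sq (i j : Fin n) (h : i ≠ j) : A2 i j h * A2 i j h = 1 := by
  have := pg_rel (rels := gn2Rels n) (Or.inl ⟨i, j, h, rfl⟩)
  rw [map_mul] at this
  exact this

theorem A2_far (i j k l : Fin n) (hij : i ≠ j) (hkl : k ≠ l)
    (hik : i ≠ k) (hil : i ≠ l) (hjk : j ≠ k) (hjl : j ≠ l) :
    A2 i j hij * A2 k l hkl = A2 k l hkl * A2 i j hij := by
  have := pg_rel (rels := gn2Rels n)
    (Or.inr (Or.inl ⟨i, j, k, l, hij, hkl, hik, hil, hjk, hjl, rfl⟩))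
  simp only [map_mul, map_inv] at this
  exact comm_of_comm_rel this

theorem A2_triple (i j k : Fin n) (hij : i ≠ j) (hik : i ≠ k) (hjk : j ≠ k) :
    A2 i j hij * A2 i k hik * A2 j k hjk = A2 j k hjk * A2 i k hik * A2 i j hij := by
  have := pg_rel (rels := gn2Rels n)
    (Or.inr (Or.inr ⟨i, j, k, hij, hik, hjk, rfl⟩))
  simp only [map_mul, map_inv] at this
  exact mul_inv_eq_one.mp this

/-- `B i` : image of `a_{i,n+1}` in the quotient. -/
def Bq (i : Fin n) : Gn2Quot n :=
  toQuot n (A2 i.castSucc (Fin.last n) (Fin.castSucc_lt_last i).ne)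

theorem Bq_sq (i : Fin n) : Bq i * Bq i = 1 := by
  rw [Bq, ← map_mul, A2_sq, map_one]

theorem Bq_comm (i j : Fin n) : Bq i * Bq j = Bq j * Bq i := by
  rcases eq_or_ne i j with rfl | hij
  · rfl
  · have h1 : toQuot n ⁅A2 i.castSucc (Fin.last n) (Fin.castSucc_lt_last i).ne,
        A2 j.castSucc (Fin.last n) (Fin.castSucc_lt_last j).ne⁆ = 1 :=
      (QuotientGroup.eq_one_iff _).2
        (Subgroup.subset_normalClosure ⟨i, j, hij, rfl⟩)
    rw [map_commutatorElement] at h1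
    exact commutatorElement_eq_one_iff_mul_comm.mp h1

theorem qA_sq (i j : Fin (n+1)) (h : i ≠ j) :
    toQuot n (A2 i j h) * toQuot n (A2 i j h) = 1 := by
  rw [← map_mul, A2_sq, map_one]

theorem qA_far (i j k l : Fin (n+1)) (hij : i ≠ j) (hkl : k ≠ l)
    (hik : i ≠ k) (hil : i ≠ l) (hjk : j ≠ k) (hjl : j ≠ l) :
    toQuot n (A2 i j hij) * toQuot n (A2 k l hkl) =
      toQuot n (A2 k l hkl) * toQuot n (A2 i j hij) := by
  rw [← map_mul, ← map_mul, A2_far i j k l hij hkl hik hil hjk hjl]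

theorem qA_triple (i j k : Fin (n+1)) (hij : i ≠ j) (hik : i ≠ k) (hjk : j ≠ k) :
    toQuot n (A2 i j hij) * toQuot n (A2 i k hik) * toQuot n (A2 j k hjk) =
      toQuot n (A2 j k hjk) * toQuot n (A2 i k hik) * toQuot n (A2 i j hij) := by
  simp only [← map_mul]
  rw [A2_triple i j k hij hik hjk]

theorem qBBA (i j : Fin n) (hij : i ≠ j) :
    Bq i * Bq j * toQuot n (A2 i.castSucc j.castSucc ((Fin.castSucc_injective n).ne hij)) =
      toQuot n (A2 i.castSucc j.castSucc ((Fin.castSucc_injective n).ne hij)) *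
        (Bq i * Bq j) := by
  have ht := qA_triple i.castSucc j.castSucc (Fin.last n)
    ((Fin.castSucc_injective n).ne hij) (Fin.castSucc_lt_last i).ne (Fin.castSucc_lt_last j).ne
  calc Bq i * Bq j * toQuot n (A2 i.castSucc j.castSucc ((Fin.castSucc_injective n).ne hij))
      = Bq j * Bq i * toQuot n (A2 i.castSucc j.castSucc ((Fin.castSucc_injective n).ne hij)) := by
        rw [Bq_comm i j]
    _ = toQuot n (A2 i.castSucc j.castSucc ((Fin.castSucc_injective n).ne hij)) * Bq i * Bq j :=
        ht.symm
    _ = _ := by rw [mul_assoc]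

theorem qrel6 (i j : Fin n) (hij : i ≠ j) :
    Bq i * Bq j * toQuot n (A2 i.castSucc j.castSucc ((Fin.castSucc_injective n).ne hij)) *
      Bq j * Bq i =
      toQuot n (A2 i.castSucc j.castSucc ((Fin.castSucc_injective n).ne hij)) :=
  conj_eq_self (Bq_sq i) (Bq_sq j) (qBBA i j hij)

/-! The map `pairUp` and the function defining `κ`. -/

def pairUp (s : PairIdx n) : PairIdx (n+1) :=
  ⟨s.1.map ⟨Fin.castSucc, Fin.castSucc_injective n⟩, by rw [Finset.card_map]; exact s.2⟩

theorem pairUp_mkPair (i j : Fin n) (h : i ≠ j) :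
    pairUp (mkPair i j h) = mkPair i.castSucc j.castSucc ((Fin.castSucc_injective n).ne h) := by
  apply Subtype.ext
  simp [pairUp, mkPair, Finset.map_insert, Finset.map_singleton]

/-- The function on letters defining `κ`. -/
def kf : DIdx n → Gn2Quot n :=
  Sum.elim (fun t => toQuot n (PresentedGroup.of (pairUp t))) (fun i => Bq i)

theorem kappa_rels : ∀ r ∈ gnD2Rels n, FreeGroup.lift (kf (n := n)) r = 1 := by
  intro r hr
  rcases hr with ⟨i, j, h, rfl⟩ | ⟨i, j, k, l, hij, hkl, hik, hil, hjk, hjl, rfl⟩ |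
    ⟨i, j, k, hij, hik, hjk, rfl⟩ | ⟨i, rfl⟩ | ⟨i, j, rfl⟩ | ⟨i, j, h, rfl⟩ |
    ⟨i, j, k, h, hki, hkj, rfl⟩
  · simp only [map_mul, FreeGroup.lift_apply_of, kf, Sum.elim_inl, pairUp_mkPair]
    exact qA_sq _ _ _
  · simp only [map_mul, map_inv, FreeGroup.lift_apply_of, kf, Sum.elim_inl, pairUp_mkPair]
    exact comm_rel_of_comm (qA_far _ _ _ _ _ _
      ((Fin.castSucc_injective n).ne hik) ((Fin.castSucc_injective n).ne hil)
      ((Fin.castSucc_injective n).ne hjk) ((Fin.castSucc_injective n).ne hjl))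
  · simp only [map_mul, map_inv, FreeGroup.lift_apply_of, kf, Sum.elim_inl, pairUp_mkPair]
    rw [mul_inv_eq_one]
    exact qA_triple _ _ _ _ _ _
  · simp only [map_mul, FreeGroup.lift_apply_of, kf, Sum.elim_inr]
    exact Bq_sq i
  · simp only [map_mul, map_inv, FreeGroup.lift_apply_of, kf, Sum.elim_inr]
    exact comm_rel_of_comm (Bq_comm i j)
  · simp only [map_mul, map_inv, FreeGroup.lift_apply_of, kf, Sum.elim_inl, Sum.elim_inr,
      pairUp_mkPair]
    rw [mul_inv_eq_one]
    exact qrel6 i j h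
  · simp only [map_mul, map_inv, FreeGroup.lift_apply_of, kf, Sum.elim_inl, Sum.elim_inr,
      pairUp_mkPair]
    exact comm_rel_of_comm (qA_far _ _ _ _ _ _
      ((Fin.castSucc_injective n).ne (Ne.symm hki)) (Fin.castSucc_lt_last i).ne
      ((Fin.castSucc_injective n).ne (Ne.symm hkj)) (Fin.castSucc_lt_last j).ne)

/-- The homomorphism `κ : G_{n,D}^2 → G_{n+1}^2/⟨…⟩`. -/
def kappa : GnD2 n →* Gn2Quot n := PresentedGroup.toGroup kappa_rels

end Stmt12Aux2
section Stmt12Aux3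

open PresentedGroup

variable {n : ℕ} [NeZero n]

/-- Lower a non-last element of `Fin (n+1)` to `Fin n` (junk at `last`). -/
def lowerF (x : Fin (n+1)) : Fin n :=
  if h : (x : ℕ) < n then ⟨x, h⟩ else 0

theorem lowerF_castSucc (i : Fin n) : lowerF i.castSucc = i := by
  simp only [lowerF, Fin.coe_castSucc, i.isLt, dif_pos]

/-- The function on pairs defining `ω`. -/
def descend (s : PairIdx (n+1)) : DIdx n :=
  if h : Fin.last n ∈ s.1 then
    Sum.inr (lowerF ((s.1.erase (Fin.last n)).min' (by
      rw [← Finset.card_pos, Finset.card_erase_of_mem h, s.2]; norm_num)))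
  else
    Sum.inl ⟨s.1.image lowerF, by
      rw [Finset.card_image_of_injOn, s.2]
      intro x hx y hy hxy
      have hx' : (x : ℕ) < n := Fin.val_lt_last (by rintro rfl; exact h hx)
      have hy' : (y : ℕ) < n := Fin.val_lt_last (by rintro rfl; exact h hy)
      simp only [lowerF, dif_pos hx', dif_pos hy'] at hxy
      injection hxy with hv
      exact Fin.ext hv⟩

theorem descend_castSucc (i j : Fin n) (hc : i.castSucc ≠ j.castSucc) (h : i ≠ j) :
    descend (mkPair i.castSucc j.castSucc hc) = Sum.inl (mkPair i j h) := by
  rw [descend, dif_neg]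
  · congr 1
    apply Subtype.ext
    simp [mkPair, Finset.image_insert, Finset.image_singleton, lowerF_castSucc]
  · simp only [mkPair, Finset.mem_insert, Finset.mem_singleton]
    push_neg
    exact ⟨(Fin.castSucc_lt_last i).ne', (Fin.castSucc_lt_last j).ne'⟩

theorem descend_last (i : Fin n) (hc : i.castSucc ≠ Fin.last n) :
    descend (mkPair i.castSucc (Fin.last n) hc) = Sum.inr i := by
  rw [descend, dif_pos (by simp [mkPair])]
  have he : (mkPair i.castSucc (Fin.last n) hc).1.erase (Fin.last n) = {i.castSucc} := by
    show ({i.castSucc, Fin.last n} : Finset (Fin (n+1))).erase (Fin.last n) = _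
    rw [Finset.erase_insert_of_ne hc, Finset.erase_singleton]
    simp
  have hne : ((mkPair i.castSucc (Fin.last n) hc).1.erase (Fin.last n)).Nonempty := by
    rw [← Finset.card_pos, Finset.card_erase_of_mem (by simp [mkPair]),
      (mkPair i.castSucc (Fin.last n) hc).2]
    norm_num
  have hm := Finset.min'_mem ((mkPair i.castSucc (Fin.last n) hc).1.erase (Fin.last n)) hne
  have hm' : ((mkPair i.castSucc (Fin.last n) hc).1.erase (Fin.last n)).min' hne ∈
      ({i.castSucc} : Finset (Fin (n+1))) := by rw [← he]; exact hm
  rw [show (((mkPair i.castSucc (Fin.last n) hc).1.erase (Fin.last n)).min' _) =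
    i.castSucc from Finset.mem_singleton.mp hm', lowerF_castSucc]

theorem classify (s : PairIdx (n+1)) :
    (∃ (i j : Fin n) (h : i ≠ j),
      s = mkPair i.castSucc j.castSucc ((Fin.castSucc_injective n).ne h)) ∨
    (∃ i : Fin n, s = mkPair i.castSucc (Fin.last n) (Fin.castSucc_lt_last i).ne) := by
  obtain ⟨a, b, hab, rfl⟩ := pair_exists s
  rcases eq_or_ne a (Fin.last n) with rfl | ha
  · have hb : b ≠ Fin.last n := fun e => hab e.symm
    obtain ⟨b', rfl⟩ : ∃ b', b = b'.castSucc := ⟨b.castPred hb, (Fin.castSucc_castPred b hb).symm⟩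
    exact Or.inr ⟨b', mkPair_comm _ _ _⟩
  · obtain ⟨a', rfl⟩ : ∃ a', a = a'.castSucc := ⟨a.castPred ha, (Fin.castSucc_castPred a ha).symm⟩
    rcases eq_or_ne b (Fin.last n) with rfl | hb
    · exact Or.inr ⟨a', rfl⟩
    · obtain ⟨b', rfl⟩ : ∃ b', b = b'.castSucc :=
        ⟨b.castPred hb, (Fin.castSucc_castPred b hb).symm⟩
      exact Or.inl ⟨a', b', fun e => hab (congrArg Fin.castSucc e), rfl⟩

theorem descend_comm (s t : PairIdx (n+1)) (hd : Disjoint s.1 t.1) :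
    (PresentedGroup.of (descend s) : GnD2 n) * PresentedGroup.of (descend t) =
      PresentedGroup.of (descend t) * PresentedGroup.of (descend s) := by
  rcases classify s with ⟨i, j, hij, rfl⟩ | ⟨i, rfl⟩ <;>
    rcases classify t with ⟨k, l, hkl, rfl⟩ | ⟨k, rfl⟩
  · rw [descend_castSucc i j _ hij, descend_castSucc k l _ hkl]
    have h1 : i.castSucc ∉ (mkPair k.castSucc l.castSucc ((Fin.castSucc_injective n).ne hkl)).1 :=
      Finset.disjoint_left.mp hd (mem_mkPair_left _ _ _)
    have h2 : j.castSucc ∉ (mkPair k.castSucc l.castSucc ((Fin.castSucc_injective n).ne hkl)).1 :=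
      Finset.disjoint_left.mp hd (mem_mkPair_right _ _ _)
    simp only [mkPair, Finset.mem_insert, Finset.mem_singleton] at h1 h2
    push_neg at h1 h2
    exact AD_far i j k l hij hkl
      (fun e => h1.1 (congrArg Fin.castSucc e)) (fun e => h1.2 (congrArg Fin.castSucc e))
      (fun e => h2.1 (congrArg Fin.castSucc e)) (fun e => h2.2 (congrArg Fin.castSucc e))
  · rw [descend_castSucc i j _ hij, descend_last k _]
    have h1 : k.castSucc ∉ (mkPair i.castSucc j.castSucc ((Fin.castSucc_injective n).ne hij)).1 :=
      Finset.disjoint_right.mp hd (mem_mkPair_left _ _ _)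
    simp only [mkPair, Finset.mem_insert, Finset.mem_singleton] at h1
    push_neg at h1
    exact AD_T i j hij k
      (fun e => h1.1 (congrArg Fin.castSucc e)) (fun e => h1.2 (congrArg Fin.castSucc e))
  · rw [descend_castSucc k l _ hkl, descend_last i _]
    have h1 : i.castSucc ∉ (mkPair k.castSucc l.castSucc ((Fin.castSucc_injective n).ne hkl)).1 :=
      Finset.disjoint_left.mp hd (mem_mkPair_left _ _ _)
    simp only [mkPair, Finset.mem_insert, Finset.mem_singleton] at h1
    push_neg at h1
    exact (AD_T k l hkl i
      (fun e => h1.1 (congrArg Fin.castSucc e)) (fun e => h1.2 (congrArg Fin.castSucc e))).symm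
  · exact absurd (Finset.disjoint_left.mp hd (mem_mkPair_right _ _ _) (mem_mkPair_right _ _ _))
      (fun h => h)

theorem omega_rels : ∀ r ∈ gn2Rels (n+1),
    FreeGroup.lift (fun s => (PresentedGroup.of (descend s) : GnD2 n)) r = 1 := by
  intro r hr
  rcases hr with ⟨i, j, h, rfl⟩ | ⟨i, j, k, l, hij, hkl, hik, hil, hjk, hjl, rfl⟩ |
    ⟨i, j, k, hij, hik, hjk, rfl⟩
  · simp only [map_mul, FreeGroup.lift_apply_of]
    rcases classify (mkPair i j h) with ⟨i', j', h', he⟩ | ⟨i', he⟩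
    · rw [he, descend_castSucc i' j' _ h']
      exact AD_sq i' j' h'
    · rw [he, descend_last i' _]
      exact T_sq i'
  · simp only [map_mul, map_inv, FreeGroup.lift_apply_of]
    refine comm_rel_of_comm (descend_comm _ _ ?_)
    rw [Finset.disjoint_left]
    intro a ha hb
    simp only [mkPair, Finset.mem_insert, Finset.mem_singleton] at ha hb
    rcases ha with rfl | rfl <;> rcases hb with rfl | rfl
    · exact hik rfl
    · exact hil rfl
    · exact hjk rfl
    · exact hjl rfl
  · simp only [map_mul, map_inv, FreeGroup.lift_apply_of]
    rw [mul_inv_eq_one]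
    rcases eq_or_ne i (Fin.last n) with rfl | hi
    · have hj : j ≠ Fin.last n := fun e => hij e.symm
      have hk : k ≠ Fin.last n := fun e => hik e.symm
      obtain ⟨j', rfl⟩ : ∃ j', j = j'.castSucc :=
        ⟨j.castPred hj, (Fin.castSucc_castPred j hj).symm⟩
      obtain ⟨k', rfl⟩ : ∃ k', k = k'.castSucc :=
        ⟨k.castPred hk, (Fin.castSucc_castPred k hk).symm⟩
      have hjk' : j' ≠ k' := fun e => hjk (congrArg Fin.castSucc e)
      rw [mkPair_comm (Fin.last n) j'.castSucc hij, mkPair_comm (Fin.last n) k'.castSucc hik,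
        descend_last j' _, descend_last k' _, descend_castSucc j' k' _ hjk']
      exact case_i_last j' k' hjk'
    · obtain ⟨i', rfl⟩ : ∃ i', i = i'.castSucc :=
        ⟨i.castPred hi, (Fin.castSucc_castPred i hi).symm⟩
      rcases eq_or_ne j (Fin.last n) with rfl | hj
      · have hk : k ≠ Fin.last n := fun e => hjk e.symm
        obtain ⟨k', rfl⟩ : ∃ k', k = k'.castSucc :=
          ⟨k.castPred hk, (Fin.castSucc_castPred k hk).symm⟩
        have hik' : i' ≠ k' := fun e => hik (congrArg Fin.castSucc e)
        rw [mkPair_comm (Fin.last n) k'.castSucc hjk, descend_last i' _, descend_last k' _,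
          descend_castSucc i' k' _ hik']
        exact case_j_last i' k' hik'
      · obtain ⟨j', rfl⟩ : ∃ j', j = j'.castSucc :=
          ⟨j.castPred hj, (Fin.castSucc_castPred j hj).symm⟩
        have hij' : i' ≠ j' := fun e => hij (congrArg Fin.castSucc e)
        rcases eq_or_ne k (Fin.last n) with rfl | hk
        · rw [descend_last i' _, descend_last j' _, descend_castSucc i' j' _ hij']
          exact case_k_last i' j' hij'
        · obtain ⟨k', rfl⟩ : ∃ k', k = k'.castSucc :=
            ⟨k.castPred hk, (Fin.castSucc_castPred k hk).symm⟩
          have hik' : i' ≠ k' := fun e => hik (congrArg Fin.castSucc e)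
          have hjk' : j' ≠ k' := fun e => hjk (congrArg Fin.castSucc e)
          rw [descend_castSucc i' j' _ hij', descend_castSucc i' k' _ hik',
            descend_castSucc j' k' _ hjk']
          exact AD_triple i' j' k' hij' hik' hjk'

/-- `ω` before quotienting. -/
def omega0 : Gn2 (n+1) →* GnD2 n := PresentedGroup.toGroup omega_rels

theorem omega0_ker : Subgroup.normalClosure (forbiddenRels n) ≤ (omega0 (n := n)).ker := by
  apply Subgroup.normalClosure_le_normal
  rintro x ⟨i, j, hij, rfl⟩
  rw [SetLike.mem_coe, MonoidHom.mem_ker, map_commutatorElement,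
    commutatorElement_eq_one_iff_mul_comm]
  have h1 : omega0 (A2 i.castSucc (Fin.last n) (Fin.castSucc_lt_last i).ne) = T i := by
    show PresentedGroup.toGroup omega_rels (PresentedGroup.of _) = _
    rw [PresentedGroup.toGroup.of, descend_last i _]
    rfl
  have h2 : omega0 (A2 j.castSucc (Fin.last n) (Fin.castSucc_lt_last j).ne) = T j := by
    show PresentedGroup.toGroup omega_rels (PresentedGroup.of _) = _
    rw [PresentedGroup.toGroup.of, descend_last j _]
    rfl
  rw [h1, h2]
  exact T_comm i j

/-- The homomorphism `ω`. -/
def omega : Gn2Quot n →* GnD2 n :=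
  QuotientGroup.lift (Subgroup.normalClosure (forbiddenRels n)) omega0 omega0_ker

end Stmt12Aux3
section Stmt12Aux4

open PresentedGroup

variable {n : ℕ} [NeZero n]

theorem kappa_AD (i j : Fin n) (h : i ≠ j) :
    kappa (AD i j h) = toQuot n (A2 i.castSucc j.castSucc ((Fin.castSucc_injective n).ne h)) := by
  show PresentedGroup.toGroup kappa_rels (PresentedGroup.of _) = _
  rw [PresentedGroup.toGroup.of]
  show toQuot n (PresentedGroup.of (pairUp (mkPair i j h))) = _
  rw [pairUp_mkPair]
  rfl

theorem kappa_T (i : Fin n) : kappa (T i) = Bq i := by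
  show PresentedGroup.toGroup kappa_rels (PresentedGroup.of _) = _
  rw [PresentedGroup.toGroup.of]
  rfl

theorem omega_toQuot (x : Gn2 (n+1)) : omega (toQuot n x) = omega0 x := rfl

theorem omega_qA (i j : Fin n) (h : i ≠ j) :
    omega (toQuot n (A2 i.castSucc j.castSucc ((Fin.castSucc_injective n).ne h))) =
      AD i j h := by
  rw [omega_toQuot]
  show PresentedGroup.toGroup omega_rels (PresentedGroup.of _) = _
  rw [PresentedGroup.toGroup.of, descend_castSucc i j _ h]
  rfl

theorem omega_B (i : Fin n) : omega (Bq i) = T i := by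
  rw [Bq, omega_toQuot]
  show PresentedGroup.toGroup omega_rels (PresentedGroup.of _) = _
  rw [PresentedGroup.toGroup.of, descend_last i _]
  rfl

theorem omega_comp_kappa : (omega (n := n)).comp kappa = MonoidHom.id (GnD2 n) := by
  refine PresentedGroup.ext fun x => ?_
  rcases x with t | i
  · obtain ⟨i, j, h, rfl⟩ := pair_exists t
    show omega (kappa (AD i j h)) = AD i j h
    rw [kappa_AD, omega_qA]
  · show omega (kappa (T i)) = T i
    rw [kappa_T, omega_B]

theorem kappa_comp_omega : (kappa (n := n)).comp omega = MonoidHom.id (Gn2Quot n) := by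
  apply QuotientGroup.monoidHom_ext
  refine PresentedGroup.ext fun s => ?_
  rcases classify s with ⟨i, j, h, rfl⟩ | ⟨i, rfl⟩
  · show kappa (omega (toQuot n (A2 i.castSucc j.castSucc ((Fin.castSucc_injective n).ne h)))) =
      toQuot n (A2 i.castSucc j.castSucc ((Fin.castSucc_injective n).ne h))
    rw [omega_qA i j h, kappa_AD]
  · show kappa (omega (Bq i)) = Bq i
    rw [omega_B, kappa_T]

end Stmt12Aux4
/-- `G_{n,D}^2` and `G_{n+1}^2 / ⟨a_{i(n+1)}a_{j(n+1)} = a_{j(n+1)}a_{i(n+1)}⟩`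
are isomorphic via the mutually inverse homomorphisms `κ` (`a_{ij} ↦ a_{ij}`,
`τ_i ↦ a_{i(n+1)}`) and `ω` (`a_{ij} ↦ a_{ij}` for `i,j ≤ n`, `a_{i(n+1)} ↦ τ_i`). -/
theorem stmt12 (n : ℕ) (hn : 2 < n) :
    ∃ (κ : GnD2 n →* Gn2Quot n) (ω : Gn2Quot n →* GnD2 n),
      (∀ (i j : Fin n) (h : i ≠ j),
        κ (AD i j h) = toQuot n (A2 i.castSucc j.castSucc ((Fin.castSucc_injective n).ne h))) ∧
      (∀ i : Fin n,
        κ (T i) = toQuot n (A2 i.castSucc (Fin.last n) (Fin.castSucc_lt_last i).ne)) ∧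
      (∀ (i j : Fin n) (h : i ≠ j),
        ω (toQuot n (A2 i.castSucc j.castSucc ((Fin.castSucc_injective n).ne h))) = AD i j h) ∧
      (∀ i : Fin n,
        ω (toQuot n (A2 i.castSucc (Fin.last n) (Fin.castSucc_lt_last i).ne)) = T i) ∧
      ω.comp κ = MonoidHom.id (GnD2 n) ∧
      κ.comp ω = MonoidHom.id (Gn2Quot n) := by

  haveI : NeZero n := ⟨by omega⟩
  exact ⟨kappa, omega, kappa_AD, kappa_T, omega_qA, omega_B, omega_comp_kappa,
    kappa_comp_omega⟩
end

section
/- The assignment q_m(a_{ijk}) = 1 if m ∈ {i,j,k}, and otherwise a_{ijk} with each index strictly greater than m decreased by 1, extends to a well-defined group homomorphism q_m : G_{n+1}^3 → G_n^3. -/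
/-- A three-element set `{x,y,z}` has cardinality 3. -/
lemma card3 {α : Type*} [DecidableEq α] {x y z : α}
    (hxy : x ≠ y) (hxz : x ≠ z) (hyz : y ≠ z) : ({x, y, z} : Finset α).card = 3 := by
  rw [Finset.card_insert_of_notMem (by simp [hxy, hxz]), Finset.card_pair hyz]

/-- Index type for the generators `a_{ijk}` of `G_n^3`: three-element subsets of `Fin n`. -/
abbrev TripIdx (n : ℕ) := {s : Finset (Fin n) // s.card = 3}

/-- The unordered triple `{i,j,k}` as an index. -/
def mkTrip {n : ℕ} (i j k : Fin n) (hij : i ≠ j) (hik : i ≠ k) (hjk : j ≠ k) : TripIdx n :=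
  ⟨{i, j, k}, card3 hij hik hjk⟩

/-- Relations of the group `G_n^3`: every generator is an involution, generators whose
index triples share at most one index commute, and the tetrahedron relation
`a_{ijk}a_{ijl}a_{ikl}a_{jkl} = a_{jkl}a_{ikl}a_{ijl}a_{ijk}` holds. -/
def gn3Rels (n : ℕ) : Set (FreeGroup (TripIdx n)) :=
  {r | (∃ s : TripIdx n, r = FreeGroup.of s * FreeGroup.of s) ∨
       (∃ s t : TripIdx n, (s.1 ∩ t.1).card ≤ 1 ∧
          r = FreeGroup.of s * FreeGroup.of t * (FreeGroup.of s)⁻¹ * (FreeGroup.of t)⁻¹) ∨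
       (∃ (i j k l : Fin n) (hij : i ≠ j) (hik : i ≠ k) (hil : i ≠ l)
          (hjk : j ≠ k) (hjl : j ≠ l) (hkl : k ≠ l),
          r = FreeGroup.of (mkTrip i j k hij hik hjk) * FreeGroup.of (mkTrip i j l hij hil hjl) *
              FreeGroup.of (mkTrip i k l hik hil hkl) * FreeGroup.of (mkTrip j k l hjk hjl hkl) *
              (FreeGroup.of (mkTrip j k l hjk hjl hkl) * FreeGroup.of (mkTrip i k l hik hil hkl) *
               FreeGroup.of (mkTrip i j l hij hil hjl) *
               FreeGroup.of (mkTrip i j k hij hik hjk))⁻¹)}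

/-- The group `G_n^3`. -/
abbrev Gn3 (n : ℕ) := PresentedGroup (gn3Rels n)

/-- The generator `a_{ijk}` of `G_n^3`, with `ℕ` indices (strands are numbered
`0,…,n-1`); junk value `1` if the indices are out of range or not distinct. -/
def a3 (n : ℕ) (i j k : ℕ) : Gn3 n :=
  if h : i < n ∧ j < n ∧ k < n ∧ i ≠ j ∧ i ≠ k ∧ j ≠ k then
    PresentedGroup.of (mkTrip ⟨i, h.1⟩ ⟨j, h.2.1⟩ ⟨k, h.2.2.1⟩
      (by simp [Fin.ext_iff, h.2.2.2.1]) (by simp [Fin.ext_iff, h.2.2.2.2.1])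
      (by simp [Fin.ext_iff, h.2.2.2.2.2]))
  else 1

/-- Index deletion: strand indices above `m` are shifted down by one. -/
def dl (m x : ℕ) : ℕ := if x < m then x else x - 1

/-- `qCond n m q` says that `q : G_{n+1}^3 → G_n^3` is the homomorphism `q_m`: it kills the
generators whose index triple contains `m` and reindexes the remaining ones. -/
def qCond (n m : ℕ) (q : Gn3 (n + 1) →* Gn3 n) : Prop :=
  ∀ i j k : ℕ, i < n + 1 → j < n + 1 → k < n + 1 → i ≠ j → i ≠ k → j ≠ k →
    q (a3 (n + 1) i j k) =
      if i = m ∨ j = m ∨ k = m then 1 else a3 n (dl m i) (dl m j) (dl m k)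

namespace Stmt14Aux

lemma dl_lt {n m x : ℕ} (hm : m < n + 1) (hx : x < n + 1) (hxm : x ≠ m) : dl m x < n := by
  unfold dl; split <;> omega

lemma dl_inj {m x y : ℕ} (hx : x ≠ m) (hy : y ≠ m) (h : dl m x = dl m y) : x = y := by
  unfold dl at h; split at h <;> split at h <;> omega

lemma rel_one {n : ℕ} {r : FreeGroup (TripIdx n)} (h : r ∈ gn3Rels n) :
    (QuotientGroup.mk r : Gn3 n) = 1 :=
  (QuotientGroup.eq_one_iff r).2 (Subgroup.subset_normalClosure h)

lemma of_sq {n : ℕ} (s : TripIdx n) :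
    (PresentedGroup.of (rels := gn3Rels n) s) * PresentedGroup.of s = 1 :=
  rel_one (Or.inl ⟨s, rfl⟩)

lemma of_comm {n : ℕ} (s t : TripIdx n) (h : (s.1 ∩ t.1).card ≤ 1) :
    (PresentedGroup.of (rels := gn3Rels n) s) * PresentedGroup.of t =
      PresentedGroup.of t * PresentedGroup.of s := by
  have h1 : (PresentedGroup.of (rels := gn3Rels n) s) * PresentedGroup.of t *
      (PresentedGroup.of s)⁻¹ * (PresentedGroup.of t)⁻¹ = 1 :=
    rel_one (Or.inr (Or.inl ⟨s, t, h, rfl⟩))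
  rw [mul_inv_eq_one, mul_inv_eq_iff_eq_mul] at h1
  exact h1

lemma of_tetra {n : ℕ} (i j k l : Fin n) (hij : i ≠ j) (hik : i ≠ k) (hil : i ≠ l)
    (hjk : j ≠ k) (hjl : j ≠ l) (hkl : k ≠ l) :
    PresentedGroup.of (rels := gn3Rels n) (mkTrip i j k hij hik hjk) *
      PresentedGroup.of (mkTrip i j l hij hil hjl) *
      PresentedGroup.of (mkTrip i k l hik hil hkl) *
      PresentedGroup.of (mkTrip j k l hjk hjl hkl) *
      (PresentedGroup.of (mkTrip j k l hjk hjl hkl) *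
       PresentedGroup.of (mkTrip i k l hik hil hkl) *
       PresentedGroup.of (mkTrip i j l hij hil hjl) *
       PresentedGroup.of (mkTrip i j k hij hik hjk))⁻¹ = 1 :=
  rel_one (Or.inr (Or.inr ⟨i, j, k, l, hij, hik, hil, hjk, hjl, hkl, rfl⟩))


/-- The map on generators defining `q_m`. -/
def qmap (n m : ℕ) (hm : m < n + 1) (s : TripIdx (n + 1)) : Gn3 n :=
  if h : m ∈ s.1.image Fin.val then 1 else
    PresentedGroup.of ⟨(s.1.image fun x => dl m x.val).attachFin (fun y hy => by
        simp only [Finset.mem_image] at hy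
        obtain ⟨x, hx, rfl⟩ := hy
        exact dl_lt hm x.isLt fun hc => h (Finset.mem_image.2 ⟨x, hx, hc⟩)),
      by
        rw [Finset.card_attachFin, Finset.card_image_of_injOn, s.2]
        intro x hx y hy hxy
        exact Fin.val_injective (dl_inj (fun hc => h (Finset.mem_image.2 ⟨x, hx, hc⟩))
          (fun hc => h (Finset.mem_image.2 ⟨y, hy, hc⟩)) hxy)⟩

lemma qmap_sq {n m : ℕ} (hm : m < n + 1) (s : TripIdx (n + 1)) :
    qmap n m hm s * qmap n m hm s = 1 := by
  unfold qmap; split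
  · simp
  · exact of_sq _

lemma qmap_one {n m : ℕ} (hm : m < n + 1) {s : TripIdx (n + 1)}
    (h : m ∈ s.1.image Fin.val) : qmap n m hm s = 1 := dif_pos h

lemma qmap_mk_one {n m : ℕ} (hm : m < n + 1) {i j k : Fin (n + 1)}
    {hij : i ≠ j} {hik : i ≠ k} {hjk : j ≠ k}
    (h : i.val = m ∨ j.val = m ∨ k.val = m) :
    qmap n m hm (mkTrip i j k hij hik hjk) = 1 := by
  apply qmap_one
  simp only [mkTrip, Finset.image_insert, Finset.image_singleton, Finset.mem_insert,
    Finset.mem_singleton]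
  rcases h with h | h | h <;> simp [h]

lemma dlFin_ne {n m : ℕ} (hm : m < n + 1) {i j : Fin (n + 1)} (hij : i ≠ j)
    (hi : i.val ≠ m) (hj : j.val ≠ m) :
    (⟨dl m i.val, dl_lt hm i.isLt hi⟩ : Fin n) ≠ ⟨dl m j.val, dl_lt hm j.isLt hj⟩ := by
  intro h
  exact hij (Fin.ext (dl_inj hi hj (by simpa [Fin.ext_iff] using h)))

lemma qmap_mk {n m : ℕ} (hm : m < n + 1) {i j k : Fin (n + 1)}
    (hij : i ≠ j) (hik : i ≠ k) (hjk : j ≠ k)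
    (hi : i.val ≠ m) (hj : j.val ≠ m) (hk : k.val ≠ m) :
    qmap n m hm (mkTrip i j k hij hik hjk) =
      PresentedGroup.of (mkTrip ⟨dl m i.val, dl_lt hm i.isLt hi⟩
        ⟨dl m j.val, dl_lt hm j.isLt hj⟩ ⟨dl m k.val, dl_lt hm k.isLt hk⟩
        (dlFin_ne hm hij hi hj) (dlFin_ne hm hik hi hk) (dlFin_ne hm hjk hj hk)) := by
  rw [qmap, dif_neg (by
    simp only [mkTrip, Finset.image_insert, Finset.image_singleton, Finset.mem_insert,
      Finset.mem_singleton]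
    push_neg
    exact ⟨fun h => hi h.symm, fun h => hj h.symm, fun h => hk h.symm⟩)]
  congr 1
  apply Subtype.ext
  ext x
  simp only [mkTrip, Finset.image_insert, Finset.image_singleton, Finset.mem_attachFin,
    Finset.mem_insert, Finset.mem_singleton, Fin.ext_iff]

lemma qmap_comm {n m : ℕ} (hm : m < n + 1) (s t : TripIdx (n + 1))
    (hst : (s.1 ∩ t.1).card ≤ 1) :
    qmap n m hm s * qmap n m hm t = qmap n m hm t * qmap n m hm s := by
  unfold qmap
  split_ifs with hs ht ht
  · rfl
  · simp
  · simp
  · apply of_comm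
    calc _ = (((_ : Finset (Fin n)) ∩ _).image Fin.val).card :=
          (Finset.card_image_of_injective _ Fin.val_injective).symm
      _ ≤ ((s.1 ∩ t.1).image fun x => dl m x.val).card := by
          apply Finset.card_le_card
          intro v hv
          simp only [Finset.mem_image, Finset.mem_inter, Finset.mem_attachFin] at hv ⊢
          obtain ⟨x, ⟨hx1, hx2⟩, rfl⟩ := hv
          obtain ⟨a, ha, hav⟩ := hx1
          obtain ⟨b, hb, hbv⟩ := hx2
          have ham : a.val ≠ m := fun hc => hs (Finset.mem_image.2 ⟨a, ha, hc⟩)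
          have hbm : b.val ≠ m := fun hc => ht (Finset.mem_image.2 ⟨b, hb, hc⟩)
          have : a = b := Fin.val_injective (dl_inj ham hbm (hav.trans hbv.symm))
          exact ⟨a, ⟨ha, this ▸ hb⟩, hav⟩
      _ ≤ (s.1 ∩ t.1).card := Finset.card_image_le
      _ ≤ 1 := hst

lemma rels_mapped {n m : ℕ} (hm : m < n + 1) :
    ∀ r ∈ gn3Rels (n + 1), FreeGroup.lift (qmap n m hm) r = 1 := by
  intro r hr
  rcases hr with ⟨s, rfl⟩ | ⟨s, t, hst, rfl⟩ | ⟨i, j, k, l, hij, hik, hil, hjk, hjl, hkl, rfl⟩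
  · simp only [map_mul, FreeGroup.lift_apply_of]
    exact qmap_sq hm s
  · simp only [map_mul, map_inv, FreeGroup.lift_apply_of]
    rw [qmap_comm hm s t hst]
    group
  · simp only [map_mul, map_inv, FreeGroup.lift_apply_of]
    by_cases hi : i.val = m
    · have hj : j.val ≠ m := fun hc => hij (Fin.val_injective (hi.symm ▸ hc : j.val = i.val)).symm
      have hk : k.val ≠ m := fun hc => hik (Fin.val_injective (hi.symm ▸ hc : k.val = i.val)).symm
      have hl : l.val ≠ m := fun hc => hil (Fin.val_injective (hi.symm ▸ hc : l.val = i.val)).symm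
      rw [qmap_mk_one hm (Or.inl hi), qmap_mk_one hm (Or.inl hi), qmap_mk_one hm (Or.inl hi)]
      group
    by_cases hj : j.val = m
    · rw [qmap_mk_one hm (Or.inr (Or.inl hj)), qmap_mk_one hm (Or.inr (Or.inl hj)),
        qmap_mk_one hm (Or.inl hj)]
      group
    by_cases hk : k.val = m
    · rw [qmap_mk_one hm (Or.inr (Or.inr hk)), qmap_mk_one hm (Or.inr (Or.inl hk)),
        qmap_mk_one hm (Or.inr (Or.inl hk))]
      group
    by_cases hl : l.val = m
    · rw [qmap_mk_one hm (Or.inr (Or.inr hl)), qmap_mk_one hm (Or.inr (Or.inr hl)),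
        qmap_mk_one hm (Or.inr (Or.inr hl))]
      group
    · rw [qmap_mk hm hij hik hjk hi hj hk, qmap_mk hm hij hil hjl hi hj hl,
        qmap_mk hm hik hil hkl hi hk hl, qmap_mk hm hjk hjl hkl hj hk hl]
      exact of_tetra _ _ _ _ _ _ _ _ _ _

end Stmt14Aux

/-- the assignment `q_m(a_{ijk}) = 1` if `m ∈ {i,j,k}` and otherwise `a_{ijk}`
with indices above `m` decreased by one, extends to a well-defined homomorphism
`q_m : G_{n+1}^3 → G_n^3`. -/
theorem stmt14 (n : ℕ) (m : ℕ) (hm : m < n + 1) :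
    ∃ q : Gn3 (n + 1) →* Gn3 n, qCond n m q := by
  refine ⟨PresentedGroup.toGroup (Stmt14Aux.rels_mapped hm), ?_⟩
  intro i j k hi hj hk hij hik hjk
  have hc : i < n + 1 ∧ j < n + 1 ∧ k < n + 1 ∧ i ≠ j ∧ i ≠ k ∧ j ≠ k :=
    ⟨hi, hj, hk, hij, hik, hjk⟩
  rw [a3, dif_pos hc, PresentedGroup.toGroup.of]
  by_cases hmem : i = m ∨ j = m ∨ k = m
  · rw [if_pos hmem]
    exact Stmt14Aux.qmap_mk_one hm (by simpa using hmem)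
  · rw [if_neg hmem]
    push_neg at hmem
    obtain ⟨h1, h2, h3⟩ := hmem
    rw [Stmt14Aux.qmap_mk hm _ _ _ h1 h2 h3]
    rw [a3, dif_pos ⟨Stmt14Aux.dl_lt hm hi h1, Stmt14Aux.dl_lt hm hj h2,
      Stmt14Aux.dl_lt hm hk h3,
      fun h => hij (Stmt14Aux.dl_inj h1 h2 h), fun h => hik (Stmt14Aux.dl_inj h1 h3 h),
      fun h => hjk (Stmt14Aux.dl_inj h2 h3 h)⟩]
end

section
/- Let φ_n : PB_n → G_n^3 be the homomorphism defined by φ_n(b_{ij}) = c_{i,i+1}^{-1} c_{i,i+2}^{-1} ⋯ c_{i,j-1}^{-1} c_{i,j}^2 c_{i,j-1} ⋯ c_{i,i+2} c_{i,i+1}, where c_{i,j} = (∏_{k>j,k≠i} a_{ijk})(∏_{k<j,k≠i} a_{ijk}). Then q_m ∘ φ_n = φ_{n-1} ∘ p_m for every m ∈ {1,…,n}, where p_m : PB_n → PB_{n-1} deletes the m-th strand and q_m : G_n^3 → G_{n-1}^3 kills generators containing index m and reindexes the rest. -/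
/-- The element `c_{i,j} = (∏_{k>j, k≠i} a_{ijk}) (∏_{k<j, k≠i} a_{ijk})` of `G_n^3`
(products taken in increasing order of `k`). -/
def cc (n : ℕ) (i j : ℕ) : Gn3 n :=
  ((((List.range n).filter (fun k => j < k)).map (fun k => a3 n i j k)).prod) *
  ((((List.range n).filter (fun k => k < j ∧ k ≠ i)).map (fun k => a3 n i j k)).prod)

/-! ### The braid group on `n+1` strands and its pure braid subgroup -/

/-- Relations of the Artin braid group on `n+1` strands, with generators
`σ_0, …, σ_{n-1}`: far commutation and the braid relation. -/
def braidRels (n : ℕ) : Set (FreeGroup (Fin n)) :=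
  {r | (∃ i j : Fin n, (i : ℕ) + 1 < (j : ℕ) ∧
          r = FreeGroup.of i * FreeGroup.of j * (FreeGroup.of i)⁻¹ * (FreeGroup.of j)⁻¹) ∨
       (∃ i j : Fin n, (i : ℕ) + 1 = (j : ℕ) ∧
          r = FreeGroup.of i * FreeGroup.of j * FreeGroup.of i *
              (FreeGroup.of j * FreeGroup.of i * FreeGroup.of j)⁻¹)}

/-- The braid group on `n+1` strands. -/
abbrev Braid (n : ℕ) := PresentedGroup (braidRels n)

/-- The canonical projection from the braid group on `n+1` strands to the symmetric
group, sending `σ_i` to the transposition `(i, i+1)`. -/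
def braidPerm (n : ℕ) : Braid n →* Equiv.Perm (Fin (n + 1)) :=
  PresentedGroup.toGroup (f := fun i => Equiv.swap i.castSucc i.succ) (by
    rintro r (⟨i, j, hij, rfl⟩ | ⟨i, j, hij, rfl⟩) <;>
      simp only [map_mul, map_inv, FreeGroup.lift_apply_of]
    · have hc : Commute (Equiv.swap i.castSucc i.succ) (Equiv.swap j.castSucc j.succ) := by
        apply Equiv.Perm.Disjoint.commute
        intro x
        by_cases hx : x = j.castSucc ∨ x = j.succ
        · left
          rcases hx with rfl | rfl <;>
            exact Equiv.swap_apply_of_ne_of_ne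
              (by simp only [ne_eq, Fin.ext_iff, Fin.coe_castSucc, Fin.val_succ]; omega)
              (by simp only [ne_eq, Fin.ext_iff, Fin.coe_castSucc, Fin.val_succ]; omega)
        · push_neg at hx
          right
          exact Equiv.swap_apply_of_ne_of_ne hx.1 hx.2
      rw [hc.eq]; group
    · have hb : j.castSucc = i.succ := by
        simp only [Fin.ext_iff, Fin.coe_castSucc, Fin.val_succ]; omega
      rw [hb]
      have hab : (i.castSucc : Fin (n + 1)) ≠ i.succ := by
        simp [Fin.ext_iff]
      have hac : (i.castSucc : Fin (n + 1)) ≠ j.succ := by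
        simp only [ne_eq, Fin.ext_iff, Fin.coe_castSucc, Fin.val_succ]; omega
      have hbc : (i.succ : Fin (n + 1)) ≠ j.succ := by
        simp only [ne_eq, Fin.ext_iff, Fin.val_succ]; omega
      have e1 := Equiv.swap_mul_swap_mul_swap hbc.symm hac.symm
      have e2 := Equiv.swap_mul_swap_mul_swap hab hac
      rw [Equiv.swap_comm i.succ i.castSucc, Equiv.swap_comm j.succ i.succ] at e1
      have key : Equiv.swap i.castSucc i.succ * Equiv.swap i.succ j.succ *
          Equiv.swap i.castSucc i.succ =
          Equiv.swap i.succ j.succ * Equiv.swap i.castSucc i.succ *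
          Equiv.swap i.succ j.succ := by
        rw [e1, e2, Equiv.swap_comm]
      rw [key]; group)

/-- The pure braid group on `n+1` strands: the kernel of the projection to the
symmetric group. -/
def PureBraid (n : ℕ) : Subgroup (Braid n) := (braidPerm n).ker

/-- The generator `σ_k` of the braid group on `n+1` strands (junk value `1` if `k` is out
of range). -/
def σB {n : ℕ} (k : ℕ) : Braid n := if h : k < n then PresentedGroup.of ⟨k, h⟩ else 1

/-- The band generator `A_{ij} = (σ_{j-1} ⋯ σ_{i+1}) σ_i^2 (σ_{j-1} ⋯ σ_{i+1})⁻¹`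
(`0`-indexed strands `i < j`) of the pure braid group on `n+1` strands. -/
def band (n : ℕ) (i j : ℕ) : Braid n :=
  (((List.range' (i + 1) (j - i - 1)).reverse).map (σB (n := n))).prod * σB i * σB i *
    ((((List.range' (i + 1) (j - i - 1)).reverse).map (σB (n := n))).prod)⁻¹

/-- Index deletion: strand indices above `m` are shifted down by one. -/
def dlB (m x : ℕ) : ℕ := if x < m then x else x - 1

/-- `pCond n m p` says that `p : PB_{n+2} → PB_{n+1}` (pure braid groups on `n+2` and
`n+1` strands) is the strand-deletion homomorphism `p_m` deleting the `m`-th strand: on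
band generators, `p_m(b_{ij}) = 1` if `m ∈ {i,j}` and otherwise `b_{ij}` with indices
above `m` shifted down by one. -/
def pCond (n m : ℕ) (p : PureBraid (n + 1) →* PureBraid n) : Prop :=
  ∀ i j : ℕ, i < j → j < n + 2 → ∀ x : PureBraid (n + 1),
    (x : Braid (n + 1)) = band (n + 1) i j →
      ((p x : PureBraid n) : Braid n) =
        if i = m ∨ j = m then 1 else band n (dlB m i) (dlB m j)

/-- The element `c_{i,i+1}^{-1} ⋯ c_{i,j-1}^{-1} c_{i,j}^2 c_{i,j-1} ⋯ c_{i,i+1}` of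
`G_n^3`, the image of the band generator `b_{ij}` under `φ`. -/
def phiW (n : ℕ) (i j : ℕ) : Gn3 n :=
  ((((List.range' (i + 1) (j - i - 1)).reverse).map (cc n i)).prod)⁻¹ * (cc n i j) ^ 2 *
    (((List.range' (i + 1) (j - i - 1)).reverse).map (cc n i)).prod

/-- `phiCond n φ` says that `φ : PB_{n+1} → G_{n+1}^3` (pure braids on `n+1` strands) is
the homomorphism `φ_{n+1}`: it sends each band generator `b_{ij}` to
`c_{i,i+1}^{-1} ⋯ c_{i,j-1}^{-1} c_{i,j}^2 c_{i,j-1} ⋯ c_{i,i+1}`. -/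
def phiCond (n : ℕ) (φ : PureBraid n →* Gn3 (n + 1)) : Prop :=
  ∀ i j : ℕ, i < j → j < n + 1 → ∀ x : PureBraid n,
    (x : Braid n) = band n i j → φ x = phiW (n + 1) i j

/-! ### Braid group word lemmas -/

lemma presented_rel {α : Type*} {rels : Set (FreeGroup α)} {r : FreeGroup α} (h : r ∈ rels) :
    PresentedGroup.mk rels r = 1 :=
  (QuotientGroup.eq_one_iff r).mpr (Subgroup.subset_normalClosure h)

lemma braid_comm {n : ℕ} {i j : Fin n} (h : (i : ℕ) + 1 < j) :
    Commute (PresentedGroup.of (rels := braidRels n) i) (PresentedGroup.of j) := by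
  have hrel := presented_rel (rels := braidRels n) (Or.inl ⟨i, j, h, rfl⟩)
  simp only [map_mul, map_inv] at hrel
  rw [mul_inv_eq_one, mul_inv_eq_iff_eq_mul] at hrel
  exact hrel

lemma braid_braid {n : ℕ} {i j : Fin n} (h : (i : ℕ) + 1 = j) :
    PresentedGroup.of (rels := braidRels n) i * .of j * .of i = .of j * .of i * .of j := by
  have hrel := presented_rel (rels := braidRels n) (Or.inr ⟨i, j, h, rfl⟩)
  simp only [map_mul, map_inv] at hrel
  rw [mul_inv_eq_one] at hrel
  exact hrel

lemma σB_comm {n : ℕ} {k l : ℕ} (h : k + 2 ≤ l) : Commute (σB (n := n) k) (σB l) := by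
  unfold σB
  split_ifs with hk hl hl
  · exact braid_comm (by show k + 1 < l; omega)
  · exact Commute.one_right _
  · exact Commute.one_left _
  · exact Commute.one_right _

lemma σB_comm' {n : ℕ} {k l : ℕ} (h : k + 2 ≤ l ∨ l + 2 ≤ k) :
    Commute (σB (n := n) k) (σB l) := by
  rcases h with h | h
  · exact σB_comm h
  · exact (σB_comm h).symm

lemma σB_braid {n : ℕ} {k : ℕ} (h : k + 1 < n) :
    σB (n := n) k * σB (k + 1) * σB k = σB (k + 1) * σB k * σB (k + 1) := by
  unfold σB
  rw [dif_pos (by omega : k < n), dif_pos h]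
  exact braid_braid rfl
/-! ### Runs of generators -/

/-- The descending run `σ_{j-1} σ_{j-2} ⋯ σ_{i+1}` appearing in the band generator. -/
def dRun (n i j : ℕ) : Braid n := (((List.range' (i+1) (j-i-1)).reverse).map σB).prod

lemma band_def (n i j : ℕ) : band n i j = dRun n i j * σB i * σB i * (dRun n i j)⁻¹ := rfl

lemma dRun_trivial {n i j : ℕ} (h : j ≤ i + 1) : dRun n i j = 1 := by
  have : j - i - 1 = 0 := by omega
  simp [dRun, this]

/-- Commutation of a generator with a run whose letters are all far from `k`. -/
lemma σB_dRun_comm {n k i j : ℕ} (h : k + 2 ≤ i + 1 ∨ j ≤ k - 1) :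
    Commute (σB (n := n) k) (dRun n i j) := by
  apply Commute.list_prod_right
  intro x hx
  simp only [List.mem_map, List.mem_reverse, List.mem_range'_1] at hx
  obtain ⟨t, ⟨ht1, ht2⟩, rfl⟩ := hx
  exact σB_comm' (by omega)

lemma dRun_split_high {n i j : ℕ} (h : i < j) : dRun n i (j+1) = σB j * dRun n i j := by
  have h1 : (j + 1) - i - 1 = (j - i - 1) + 1 := by omega
  rw [dRun, dRun, h1, List.range'_concat,
    show i + 1 + 1 * (j - i - 1) = j from by omega]
  simp [List.reverse_append]

lemma dRun_split_low {n i j : ℕ} (h : i + 1 < j) : dRun n i j = dRun n (i+1) j * σB (i+1) := by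
  have h1 : j - i - 1 = (j - (i+1) - 1) + 1 := by omega
  rw [dRun, dRun, h1, List.range'_succ, List.reverse_cons]
  simp

lemma dRun_split_mid {n i k j : ℕ} (hik : i + 1 ≤ k) (hkj : k + 2 ≤ j) :
    dRun n i j = dRun n (k+1) j * σB (k+1) * σB k * dRun n i k := by
  have h1 : j - i - 1 = (k - i + 1) + (j - k - 2) := by omega
  rw [dRun, h1, ← List.range'_append,
    show i + 1 + 1 * (k - i + 1) = k + 2 from by omega,
    show k - i + 1 = (k - i - 1) + 2 from by omega, ← List.range'_append,
    show i + 1 + 1 * (k - i - 1) = k from by omega,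
    show List.range' k 2 = [k, k+1] from by simp [List.range'_succ],
    dRun, dRun, show j - (k+1) - 1 = j - k - 2 from by omega,
    show k - i - 1 = k - i - 1 from rfl]
  simp [List.reverse_append, mul_assoc]
lemma dRun_mid_comm {n i k j : ℕ} (hik : i + 1 ≤ k) (hkj : k + 2 ≤ j) (hk : k + 1 < n) :
    σB (n := n) k * dRun n i j = dRun n i j * σB (k+1) := by
  rw [dRun_split_mid hik hkj]
  have c1 := (σB_dRun_comm (n := n) (k := k) (i := k+1) (j := j) (Or.inl (by omega))).eq
  have c2 := (σB_dRun_comm (n := n) (k := k+1) (i := i) (j := k) (Or.inr (by omega))).eq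
  calc σB k * (dRun n (k+1) j * σB (k+1) * σB k * dRun n i k)
      = σB k * dRun n (k+1) j * (σB (k+1) * σB k * dRun n i k) := by
        simp only [mul_assoc]
    _ = dRun n (k+1) j * (σB k * σB (k+1) * σB k) * dRun n i k := by
        rw [c1]; simp only [mul_assoc]
    _ = dRun n (k+1) j * (σB (k+1) * σB k * σB (k+1)) * dRun n i k := by rw [σB_braid hk]
    _ = dRun n (k+1) j * σB (k+1) * σB k * (σB (k+1) * dRun n i k) := by
        simp only [mul_assoc]
    _ = dRun n (k+1) j * σB (k+1) * σB k * dRun n i k * σB (k+1) := by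
        rw [c2]; simp only [mul_assoc]

lemma conj_sq {G : Type*} [Group G] {X a b : G} (h : X * a * X⁻¹ = b) :
    X * (a * a) * X⁻¹ = b * b := by rw [← h]; group

lemma key_conj {n k : ℕ} (h : k + 1 < n) :
    (σB (n := n) k * σB (k+1)) * σB k * (σB k * σB (k+1))⁻¹ = σB (k+1) := by
  rw [σB_braid h]; group

lemma key_conj_sq {n k : ℕ} (h : k + 1 < n) :
    (σB (n := n) k * σB (k+1)) * (σB k * σB k) * (σB k * σB (k+1))⁻¹ = σB (k+1) * σB (k+1) :=
  conj_sq (key_conj h)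

lemma key_conj2 {n k : ℕ} (h : k + 1 < n) :
    (σB (n := n) k)⁻¹ * (σB (k+1) * σB (k+1)) * σB k
      = σB (k+1) * (σB k * σB k) * (σB (k+1))⁻¹ := by
  rw [← key_conj_sq h]; group

/-! ### The subgroup generated by the bands -/

def bandSet (n : ℕ) : Set (Braid n) := {g | ∃ i j : ℕ, i < j ∧ j ≤ n ∧ g = band n i j}

def bandGrp (n : ℕ) : Subgroup (Braid n) := Subgroup.closure (bandSet n)

lemma band_mem {n i j : ℕ} (hij : i < j) (hj : j ≤ n) : band n i j ∈ bandGrp n :=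
  Subgroup.subset_closure ⟨i, j, hij, hj, rfl⟩

lemma band_adj (n k : ℕ) : band n k (k+1) = σB k * σB k := by
  rw [band_def, dRun_trivial (le_refl _)]; group

lemma σB_out {n k : ℕ} (h : n ≤ k) : σB (n := n) k = 1 := by
  rw [σB, dif_neg (by omega)]
lemma band_conj_far {n k i j : ℕ} (hij : i < j) (h : k + 2 ≤ i ∨ j + 1 ≤ k) :
    Commute (σB (n := n) k) (band n i j) := by
  have cD : Commute (σB (n := n) k) (dRun n i j) := σB_dRun_comm (by omega)
  have ci : Commute (σB (n := n) k) (σB i) := σB_comm' (by omega)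
  rw [band_def]
  exact ((cD.mul_right ci).mul_right ci).mul_right cD.inv_right

lemma band_conj_mid {n k i j : ℕ} (hik : i + 1 ≤ k) (hkj : k + 2 ≤ j) (hk : k + 1 < n) :
    Commute (σB (n := n) k) (band n i j) := by
  have hD := dRun_mid_comm hik hkj hk
  have ci := (σB_comm' (n := n) (k := k+1) (l := i) (by omega)).eq
  have hD' : σB (n := n) (k+1) * (dRun n i j)⁻¹ = (dRun n i j)⁻¹ * σB k := by
    apply mul_left_cancel (a := dRun n i j)
    rw [← mul_assoc, ← hD]; group
  have cX : σB (n := n) (k+1) * (σB i * σB i) = (σB i * σB i) * σB (k+1) := by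
    rw [← mul_assoc, ci, mul_assoc, ci, mul_assoc]
  show σB k * band n i j = band n i j * σB k
  rw [band_def]
  calc σB k * (dRun n i j * σB i * σB i * (dRun n i j)⁻¹)
      = (σB k * dRun n i j) * (σB i * σB i * (dRun n i j)⁻¹) := by simp only [mul_assoc]
    _ = dRun n i j * ((σB (k+1) * (σB i * σB i)) * (dRun n i j)⁻¹) := by
        rw [hD]; simp only [mul_assoc]
    _ = dRun n i j * ((σB i * σB i) * (σB (k+1) * (dRun n i j)⁻¹)) := by
        rw [cX]; simp only [mul_assoc]
    _ = dRun n i j * ((σB i * σB i) * ((dRun n i j)⁻¹ * σB k)) := by rw [hD']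
    _ = dRun n i j * σB i * σB i * (dRun n i j)⁻¹ * σB k := by simp only [mul_assoc]

lemma band_conj_top {n k i j : ℕ} (hij : i < j) (hk : k = j) :
    σB (n := n) k * band n i j * (σB k)⁻¹ = band n i (j+1) := by
  subst hk
  rw [band_def, band_def, dRun_split_high hij]
  group

lemma band_conj_subtop {n i j : ℕ} (hij : i + 1 < j) :
    σB (n := n) (j-1) * band n i j * (σB (j-1))⁻¹
      = band n (j-1) j * band n i (j-1) * (band n (j-1) j)⁻¹ := by
  have h1 : dRun n i j = σB (j-1) * dRun n i (j-1) := by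
    have := dRun_split_high (n := n) (i := i) (j := j - 1) (by omega)
    rwa [show j - 1 + 1 = j from by omega] at this
  have h2 : band n (j-1) j = σB (j-1) * σB (j-1) := by
    have := band_adj n (j-1)
    rwa [show j - 1 + 1 = j from by omega] at this
  rw [h2, band_def n i j, band_def n i (j-1), h1]
  group

lemma band_conj_low {n i j : ℕ} (hij : i + 1 < j) (hn : i + 1 < n) :
    σB (n := n) i * band n i j * (σB i)⁻¹ = band n (i+1) j := by
  have h1 : dRun n i j = dRun n (i+1) j * σB (i+1) := dRun_split_low hij
  have cD := (σB_dRun_comm (n := n) (k := i) (i := i+1) (j := j) (Or.inl (by omega))).eq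
  have hkey := key_conj_sq (n := n) (k := i) hn
  rw [band_def n i j, band_def n (i+1) j, h1]
  calc σB i * (dRun n (i+1) j * σB (i+1) * σB i * σB i * (dRun n (i+1) j * σB (i+1))⁻¹) *
        (σB i)⁻¹
      = (σB i * dRun n (i+1) j) * (σB (i+1) * (σB i * σB i) * (σB (i+1))⁻¹) *
          (σB i * dRun n (i+1) j)⁻¹ := by group
    _ = (dRun n (i+1) j * σB i) * (σB (i+1) * (σB i * σB i) * (σB (i+1))⁻¹) *
          (dRun n (i+1) j * σB i)⁻¹ := by rw [cD]
    _ = dRun n (i+1) j * ((σB i * σB (i+1)) * (σB i * σB i) * (σB i * σB (i+1))⁻¹) *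
          (dRun n (i+1) j)⁻¹ := by group
    _ = dRun n (i+1) j * (σB (i+1) * σB (i+1)) * (dRun n (i+1) j)⁻¹ := by rw [hkey]
    _ = dRun n (i+1) j * σB (i+1) * σB (i+1) * (dRun n (i+1) j)⁻¹ := by group

lemma band_conj_sub {n i j : ℕ} (hij : i < j) (hi : 1 ≤ i) (hn : i < n) :
    (σB (n := n) (i-1))⁻¹ * band n i j * σB (i-1) = band n (i-1) j := by
  have cD := σB_dRun_comm (n := n) (k := i-1) (i := i) (j := j) (Or.inl (by omega))
  have cDi : (σB (n := n) (i-1))⁻¹ * dRun n i j = dRun n i j * (σB (i-1))⁻¹ :=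
    cD.inv_left.eq
  have cDr : σB (n := n) (i-1) * (dRun n i j)⁻¹ = (dRun n i j)⁻¹ * σB (i-1) :=
    cD.inv_right.eq
  have hkey : (σB (n := n) (i-1))⁻¹ * (σB i * σB i) * σB (i-1)
      = σB i * (σB (i-1) * σB (i-1)) * (σB i)⁻¹ := by
    have := key_conj2 (n := n) (k := i-1) (by omega)
    rwa [show i - 1 + 1 = i from by omega] at this
  have h1 : dRun n (i-1) j = dRun n i j * σB i := by
    have := dRun_split_low (n := n) (i := i-1) (j := j) (by omega)
    rwa [show i - 1 + 1 = i from by omega] at this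
  rw [band_def n i j, band_def n (i-1) j, h1]
  calc (σB (i-1))⁻¹ * (dRun n i j * σB i * σB i * (dRun n i j)⁻¹) * σB (i-1)
      = ((σB (i-1))⁻¹ * dRun n i j) * (σB i * σB i) * ((dRun n i j)⁻¹ * σB (i-1)) := by group
    _ = (dRun n i j * (σB (i-1))⁻¹) * (σB i * σB i) * (σB (i-1) * (dRun n i j)⁻¹) := by
        rw [cDi, ← cDr]
    _ = dRun n i j * ((σB (i-1))⁻¹ * (σB i * σB i) * σB (i-1)) * (dRun n i j)⁻¹ := by group
    _ = dRun n i j * (σB i * (σB (i-1) * σB (i-1)) * (σB i)⁻¹) * (dRun n i j)⁻¹ := by rw [hkey]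
    _ = dRun n i j * σB i * σB (i-1) * σB (i-1) * (dRun n i j * σB i)⁻¹ := by group
lemma σB_band_mem {n k i j : ℕ} (hij : i < j) (hj : j ≤ n) :
    σB (n := n) k * band n i j * (σB k)⁻¹ ∈ bandGrp n := by
  by_cases hk : k < n
  swap
  · rw [σB_out (by omega)]; simpa using band_mem hij hj
  rcases Nat.lt_trichotomy k i with hlt | heq | hgt
  · -- k < i : either far or k = i - 1
    by_cases hfar : k + 2 ≤ i
    · rw [(band_conj_far hij (Or.inl hfar)).eq]; simpa using band_mem hij hj
    · -- k = i - 1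
      have hk1 : k = i - 1 := by omega
      have hsub := band_conj_sub (n := n) hij (by omega) (by omega)
      have hexp : σB (n := n) (i-1) * band n i j * (σB (i-1))⁻¹
          = (σB (i-1) * σB (i-1)) * band n (i-1) j * (σB (i-1) * σB (i-1))⁻¹ := by
        rw [← hsub]; group
      have h1 : band n (i-1) i ∈ bandGrp n := band_mem (by omega) (by omega)
      have h2 : band n (i-1) j ∈ bandGrp n := band_mem (by omega) hj
      have e : i - 1 + 1 = i := by omega
      rw [hk1, hexp, ← band_adj, e]
      exact mul_mem (mul_mem h1 h2) (inv_mem h1)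
  · -- k = i
    subst heq
    by_cases hj2 : k + 1 < j
    · rw [band_conj_low hj2 (by omega)]
      exact band_mem (by omega) hj
    · have hji : j = k + 1 := by omega
      subst hji
      rw [band_adj]
      have e2 : σB (n := n) k * (σB k * σB k) * (σB k)⁻¹ = σB k * σB k := by group
      rw [e2, ← band_adj]
      exact band_mem (by omega) hj
  · -- i < k
    rcases Nat.lt_trichotomy k (j-1) with h1 | h2 | h3
    · -- i + 1 ≤ k ≤ j - 2 : commutes
      rw [(band_conj_mid (by omega) (by omega) (by omega)).eq]
      simpa using band_mem hij hj
    · -- k = j - 1 > i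
      have hij2 : i + 1 < j := by omega
      rw [h2, band_conj_subtop hij2]
      have hb1 : band n (j-1) j ∈ bandGrp n := band_mem (by omega) hj
      have hb2 : band n i (j-1) ∈ bandGrp n := band_mem (by omega) (by omega)
      exact mul_mem (mul_mem hb1 hb2) (inv_mem hb1)
    · rcases Nat.lt_trichotomy k j with h4 | rfl | h5
      · omega
      · rw [band_conj_top hij rfl]
        exact band_mem (by omega) (by omega)
      · rw [(band_conj_far hij (Or.inr (by omega))).eq]
        simpa using band_mem hij hj

lemma σB_band_mem' {n k i j : ℕ} (hij : i < j) (hj : j ≤ n) :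
    (σB (n := n) k)⁻¹ * band n i j * σB k ∈ bandGrp n := by
  by_cases hk : k < n
  swap
  · rw [σB_out (by omega)]; simpa using band_mem hij hj
  have hexp : (σB (n := n) k)⁻¹ * band n i j * σB k
      = (σB k * σB k)⁻¹ * (σB k * band n i j * (σB k)⁻¹) * (σB k * σB k) := by group
  rw [hexp, ← band_adj]
  exact mul_mem (mul_mem (inv_mem (band_mem (by omega) (by omega))) (σB_band_mem hij hj))
    (band_mem (by omega) (by omega))

/-- The subgroup of elements that normalize `bandGrp` from both sides. -/
def bandNormalizer (n : ℕ) : Subgroup (Braid n) where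
  carrier := {g | ∀ x ∈ bandGrp n, g * x * g⁻¹ ∈ bandGrp n ∧ g⁻¹ * x * g ∈ bandGrp n}
  one_mem' := fun x hx => ⟨by simpa using hx, by simpa using hx⟩
  mul_mem' := by
    intro a b ha hb x hx
    constructor
    · have : a * b * x * (a * b)⁻¹ = a * (b * x * b⁻¹) * a⁻¹ := by group
      rw [this]; exact (ha _ (hb x hx).1).1
    · have : (a * b)⁻¹ * x * (a * b) = b⁻¹ * (a⁻¹ * x * a) * b := by group
      rw [this]; exact (hb _ (ha x hx).2).2
  inv_mem' := by
    intro a ha x hx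
    constructor
    · have : a⁻¹ * x * a⁻¹⁻¹ = a⁻¹ * x * a := by group
      rw [this]; exact (ha x hx).2
    · have : a⁻¹⁻¹ * x * a⁻¹ = a * x * a⁻¹ := by group
      rw [this]; exact (ha x hx).1

lemma conj_closure_mem {n : ℕ} (g : Braid n) (hg : ∀ s ∈ bandSet n, g * s * g⁻¹ ∈ bandGrp n) :
    ∀ x ∈ bandGrp n, g * x * g⁻¹ ∈ bandGrp n := by
  intro x hx
  have hle : (bandGrp n).map (MulAut.conj g).toMonoidHom ≤ bandGrp n := by
    rw [bandGrp, MonoidHom.map_closure]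
    refine (Subgroup.closure_le _).mpr ?_
    rintro y ⟨s, hs, rfl⟩
    exact hg s hs
  exact hle ⟨x, hx, rfl⟩

lemma bandGrp_normal (n : ℕ) : (bandGrp n).Normal := by
  have hgen : ∀ g : Braid n, g ∈ bandNormalizer n := by
    intro g
    apply PresentedGroup.generated_by
    intro k x hx
    constructor
    · refine conj_closure_mem _ (fun s hs => ?_) x hx
      obtain ⟨i, j, hij, hj, rfl⟩ := hs
      have : PresentedGroup.of (rels := braidRels n) k = σB (k : ℕ) := by
        rw [σB, dif_pos k.isLt]
      rw [this]
      exact σB_band_mem hij hj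
    · apply conj_closure_mem ((PresentedGroup.of k)⁻¹) (fun s hs => ?_) x hx
      obtain ⟨i, j, hij, hj, rfl⟩ := hs
      have : PresentedGroup.of (rels := braidRels n) k = σB (k : ℕ) := by
        rw [σB, dif_pos k.isLt]
      rw [this, inv_inv]
      exact σB_band_mem' hij hj
  exact ⟨fun x hx g => by
    have := (hgen g x hx).1
    simpa [mul_assoc] using this⟩
/-! ### Ascending runs and the canonical form -/

def ascRun (n j t : ℕ) : Braid n := ((List.range' j (t - j)).map σB).prod

lemma ascRun_trivial {n j t : ℕ} (h : t ≤ j) : ascRun n j t = 1 := by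
  rw [ascRun, show t - j = 0 from by omega]; simp

lemma ascRun_cons {n j t : ℕ} (h : j < t) : ascRun n j t = σB j * ascRun n (j+1) t := by
  rw [ascRun, ascRun, show t - j = (t - (j+1)) + 1 from by omega, List.range'_succ]
  simp

lemma σB_ascRun_comm {n k j t : ℕ} (h : k + 2 ≤ j ∨ t ≤ k - 1) :
    Commute (σB (n := n) k) (ascRun n j t) := by
  apply Commute.list_prod_right
  intro x hx
  simp only [List.mem_map, List.mem_range'_1] at hx
  obtain ⟨s, ⟨hs1, hs2⟩, rfl⟩ := hx
  exact σB_comm' (by omega)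

lemma ascRun_split {n j k t : ℕ} (hjk : j + 1 ≤ k) (hkt : k + 1 ≤ t) :
    ascRun n j t = ascRun n j (k-1) * σB (k-1) * σB k * ascRun n (k+1) t := by
  rw [ascRun, show t - j = (k - 1 - j) + (t - k + 1) from by omega, ← List.range'_append,
    show j + 1 * (k - 1 - j) = k - 1 from by omega,
    show t - k + 1 = 2 + (t - (k+1)) from by omega, ← List.range'_append,
    show k - 1 + 1 * 2 = k + 1 from by omega,
    show List.range' (k-1) 2 = [k-1, k] from by simp [List.range'_succ, show k-1+1 = k from by omega],
    ascRun, ascRun, show k - 1 - j = k - 1 - j from rfl]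
  simp [mul_assoc]

lemma ascRun_mid {n k j t : ℕ} (hjk : j + 1 ≤ k) (hkt : k + 1 ≤ t) (hk : k < n) :
    σB (n := n) k * ascRun n j t = ascRun n j t * σB (k-1) := by
  rw [ascRun_split hjk hkt]
  have c1 := (σB_ascRun_comm (n := n) (k := k) (j := j) (t := k-1) (Or.inr (by omega))).eq
  have c2 := (σB_ascRun_comm (n := n) (k := k-1) (j := k+1) (t := t) (Or.inl (by omega))).eq
  have hb := σB_braid (n := n) (k := k-1) (by omega)
  rw [show k - 1 + 1 = k from by omega] at hb
  calc σB k * (ascRun n j (k-1) * σB (k-1) * σB k * ascRun n (k+1) t)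
      = (σB k * ascRun n j (k-1)) * (σB (k-1) * σB k * ascRun n (k+1) t) := by
        simp only [mul_assoc]
    _ = ascRun n j (k-1) * ((σB k * σB (k-1) * σB k) * ascRun n (k+1) t) := by
        rw [c1]; simp only [mul_assoc]
    _ = ascRun n j (k-1) * ((σB (k-1) * σB k * σB (k-1)) * ascRun n (k+1) t) := by
        have : σB (n := n) k * σB (k-1) * σB k = σB (k-1) * σB k * σB (k-1) := by
          rw [← hb]
        rw [this]
    _ = ascRun n j (k-1) * (σB (k-1) * σB k * (σB (k-1) * ascRun n (k+1) t)) := by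
        simp only [mul_assoc]
    _ = ascRun n j (k-1) * σB (k-1) * σB k * ascRun n (k+1) t * σB (k-1) := by
        rw [c2]; simp only [mul_assoc]

/-! ### Permutation images -/

/-- The image of `σB k` in the symmetric group. -/
def swP (n k : ℕ) : Equiv.Perm (Fin (n+1)) := braidPerm n (σB k)

lemma swP_def {n k : ℕ} (h : k < n) :
    swP n k = Equiv.swap ⟨k, by omega⟩ ⟨k+1, by omega⟩ := by
  rw [swP, σB, dif_pos h]
  show braidPerm n (PresentedGroup.of _) = _
  rw [braidPerm, PresentedGroup.toGroup.of]
  rfl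

lemma swP_out {n k : ℕ} (h : n ≤ k) : swP n k = 1 := by
  rw [swP, σB_out h, map_one]

lemma swP_invol {n k : ℕ} : swP n k * swP n k = 1 := by
  by_cases h : k < n
  · rw [swP_def h, Equiv.swap_mul_self]
  · rw [swP_out (by omega)]; simp

lemma swP_apply_ne {n k : ℕ} {x : Fin (n+1)} (h1 : (x : ℕ) ≠ k) (h2 : (x : ℕ) ≠ k + 1) :
    swP n k x = x := by
  by_cases h : k < n
  · rw [swP_def h]
    exact Equiv.swap_apply_of_ne_of_ne (by simp [Fin.ext_iff, h1]) (by simp [Fin.ext_iff, h2])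
  · rw [swP_out (by omega)]; rfl

lemma swP_apply_left {n k : ℕ} (h : k < n) : swP n k ⟨k, by omega⟩ = ⟨k+1, by omega⟩ := by
  rw [swP_def h]; exact Equiv.swap_apply_left _ _

lemma swP_apply_right {n k : ℕ} (h : k < n) : swP n k ⟨k+1, by omega⟩ = ⟨k, by omega⟩ := by
  rw [swP_def h]; exact Equiv.swap_apply_right _ _

/-- The permutation image of an ascending run. -/
def uRun (n j t : ℕ) : Equiv.Perm (Fin (n+1)) := braidPerm n (ascRun n j t)

lemma uRun_trivial {n j t : ℕ} (h : t ≤ j) : uRun n j t = 1 := by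
  rw [uRun, ascRun_trivial h, map_one]

lemma uRun_cons {n j t : ℕ} (h : j < t) : uRun n j t = swP n j * uRun n (j+1) t := by
  rw [uRun, ascRun_cons h, map_mul]; rfl

lemma uRun_fix' {n j t : ℕ} (x : Fin (n+1)) (hx : t + 1 ≤ (x : ℕ)) (hj : j ≤ t) :
    uRun n j t x = x := by
  induction' hd : t - j with d ihd generalizing j
  · rw [uRun_trivial (by omega)]; rfl
  · rw [uRun_cons (by omega), Equiv.Perm.mul_apply, ihd (j := j+1) (by omega) (by omega)]
    exact swP_apply_ne (by omega) (by omega)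

lemma uRun_top {n j t : ℕ} (hj : j ≤ t) (ht : t ≤ n) :
    uRun n j t ⟨t, by omega⟩ = ⟨j, by omega⟩ := by
  induction' hd : t - j with d ihd generalizing j
  · rw [uRun_trivial (by omega)]
    exact Fin.ext (by simp; omega)
  · rw [uRun_cons (by omega), Equiv.Perm.mul_apply, ihd (j := j+1) (by omega) (by omega)]
    exact swP_apply_right (by omega)
/-! ### The canonical form -/

def jval {n : ℕ} (π : Equiv.Perm (Fin (n+1))) (t : ℕ) : ℕ :=
  if h : t < n + 1 then (π ⟨t, h⟩ : Fin (n+1)).val else 0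

lemma jval_eq {n : ℕ} (π : Equiv.Perm (Fin (n+1))) {t : ℕ} (h : t < n + 1) :
    jval π t = (π ⟨t, h⟩ : Fin (n+1)).val := by
  rw [jval, dif_pos h]

def canonAux (n : ℕ) : ℕ → Equiv.Perm (Fin (n+1)) → Braid n
  | 0, _ => 1
  | (t+1), π => ascRun n (jval π t) t * canonAux n t ((uRun n (jval π t) t)⁻¹ * π)

lemma canonAux_succ {n t : ℕ} (π : Equiv.Perm (Fin (n+1))) :
    canonAux n (t+1) π = ascRun n (jval π t) t *
      canonAux n t ((uRun n (jval π t) t)⁻¹ * π) := rfl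

lemma canonAux_one (n : ℕ) : ∀ t, t ≤ n + 1 → canonAux n t 1 = 1 := by
  intro t
  induction t with
  | zero => intro _; rfl
  | succ t ih =>
    intro ht
    have hj : jval (1 : Equiv.Perm (Fin (n+1))) t = t := by
      rw [jval_eq _ (by omega)]; rfl
    rw [canonAux_succ, hj, ascRun_trivial (le_refl t), uRun_trivial (le_refl t), one_mul]
    simp only [inv_one, one_mul]
    exact ih (by omega)

/-- `π` fixes all indices `≥ t`. -/
def FixAbove {n : ℕ} (t : ℕ) (π : Equiv.Perm (Fin (n+1))) : Prop :=
  ∀ x : Fin (n+1), t ≤ (x : ℕ) → π x = x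

lemma jval_le {n t : ℕ} (π : Equiv.Perm (Fin (n+1))) (ht : t ≤ n)
    (hfix : FixAbove (t+1) π) : jval π t ≤ t := by
  by_contra hcon
  push_neg at hcon
  have h1 : jval π t = (π ⟨t, by omega⟩ : Fin (n+1)).val := jval_eq π (by omega)
  have h2 : π (π ⟨t, by omega⟩) = π ⟨t, by omega⟩ := hfix _ (by omega)
  have h3 := π.injective h2
  have h4 : (π ⟨t, by omega⟩ : Fin (n+1)).val = t := by rw [h3]
  omega

lemma fix_tilde {n t : ℕ} {π : Equiv.Perm (Fin (n+1))} (ht : t ≤ n)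
    (hfix : FixAbove (t+1) π) :
    FixAbove t ((uRun n (jval π t) t)⁻¹ * π) := by
  intro x hx
  have hjt : jval π t ≤ t := jval_le π ht hfix
  rcases Nat.eq_or_lt_of_le hx with heq | hlt
  · have hxt : x = ⟨t, by omega⟩ := Fin.ext (show (x : ℕ) = t by omega)
    have hπt : π ⟨t, by omega⟩ = ⟨jval π t, by omega⟩ :=
      Fin.ext (jval_eq π (by omega)).symm
    have hU : uRun n (jval π t) t ⟨t, by omega⟩ = ⟨jval π t, by omega⟩ := uRun_top hjt ht
    rw [hxt, Equiv.Perm.mul_apply, hπt, ← hU, Equiv.Perm.inv_def, Equiv.symm_apply_apply]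
  · have h1 : π x = x := hfix x (by omega)
    have h2 : uRun n (jval π t) t x = x := uRun_fix' x (by omega) hjt
    rw [Equiv.Perm.mul_apply, h1, ← h2, Equiv.Perm.inv_def, Equiv.symm_apply_apply, h2]

lemma swP_inv {n k : ℕ} : (swP n k)⁻¹ = swP n k :=
  inv_eq_of_mul_eq_one_left swP_invol

lemma key_step {n : ℕ} : ∀ t, t ≤ n + 1 → ∀ π : Equiv.Perm (Fin (n+1)), FixAbove t π →
    ∀ k, k + 2 ≤ t →
    ∃ b ∈ bandGrp n, σB k * canonAux n t π = b * canonAux n t (swP n k * π) := by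
  intro t
  induction t with
  | zero => exact fun _ _ _ k hk => absurd hk (by omega)
  | succ t ih =>
    intro ht π hfix k hk
    have htn : t ≤ n := by omega
    obtain ⟨j, hjdef⟩ : ∃ j, jval π t = j := ⟨_, rfl⟩
    have hjt : j ≤ t := hjdef ▸ jval_le π htn hfix
    have hπt : π ⟨t, by omega⟩ = ⟨j, by omega⟩ := by
      apply Fin.ext
      rw [show ((⟨j, by omega⟩ : Fin (n+1)) : ℕ) = j from rfl, ← hjdef, jval_eq π (by omega)]
    have hfix' : FixAbove t ((uRun n j t)⁻¹ * π) := hjdef ▸ fix_tilde htn hfix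
    rcases show k + 2 ≤ j ∨ k + 1 = j ∨ k = j ∨ (j + 1 ≤ k ∧ k ≤ t - 1) from by omega with
      hc | hc | hc | hc
    · -- far case
      have hcomm : Commute (σB (n := n) k) (ascRun n j t) := σB_ascRun_comm (Or.inl hc)
      have hcommP : Commute (swP n k) (uRun n j t) := hcomm.map (braidPerm n)
      obtain ⟨b, hb, heq⟩ := ih (by omega) _ hfix' k (by omega)
      have hjv : jval (swP n k * π) t = j := by
        rw [jval_eq _ (show t < n + 1 by omega), Equiv.Perm.mul_apply, hπt,
          swP_apply_ne (by simp; omega) (by simp; omega)]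
      have htil : (uRun n j t)⁻¹ * (swP n k * π) = swP n k * ((uRun n j t)⁻¹ * π) := by
        rw [← mul_assoc, hcommP.symm.inv_left.eq, mul_assoc]
      refine ⟨ascRun n j t * b * (ascRun n j t)⁻¹,
        (bandGrp_normal n).conj_mem b hb _, ?_⟩
      rw [canonAux_succ π, canonAux_succ (swP n k * π), hjdef, hjv, htil]
      calc σB k * (ascRun n j t * canonAux n t ((uRun n j t)⁻¹ * π))
          = (σB k * ascRun n j t) * canonAux n t ((uRun n j t)⁻¹ * π) := by
            simp only [mul_assoc]
        _ = ascRun n j t * (σB k * canonAux n t ((uRun n j t)⁻¹ * π)) := by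
            rw [hcomm.eq]; simp only [mul_assoc]
        _ = ascRun n j t * (b * canonAux n t (swP n k * ((uRun n j t)⁻¹ * π))) := by
            rw [heq]
        _ = ascRun n j t * b * (ascRun n j t)⁻¹ *
              (ascRun n j t * canonAux n t (swP n k * ((uRun n j t)⁻¹ * π))) := by
            group
    · -- k = j - 1
      have hcons : ascRun n k t = σB k * ascRun n (k+1) t := ascRun_cons (by omega)
      have hW : σB (n := n) k * ascRun n j t = ascRun n k t := by
        rw [hcons, hc]
      have hU : uRun n k t = swP n k * uRun n j t := by
        rw [uRun, ← hW, map_mul]; rfl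
      have hjv : jval (swP n k * π) t = k := by
        rw [jval_eq _ (show t < n + 1 by omega), Equiv.Perm.mul_apply, hπt,
          show (⟨j, by omega⟩ : Fin (n+1)) = ⟨k+1, by omega⟩ from Fin.ext (by simp; omega),
          swP_apply_right (by omega)]
      have htil : (uRun n k t)⁻¹ * (swP n k * π) = (uRun n j t)⁻¹ * π := by
        rw [hU, mul_inv_rev, swP_inv, mul_assoc, ← mul_assoc (swP n k), swP_invol, one_mul]
      refine ⟨1, one_mem _, ?_⟩
      rw [canonAux_succ π, canonAux_succ (swP n k * π), hjdef, hjv, htil, one_mul,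
        ← mul_assoc, hW]
    · -- k = j
      subst hc
      have hkt : k < t := by omega
      have hW : ascRun n k t = σB k * ascRun n (k+1) t := ascRun_cons hkt
      have hU : uRun n k t = swP n k * uRun n (k+1) t := uRun_cons hkt
      have hjv : jval (swP n k * π) t = k + 1 := by
        rw [jval_eq _ (show t < n + 1 by omega), Equiv.Perm.mul_apply, hπt,
          swP_apply_left (by omega)]
      have htil : (uRun n (k+1) t)⁻¹ * (swP n k * π) = (uRun n k t)⁻¹ * π := by
        rw [hU, mul_inv_rev, swP_inv, mul_assoc]
      refine ⟨band n k (k+1), band_mem (by omega) (by omega), ?_⟩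
      rw [canonAux_succ π, canonAux_succ (swP n k * π), hjdef, hjv, htil, band_adj, hW]
      group
    · -- j + 1 ≤ k ≤ t - 1
      have hmid := ascRun_mid (n := n) (k := k) (j := j) (t := t) (by omega) (by omega) (by omega)
      have hmidP : swP n k * uRun n j t = uRun n j t * swP n (k-1) := by
        rw [swP, swP, uRun, ← map_mul, ← map_mul, hmid]
      obtain ⟨b, hb, heq⟩ := ih (by omega) _ hfix' (k-1) (by omega)
      have hjv : jval (swP n k * π) t = j := by
        rw [jval_eq _ (show t < n + 1 by omega), Equiv.Perm.mul_apply, hπt,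
          swP_apply_ne (by simp; omega) (by simp; omega)]
      have htil : (uRun n j t)⁻¹ * (swP n k * π) = swP n (k-1) * ((uRun n j t)⁻¹ * π) := by
        have h2 : (uRun n j t)⁻¹ * swP n k = swP n (k-1) * (uRun n j t)⁻¹ := by
          apply mul_left_cancel (a := uRun n j t)
          rw [← mul_assoc, mul_inv_cancel, one_mul, ← mul_assoc, ← hmidP]
          group
        rw [← mul_assoc, h2, mul_assoc]
      refine ⟨ascRun n j t * b * (ascRun n j t)⁻¹,
        (bandGrp_normal n).conj_mem b hb _, ?_⟩
      rw [canonAux_succ π, canonAux_succ (swP n k * π), hjdef, hjv, htil]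
      calc σB k * (ascRun n j t * canonAux n t ((uRun n j t)⁻¹ * π))
          = (σB k * ascRun n j t) * canonAux n t ((uRun n j t)⁻¹ * π) := by
            simp only [mul_assoc]
        _ = ascRun n j t * (σB (k-1) * canonAux n t ((uRun n j t)⁻¹ * π)) := by
            rw [hmid]; simp only [mul_assoc]
        _ = ascRun n j t * (b * canonAux n t (swP n (k-1) * ((uRun n j t)⁻¹ * π))) := by
            rw [heq]
        _ = ascRun n j t * b * (ascRun n j t)⁻¹ *
              (ascRun n j t * canonAux n t (swP n (k-1) * ((uRun n j t)⁻¹ * π))) := by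
            group
lemma key_step_inv {n : ℕ} (t : ℕ) (ht : t ≤ n + 1) (π : Equiv.Perm (Fin (n+1)))
    (hfix : FixAbove t π) (k : ℕ) (hk : k + 2 ≤ t) :
    ∃ b ∈ bandGrp n, (σB k)⁻¹ * canonAux n t π = b * canonAux n t (swP n k * π) := by
  obtain ⟨b, hb, heq⟩ := key_step t ht π hfix k hk
  refine ⟨(band n k (k+1))⁻¹ * b, mul_mem (inv_mem (band_mem (by omega) (by omega))) hb, ?_⟩
  rw [band_adj, mul_assoc, ← heq]
  group

lemma fixAbove_top {n : ℕ} (π : Equiv.Perm (Fin (n+1))) : FixAbove (n+1) π := by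
  intro x hx
  exact absurd x.isLt (by omega)

/-- Every braid is a band-group element times the canonical form of its permutation. -/
lemma comb {n : ℕ} (g : Braid n) :
    ∃ b ∈ bandGrp n, g = b * canonAux n (n+1) (braidPerm n g) := by
  set C : Braid n → Prop :=
    fun h => ∃ b ∈ bandGrp n, h = b * canonAux n (n+1) (braidPerm n h) with hC
  have hC1 : C 1 := ⟨1, one_mem _, by rw [map_one, canonAux_one n (n+1) (le_refl _), mul_one]⟩
  set T : Submonoid (Braid n) :=
    { carrier := {g | ∀ h, C h → C (g * h)}
      one_mem' := fun h hh => by rwa [one_mul]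
      mul_mem' := fun {a b} ha hb h hh => by rw [mul_assoc]; exact ha _ (hb h hh) } with hT
  have hgen : ∀ x : Fin n, (PresentedGroup.of (rels := braidRels n) x) ∈ T ∧
      (PresentedGroup.of (rels := braidRels n) x)⁻¹ ∈ T := by
    intro x
    have hσ : PresentedGroup.of (rels := braidRels n) x = σB (x : ℕ) := by
      rw [σB, dif_pos x.isLt]
    constructor
    · intro h hh
      obtain ⟨b, hb, heq⟩ := hh
      obtain ⟨b₂, hb₂, heq₂⟩ := key_step (n+1) (le_refl _) (braidPerm n h)
        (fixAbove_top _) (x : ℕ) (by omega)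
      refine ⟨σB (x : ℕ) * b * (σB (x : ℕ))⁻¹ * b₂,
        mul_mem ((bandGrp_normal n).conj_mem b hb _) hb₂, ?_⟩
      rw [hσ, heq]
      have hbp : braidPerm n (σB (x : ℕ) * (b * canonAux n (n+1) (braidPerm n h)))
          = swP n (x : ℕ) * braidPerm n h := by
        rw [map_mul, ← heq]; rfl
      rw [hbp]
      calc σB (x : ℕ) * (b * canonAux n (n+1) (braidPerm n h))
          = σB (x : ℕ) * b * (σB (x : ℕ))⁻¹ * (σB (x : ℕ) * canonAux n (n+1) (braidPerm n h)) := by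
            group
        _ = σB (x : ℕ) * b * (σB (x : ℕ))⁻¹ *
              (b₂ * canonAux n (n+1) (swP n (x : ℕ) * braidPerm n h)) := by rw [heq₂]
        _ = σB (x : ℕ) * b * (σB (x : ℕ))⁻¹ * b₂ *
              canonAux n (n+1) (swP n (x : ℕ) * braidPerm n h) := by group
    · intro h hh
      obtain ⟨b, hb, heq⟩ := hh
      obtain ⟨b₂, hb₂, heq₂⟩ := key_step_inv (n+1) (le_refl _) (braidPerm n h)
        (fixAbove_top _) (x : ℕ) (by omega)
      refine ⟨(σB (x : ℕ))⁻¹ * b * σB (x : ℕ) * b₂, ?_, ?_⟩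
      · refine mul_mem ?_ hb₂
        have := (bandGrp_normal n).conj_mem b hb (σB (x : ℕ))⁻¹
        simpa using this
      · rw [hσ, heq]
        have hbp : braidPerm n ((σB (x : ℕ))⁻¹ * (b * canonAux n (n+1) (braidPerm n h)))
            = swP n (x : ℕ) * braidPerm n h := by
          rw [map_mul, ← heq, map_inv]
          congr 1
          exact swP_inv
        rw [hbp]
        calc (σB (x : ℕ))⁻¹ * (b * canonAux n (n+1) (braidPerm n h))
            = (σB (x : ℕ))⁻¹ * b * σB (x : ℕ) *
                ((σB (x : ℕ))⁻¹ * canonAux n (n+1) (braidPerm n h)) := by group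
          _ = (σB (x : ℕ))⁻¹ * b * σB (x : ℕ) *
                (b₂ * canonAux n (n+1) (swP n (x : ℕ) * braidPerm n h)) := by rw [heq₂]
          _ = (σB (x : ℕ))⁻¹ * b * σB (x : ℕ) * b₂ *
              canonAux n (n+1) (swP n (x : ℕ) * braidPerm n h) := by group
  have hsub : Set.range (PresentedGroup.of (rels := braidRels n)) ∪
      (Set.range (PresentedGroup.of (rels := braidRels n)))⁻¹ ⊆ T := by
    rintro y (⟨x, rfl⟩ | hy)
    · exact (hgen x).1
    · rw [Set.mem_inv] at hy
      obtain ⟨x, hx⟩ := hy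
      have : y = (PresentedGroup.of (rels := braidRels n) x)⁻¹ := by
        rw [hx, inv_inv]
      rw [this]
      exact (hgen x).2
  have hgT : g ∈ T := by
    have h1 : g ∈ (⊤ : Subgroup (Braid n)) := trivial
    rw [← PresentedGroup.closure_range_of (braidRels n)] at h1
    have h2 : g ∈ Submonoid.closure (Set.range (PresentedGroup.of (rels := braidRels n)) ∪
        (Set.range (PresentedGroup.of (rels := braidRels n)))⁻¹) := by
      rw [← Subgroup.closure_toSubmonoid]; exact h1
    exact Submonoid.closure_le.mpr hsub h2
  have := hgT 1 hC1
  rwa [mul_one] at this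

lemma ker_le_bandGrp {n : ℕ} : (braidPerm n).ker ≤ bandGrp n := by
  intro g hg
  obtain ⟨b, hb, heq⟩ := comb g
  rw [MonoidHom.mem_ker] at hg
  rw [hg, canonAux_one n (n+1) (le_refl _), mul_one] at heq
  rwa [heq]
/-! ### Reindexing products over `List.range` -/

lemma range_split (N mm : ℕ) (hmm : mm ≤ N) :
    List.range (N+1) = List.range mm ++ mm :: ((List.range' mm (N-mm)).map (· + 1)) := by
  rw [List.range_eq_range', show N + 1 = mm + (N + 1 - mm) from by omega, ← List.range'_append,
    show (0 : ℕ) + 1 * mm = mm from by omega, show N + 1 - mm = (N - mm) + 1 from by omega,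
    List.range'_succ, List.range_eq_range']
  congr 1
  congr 1
  rw [List.range'_eq_map_range, List.range'_eq_map_range, List.map_map]
  apply List.map_congr_left
  intro a _
  simp; omega

lemma range_split' (N mm : ℕ) (hmm : mm ≤ N) :
    List.range N = List.range mm ++ List.range' mm (N-mm) := by
  rw [List.range_eq_range', List.range_eq_range']
  conv_lhs => rw [show N = mm + (N - mm) from by omega]
  rw [← List.range'_append, show (0 : ℕ) + 1 * mm = mm from by omega]

lemma reindex_prod {M : Type*} [Monoid M] (N mm : ℕ) (hmm : mm ≤ N) (f : ℕ → M) (P : ℕ → Bool)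
    (h1 : P mm = true → f mm = 1) :
    (((List.range (N+1)).filter P).map f).prod
      = (((List.range N).filter (fun k => P (if k < mm then k else k + 1))).map
          (fun k => f (if k < mm then k else k + 1))).prod := by
  rw [range_split N mm hmm, range_split' N mm hmm]
  rw [List.filter_append, List.filter_append, List.map_append, List.map_append,
    List.prod_append, List.prod_append]
  congr 1
  · -- part below mm
    have hfil : (List.range mm).filter P
        = (List.range mm).filter (fun k => P (if k < mm then k else k + 1)) := by
      apply List.filter_congr
      intro x hx
      rw [List.mem_range] at hx
      rw [if_pos hx]
    rw [← hfil]
    refine congrArg List.prod (List.map_congr_left ?_)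
    intro x hx
    rw [List.mem_filter, List.mem_range] at hx
    rw [if_pos hx.1]
  · -- the mm entry and the shifted part
    rw [List.filter_cons]
    have htail : ((((List.range' mm (N-mm)).map (· + 1)).filter P).map f).prod
        = ((((List.range' mm (N-mm)).filter
            (fun k => P (if k < mm then k else k + 1))).map
            (fun k => f (if k < mm then k else k + 1))).prod) := by
      rw [List.filter_map]
      rw [List.map_map]
      have hfil : (List.range' mm (N-mm)).filter (P ∘ (· + 1))
          = (List.range' mm (N-mm)).filter (fun k => P (if k < mm then k else k + 1)) := by
        apply List.filter_congr
        intro x hx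
        rw [List.mem_range'_1] at hx
        rw [if_neg (by omega)]
        rfl
      rw [hfil]
      refine congrArg List.prod (List.map_congr_left ?_)
      intro x hx
      rw [List.mem_filter, List.mem_range'_1] at hx
      simp only [Function.comp]
      rw [if_neg (by omega)]
    split_ifs with hPm
    · rw [List.map_cons, List.prod_cons, h1 hPm, one_mul, htail]
    · rw [htail]
/-! ### Computing `q` on the elements `c_{ij}` -/

lemma q_cc_hit {n m : ℕ} {q : Gn3 (n+2) →* Gn3 (n+1)} (hq : qCond (n+1) m q)
    {i j : ℕ} (hij : i < j) (hj : j < n+2) (hm2 : i = m ∨ j = m) :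
    q (cc (n+2) i j) = 1 := by
  rw [cc, map_mul, map_list_prod, map_list_prod, List.map_map, List.map_map]
  have h1 : ∀ x ∈ ((List.range (n+2)).filter (fun k => decide (j < k))).map
      (q ∘ fun k => a3 (n+2) i j k), x = 1 := by
    intro x hx
    rw [List.mem_map] at hx
    obtain ⟨k, hk, rfl⟩ := hx
    simp only [List.mem_filter, List.mem_range, decide_eq_true_eq] at hk
    rw [Function.comp_apply, hq i j k (by omega) (by omega) (by omega) (by omega) (by omega)
      (by omega), if_pos (by tauto)]
  have h2 : ∀ x ∈ ((List.range (n+2)).filter (fun k => decide (k < j ∧ k ≠ i))).map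
      (q ∘ fun k => a3 (n+2) i j k), x = 1 := by
    intro x hx
    rw [List.mem_map] at hx
    obtain ⟨k, hk, rfl⟩ := hx
    simp only [List.mem_filter, List.mem_range, decide_eq_true_eq] at hk
    rw [Function.comp_apply, hq i j k (by omega) (by omega) (by omega) (by omega) (by omega)
      (by omega), if_pos (by tauto)]
  rw [List.prod_eq_one h1, List.prod_eq_one h2, one_mul]

lemma dl_ul {m k : ℕ} : dl m (if k < m then k else k + 1) = k := by
  rw [dl]; split_ifs <;> omega

lemma ul_ne {m k : ℕ} : (if k < m then k else k + 1) ≠ m := by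
  split_ifs <;> omega

lemma q_cc_miss {n m : ℕ} {q : Gn3 (n+2) →* Gn3 (n+1)} (hq : qCond (n+1) m q) (hm : m < n+2)
    {i j : ℕ} (hij : i < j) (hj : j < n+2) (him : i ≠ m) (hjm : j ≠ m) :
    q (cc (n+2) i j) = cc (n+1) (dl m i) (dl m j) := by
  rw [cc, cc, map_mul, map_list_prod, map_list_prod, List.map_map, List.map_map]
  congr 1
  · -- upper part
    have step1 : ((List.range (n+2)).filter (fun k => decide (j < k))).map
        (q ∘ fun k => a3 (n+2) i j k)
        = ((List.range (n+2)).filter (fun k => decide (j < k))).map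
          (fun k => if k = m then 1 else a3 (n+1) (dl m i) (dl m j) (dl m k)) := by
      apply List.map_congr_left
      intro k hk
      simp only [List.mem_filter, List.mem_range, decide_eq_true_eq] at hk
      rw [Function.comp_apply, hq i j k (by omega) (by omega) (by omega) (by omega) (by omega)
        (by omega)]
      by_cases hkm : k = m
      · rw [if_pos (by tauto), if_pos hkm]
      · rw [if_neg (by tauto), if_neg hkm]
    rw [step1]
    have hre := reindex_prod (n+1) m (by omega)
      (fun k => if k = m then 1 else a3 (n+1) (dl m i) (dl m j) (dl m k))
      (fun k => decide (j < k)) (fun _ => if_pos rfl)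
    rw [show ((n+1)+1 : ℕ) = n+2 from rfl] at hre
    rw [hre]
    have hfil : (List.range (n+1)).filter
        (fun k => decide (j < if k < m then k else k + 1))
        = (List.range (n+1)).filter (fun k => decide (dl m j < k)) := by
      apply List.filter_congr
      intro x _
      rw [decide_eq_decide, dl]
      split_ifs <;> omega
    rw [hfil]
    refine congrArg List.prod (List.map_congr_left fun k _ => ?_)
    show (if (if k < m then k else k + 1) = m then 1
      else a3 (n+1) (dl m i) (dl m j) (dl m (if k < m then k else k + 1)))
      = a3 (n+1) (dl m i) (dl m j) k
    rw [if_neg ul_ne, dl_ul]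
  · -- lower part
    have step1 : ((List.range (n+2)).filter (fun k => decide (k < j ∧ k ≠ i))).map
        (q ∘ fun k => a3 (n+2) i j k)
        = ((List.range (n+2)).filter (fun k => decide (k < j ∧ k ≠ i))).map
          (fun k => if k = m then 1 else a3 (n+1) (dl m i) (dl m j) (dl m k)) := by
      apply List.map_congr_left
      intro k hk
      simp only [List.mem_filter, List.mem_range, decide_eq_true_eq] at hk
      rw [Function.comp_apply, hq i j k (by omega) (by omega) (by omega) (by omega)
        (by omega) (by omega)]
      by_cases hkm : k = m
      · rw [if_pos (by tauto), if_pos hkm]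
      · rw [if_neg (by tauto), if_neg hkm]
    rw [step1]
    have hre := reindex_prod (n+1) m (by omega)
      (fun k => if k = m then 1 else a3 (n+1) (dl m i) (dl m j) (dl m k))
      (fun k => decide (k < j ∧ k ≠ i)) (fun _ => if_pos rfl)
    rw [show ((n+1)+1 : ℕ) = n+2 from rfl] at hre
    rw [hre]
    have hfil : (List.range (n+1)).filter
        (fun k => decide ((if k < m then k else k + 1) < j ∧ (if k < m then k else k + 1) ≠ i))
        = (List.range (n+1)).filter (fun k => decide (k < dl m j ∧ k ≠ dl m i)) := by
      apply List.filter_congr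
      intro x _
      rw [decide_eq_decide, dl, dl]
      split_ifs <;> omega
    rw [hfil]
    refine congrArg List.prod (List.map_congr_left fun k _ => ?_)
    show (if (if k < m then k else k + 1) = m then 1
      else a3 (n+1) (dl m i) (dl m j) (dl m (if k < m then k else k + 1)))
      = a3 (n+1) (dl m i) (dl m j) k
    rw [if_neg ul_ne, dl_ul]
lemma range'_shift (s L : ℕ) : List.range' (s+1) L = (List.range' s L).map (· + 1) := by
  rw [List.range'_eq_map_range, List.range'_eq_map_range, List.map_map]
  apply List.map_congr_left
  intro a _
  simp only [Function.comp_apply]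
  omega

lemma conj_prod_eq {n m : ℕ} {q : Gn3 (n+2) →* Gn3 (n+1)} (hq : qCond (n+1) m q)
    (hm : m < n+2) {i j : ℕ} (hij : i < j) (hj : j < n+2) (him : i ≠ m) (hjm : j ≠ m) :
    (((List.range' (i+1) (j-i-1)).reverse).map (⇑q ∘ cc (n+2) i)).prod
    = (((List.range' (dl m i + 1) (dl m j - dl m i - 1)).reverse).map (cc (n+1) (dl m i))).prod
    := by
  have hmap : ((List.range' (i+1) (j-i-1)).reverse).map (⇑q ∘ cc (n+2) i)
      = ((List.range' (i+1) (j-i-1)).reverse).map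
        (fun k => if k = m then 1 else cc (n+1) (dl m i) (dl m k)) := by
    apply List.map_congr_left
    intro k hk
    rw [List.mem_reverse, List.mem_range'_1] at hk
    show q (cc (n+2) i k) = _
    by_cases hkm : k = m
    · rw [if_pos hkm, q_cc_hit hq (by omega) (by omega) (Or.inr hkm)]
    · rw [if_neg hkm, q_cc_miss hq hm (by omega) (by omega) him hkm]
  rw [hmap]
  rcases show m < i ∨ (i < m ∧ m < j) ∨ j < m from by omega with hc | hc | hc
  · -- m < i
    have hdli : dl m i = i - 1 := by rw [dl, if_neg (by omega)]
    have hdlj : dl m j = j - 1 := by rw [dl, if_neg (by omega)]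
    rw [hdli, hdlj, show i - 1 + 1 = i from by omega,
      show j - 1 - (i - 1) - 1 = j - i - 1 from by omega]
    conv_lhs => rw [range'_shift i (j-i-1)]
    rw [← List.map_reverse, List.map_map]
    refine congrArg List.prod (List.map_congr_left fun k hk => ?_)
    rw [List.mem_reverse, List.mem_range'_1] at hk
    show (if k + 1 = m then 1 else cc (n+1) (i-1) (dl m (k+1))) = cc (n+1) (i-1) k
    rw [if_neg (by omega), dl, if_neg (by omega), show k + 1 - 1 = k from by omega]
  · -- i < m < j
    have hdli : dl m i = i := by rw [dl, if_pos (by omega)]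
    have hdlj : dl m j = j - 1 := by rw [dl, if_neg (by omega)]
    rw [hdli, hdlj]
    have hsplitL : List.range' (i+1) (j-i-1)
        = List.range' (i+1) (m-i-1) ++ (m :: ((List.range' m (j-m-1)).map (· + 1))) := by
      rw [show j - i - 1 = (m - i - 1) + (j - m) from by omega, ← List.range'_append,
        show i + 1 + 1 * (m - i - 1) = m from by omega,
        show j - m = (j - m - 1) + 1 from by omega, List.range'_succ, ← range'_shift,
        Nat.add_sub_cancel]
    have hsplitR : List.range' (i+1) (j-1-i-1)
        = List.range' (i+1) (m-i-1) ++ List.range' m (j-m-1) := by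
      rw [show j - 1 - i - 1 = (m - i - 1) + (j - m - 1) from by omega, ← List.range'_append,
        show i + 1 + 1 * (m - i - 1) = m from by omega]
    rw [hsplitL, hsplitR, List.reverse_append, List.reverse_append, List.reverse_cons]
    simp only [List.map_append, List.prod_append]
    congr 1
    · -- shifted upper part together with the m entry
      have hme : ((([m] : List ℕ)).map
          (fun k => if k = m then 1 else cc (n+1) i (dl m k))).prod = 1 := by
        simp
      rw [hme, mul_one, ← List.map_reverse, List.map_map]
      refine congrArg List.prod (List.map_congr_left fun k hk => ?_)
      rw [List.mem_reverse, List.mem_range'_1] at hk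
      show (if k + 1 = m then 1 else cc (n+1) i (dl m (k+1))) = cc (n+1) i k
      rw [if_neg (by omega), dl, if_neg (by omega), show k + 1 - 1 = k from by omega]
    · -- lower part
      refine congrArg List.prod (List.map_congr_left fun k hk => ?_)
      rw [List.mem_reverse, List.mem_range'_1] at hk
      show (if k = m then 1 else cc (n+1) i (dl m k)) = cc (n+1) i k
      rw [if_neg (by omega), dl, if_pos (by omega)]
  · -- j < m
    have hdli : dl m i = i := by rw [dl, if_pos (by omega)]
    have hdlj : dl m j = j := by rw [dl, if_pos (by omega)]
    rw [hdli, hdlj]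
    refine congrArg List.prod (List.map_congr_left fun k hk => ?_)
    rw [List.mem_reverse, List.mem_range'_1] at hk
    show (if k = m then 1 else cc (n+1) i (dl m k)) = cc (n+1) i k
    rw [if_neg (by omega), dl, if_pos (by omega)]

lemma q_phiW {n m : ℕ} {q : Gn3 (n+2) →* Gn3 (n+1)} (hq : qCond (n+1) m q)
    (hm : m < n+2) {i j : ℕ} (hij : i < j) (hj : j < n+2) :
    q (phiW (n+2) i j) = if i = m ∨ j = m then 1 else phiW (n+1) (dl m i) (dl m j) := by
  rw [phiW, map_mul, map_mul, map_inv, map_pow, map_list_prod, List.map_map]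
  by_cases hhit : i = m ∨ j = m
  · rw [if_pos hhit, q_cc_hit hq hij hj hhit]
    group
  · push_neg at hhit
    rw [if_neg (by tauto), q_cc_miss hq hm hij hj hhit.1 hhit.2,
      conj_prod_eq hq hm hij hj hhit.1 hhit.2, phiW]
lemma band_ker {n i j : ℕ} : band n i j ∈ (braidPerm n).ker := by
  rw [MonoidHom.mem_ker, band_def, map_mul, map_mul, map_mul, map_inv,
    show braidPerm n (σB i) = swP n i from rfl,
    show braidPerm n (dRun n i j) * swP n i * swP n i * (braidPerm n (dRun n i j))⁻¹
      = braidPerm n (dRun n i j) * (swP n i * swP n i) * (braidPerm n (dRun n i j))⁻¹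
      from by group,
    swP_invol, mul_one, mul_inv_cancel]

lemma dlB_eq_dl : dlB = dl := rfl

/-- `q_m ∘ φ_{n+2} = φ_{n+1} ∘ p_m` — the strand-deletion maps intertwine
`φ` (here `PB_{n+2}`, pure braids on `n+2` strands, maps to `G_{n+2}^3`). -/
theorem stmt17 (n m : ℕ) (hm : m < n + 2)
    (φ₁ : PureBraid (n + 1) →* Gn3 (n + 2)) (φ₀ : PureBraid n →* Gn3 (n + 1))
    (p : PureBraid (n + 1) →* PureBraid n) (q : Gn3 (n + 2) →* Gn3 (n + 1))
    (hφ₁ : phiCond (n + 1) φ₁) (hφ₀ : phiCond n φ₀)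
    (hp : pCond n m p) (hq : qCond (n + 1) m q) :
    q.comp φ₁ = φ₀.comp p := by
  set K : Subgroup (PureBraid (n+1)) := MonoidHom.eqLocus (q.comp φ₁) (φ₀.comp p) with hK
  have hband : ∀ i j : ℕ, i < j → j ≤ n + 1 → ∀ y : PureBraid (n+1),
      (y : Braid (n+1)) = band (n+1) i j → y ∈ K := by
    intro i j hij hj y hy
    show q (φ₁ y) = φ₀ (p y)
    rw [hφ₁ i j hij (by omega) y hy, q_phiW hq (by omega) hij (by omega)]
    have hpy := hp i j hij (by omega) y hy
    by_cases hhit : i = m ∨ j = m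
    · rw [if_pos hhit]
      rw [if_pos hhit] at hpy
      have : p y = 1 := by
        apply Subtype.ext
        simpa using hpy
      rw [this, map_one]
    · rw [if_neg hhit]
      rw [if_neg hhit] at hpy
      push_neg at hhit
      have h1 : dlB m i < dlB m j := by
        rw [dlB, dlB]; split_ifs <;> omega
      have h2 : dlB m j < n + 1 := by
        rw [dlB]; split_ifs <;> omega
      rw [hφ₀ (dlB m i) (dlB m j) h1 h2 (p y) hpy, dlB_eq_dl]
  have hsub : bandSet (n+1) ⊆ ↑(K.map (PureBraid (n+1)).subtype) := by
    rintro g ⟨i, j, hij, hj, rfl⟩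
    exact ⟨⟨band (n+1) i j, band_ker⟩, hband i j hij hj _ rfl, rfl⟩
  have hBle : bandGrp (n+1) ≤ K.map (PureBraid (n+1)).subtype :=
    (Subgroup.closure_le _).mpr hsub
  apply MonoidHom.ext
  intro x
  have hx : (x : Braid (n+1)) ∈ K.map (PureBraid (n+1)).subtype :=
    hBle (ker_le_bandGrp x.2)
  obtain ⟨y, hyK, hyx⟩ := hx
  have : y = x := Subtype.ext hyx
  rw [← this]
  exact hyK
end

section
/- If β ∈ PB_n is a Brunnian braid (i.e., p_m(β) = 1 for all m ∈ {1,…,n}), then φ_n(β) is Brunnian in G_n^3, i.e., q_m(φ_n(β)) = 1 for all m. -/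
/-! ### Auxiliary development for Statement 18 -/

namespace Stmt18

section AbstractIdentities

variable {G : Type*} [Group G] {x y a b c : G}

theorem rel_one {α : Type*} {rels : Set (FreeGroup α)} {r : FreeGroup α} (h : r ∈ rels) :
    PresentedGroup.mk rels r = 1 :=
  (QuotientGroup.eq_one_iff r).2 (Subgroup.subset_normalClosure h)

theorem braid_conj (h : x * y * x = y * x * y) : x⁻¹ * y * x = y * x * y⁻¹ := by
  calc x⁻¹ * y * x = x⁻¹ * (y * x * y) * y⁻¹ := by group
    _ = x⁻¹ * (x * y * x) * y⁻¹ := by rw [h]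
    _ = y * x * y⁻¹ := by group

theorem conj_sq (h : x * y * x = y * x * y) : x⁻¹ * (y * y) * x = y * (x * x) * y⁻¹ := by
  calc x⁻¹ * (y * y) * x = (x⁻¹ * y * x) * (x⁻¹ * y * x) := by group
    _ = (y * x * y⁻¹) * (y * x * y⁻¹) := by rw [braid_conj h]
    _ = y * (x * x) * y⁻¹ := by group

theorem conj_E (h : x * y * x = y * x * y) : x * (y * (x * x) * y⁻¹) * x⁻¹ = y * y := by
  calc x * (y * (x * x) * y⁻¹) * x⁻¹ = (x * y * x) * x * (y⁻¹ * x⁻¹) := by group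
    _ = (y * x * y) * x * (y⁻¹ * x⁻¹) := by rw [h]
    _ = y * (x * y * x) * (y⁻¹ * x⁻¹) := by group
    _ = y * (y * x * y) * (y⁻¹ * x⁻¹) := by rw [h]
    _ = y * y := by group

theorem ins_braid1 (h1 : b * c * b = c * b * c) (h2 : a * c = c * a)
    (h3 : a * b * a = b * a * b) :
    (b * a * b⁻¹) * c * (b * a * b⁻¹) = c * (b * a * b⁻¹) * c := by
  have hcb : b⁻¹ * c * b = c * b * c⁻¹ := by
    calc b⁻¹ * c * b = b⁻¹ * (c * b * c) * c⁻¹ := by group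
      _ = b⁻¹ * (b * c * b) * c⁻¹ := by rw [h1]
      _ = c * b * c⁻¹ := by group
  have hca : c⁻¹ * a = a * c⁻¹ := by
    calc c⁻¹ * a = c⁻¹ * (a * c) * c⁻¹ := by group
      _ = c⁻¹ * (c * a) * c⁻¹ := by rw [h2]
      _ = a * c⁻¹ := by group
  have hL : (b * a * b⁻¹) * c * (b * a * b⁻¹) = b * c * (b * a * b) * c⁻¹ * b⁻¹ := by
    calc (b * a * b⁻¹) * c * (b * a * b⁻¹)
        = b * a * (b⁻¹ * c * b) * a * b⁻¹ := by group
      _ = b * a * (c * b * c⁻¹) * a * b⁻¹ := by rw [hcb]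
      _ = b * (a * c) * b * (c⁻¹ * a) * b⁻¹ := by group
      _ = b * (c * a) * b * (a * c⁻¹) * b⁻¹ := by rw [h2, hca]
      _ = b * c * (a * b * a) * c⁻¹ * b⁻¹ := by group
      _ = b * c * (b * a * b) * c⁻¹ * b⁻¹ := by rw [h3]
  have hR : c * (b * a * b⁻¹) * c = b * c * (b * a * b) * c⁻¹ * b⁻¹ := by
    calc c * (b * a * b⁻¹) * c
        = c * b * a * (b⁻¹ * c * b) * b⁻¹ := by group
      _ = c * b * a * (c * b * c⁻¹) * b⁻¹ := by rw [hcb]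
      _ = c * b * (a * c) * b * c⁻¹ * b⁻¹ := by group
      _ = c * b * (c * a) * b * c⁻¹ * b⁻¹ := by rw [h2]
      _ = (c * b * c) * a * b * c⁻¹ * b⁻¹ := by group
      _ = (b * c * b) * a * b * c⁻¹ * b⁻¹ := by rw [← h1]
      _ = b * c * (b * a * b) * c⁻¹ * b⁻¹ := by group
  exact hL.trans hR.symm

theorem ins_braid2 (h2 : a * c = c * a) (h3 : a * b * a = b * a * b) :
    a * (c * b * c⁻¹) * a = (c * b * c⁻¹) * a * (c * b * c⁻¹) := by
  have hcac : c⁻¹ * a * c = a := by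
    calc c⁻¹ * a * c = c⁻¹ * (a * c) := by group
      _ = c⁻¹ * (c * a) := by rw [h2]
      _ = a := by group
  have hL : a * (c * b * c⁻¹) * a = c * (b * a * b) * c⁻¹ := by
    calc a * (c * b * c⁻¹) * a = (a * c) * b * (c⁻¹ * a * c) * c⁻¹ := by group
      _ = (c * a) * b * a * c⁻¹ := by rw [h2, hcac]
      _ = c * (a * b * a) * c⁻¹ := by group
      _ = c * (b * a * b) * c⁻¹ := by rw [h3]
  have hR : (c * b * c⁻¹) * a * (c * b * c⁻¹) = c * (b * a * b) * c⁻¹ := by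
    calc (c * b * c⁻¹) * a * (c * b * c⁻¹) = c * b * (c⁻¹ * a * c) * b * c⁻¹ := by group
      _ = c * b * a * b * c⁻¹ := by rw [hcac]
      _ = c * (b * a * b) * c⁻¹ := by group
  exact hL.trans hR.symm

end AbstractIdentities

end Stmt18


namespace Stmt18

section BraidBasics

variable {n : ℕ}

theorem comm_of_rel {G : Type*} [Group G] {x y : G} (h : x * y * x⁻¹ * y⁻¹ = 1) :
    x * y = y * x := by
  calc x * y = (x * y * x⁻¹ * y⁻¹) * (y * x) := by group
    _ = y * x := by rw [h]; group

theorem braid_of_rel {G : Type*} [Group G] {x y : G} (h : x * y * x * (y * x * y)⁻¹ = 1) :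
    x * y * x = y * x * y := by
  calc x * y * x = (x * y * x * (y * x * y)⁻¹) * (y * x * y) := by group
    _ = y * x * y := by rw [h]; group

theorem σB_eq_of (k : ℕ) (h : k < n) : (σB k : Braid n) = PresentedGroup.of ⟨k, h⟩ := by
  simp [σB, h]

theorem σB_junk (k : ℕ) (h : ¬ k < n) : (σB k : Braid n) = 1 := by
  simp [σB, h]

theorem σB_comm {a b : ℕ} (hab : a + 1 < b) (hb : b < n) :
    (σB a : Braid n) * σB b = σB b * σB a := by
  have ha : a < n := by omega
  have hr : (FreeGroup.of (⟨a, ha⟩ : Fin n) * FreeGroup.of (⟨b, hb⟩ : Fin n) *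
      (FreeGroup.of (⟨a, ha⟩ : Fin n))⁻¹ * (FreeGroup.of (⟨b, hb⟩ : Fin n))⁻¹) ∈ braidRels n :=
    Or.inl ⟨⟨a, ha⟩, ⟨b, hb⟩, hab, rfl⟩
  have h1 := rel_one hr
  rw [map_mul, map_mul, map_mul, map_inv, map_inv] at h1
  rw [σB_eq_of a ha, σB_eq_of b hb]
  exact comm_of_rel h1

theorem σB_commute {a b : ℕ} (h : a + 1 < b ∨ b + 1 < a) :
    Commute (σB a : Braid n) (σB b) := by
  by_cases ha : a < n
  · by_cases hb : b < n
    · rcases h with h | h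
      · exact σB_comm h hb
      · exact (σB_comm h ha).symm
    · rw [σB_junk b hb]; exact Commute.one_right _
  · rw [σB_junk a ha]; exact Commute.one_left _

theorem σB_braid {a : ℕ} (h : a + 1 < n) :
    (σB a : Braid n) * σB (a+1) * σB a = σB (a+1) * σB a * σB (a+1) := by
  have ha : a < n := by omega
  have hr : (FreeGroup.of (⟨a, ha⟩ : Fin n) * FreeGroup.of (⟨a+1, h⟩ : Fin n) *
      FreeGroup.of (⟨a, ha⟩ : Fin n) *
      (FreeGroup.of (⟨a+1, h⟩ : Fin n) * FreeGroup.of (⟨a, ha⟩ : Fin n) *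
       FreeGroup.of (⟨a+1, h⟩ : Fin n))⁻¹) ∈ braidRels n :=
    Or.inr ⟨⟨a, ha⟩, ⟨a+1, h⟩, rfl, rfl⟩
  have h1 := rel_one hr
  rw [map_mul, map_mul, map_inv, map_mul, map_mul] at h1
  rw [σB_eq_of a ha, σB_eq_of (a+1) h]
  exact braid_of_rel h1

theorem band_base (i : ℕ) : (band n i (i+1) : Braid n) = σB i * σB i := by
  have h0 : i + 1 - i - 1 = 0 := by omega
  simp [band, h0]

theorem band_succ {i j : ℕ} (hij : i < j) :
    (band n i (j+1) : Braid n) = σB j * band n i j * (σB j)⁻¹ := by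
  have h1 : j + 1 - i - 1 = (j - i - 1) + 1 := by omega
  have h2 : i + 1 + 1 * (j - i - 1) = j := by omega
  rw [band, band, h1, List.range'_concat, h2]
  simp only [List.reverse_append, List.reverse_cons, List.reverse_nil, List.nil_append,
    List.singleton_append, List.map_cons, List.prod_cons]
  group

theorem braidPerm_σB {k : ℕ} (h : k < n) :
    braidPerm n (σB k) =
      Equiv.swap (⟨k, by omega⟩ : Fin (n+1)) (⟨k+1, by omega⟩ : Fin (n+1)) := by
  rw [σB_eq_of k h]
  have : braidPerm n (PresentedGroup.of ⟨k, h⟩) =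
      Equiv.swap (Fin.castSucc ⟨k, h⟩) (Fin.succ ⟨k, h⟩) := PresentedGroup.toGroup.of _
  rw [this]
  rfl

theorem band_perm {i j : ℕ} (hij : i < j) (hj : j ≤ n) :
    braidPerm n (band n i j) = 1 := by
  induction j, hij using Nat.le_induction with
  | base =>
      rw [band_base, map_mul, braidPerm_σB (show i < n by omega)]
      exact Equiv.swap_mul_self _ _
  | succ j hij ih =>
      rw [band_succ hij, map_mul, map_mul, map_inv, ih (by omega)]
      group

theorem σB_commute_band {k i j : ℕ} (hij : i < j) (hj : j ≤ n) (hk : k + 1 < i ∨ j < k) :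
    Commute (σB k : Braid n) (band n i j) := by
  induction j, hij using Nat.le_induction with
  | base =>
      rw [band_base]
      have hc : Commute (σB k : Braid n) (σB i) := σB_commute (by omega)
      exact hc.mul_right hc
  | succ j hij ih =>
      rw [band_succ hij]
      have hc : Commute (σB k : Braid n) (σB j) := σB_commute (by omega)
      exact (hc.mul_right (ih (by omega) (by omega))).mul_right hc.inv_right

end BraidBasics

end Stmt18


namespace Stmt18

section BandSubgroup

variable {n : ℕ}

theorem conj_swap {G : Type*} [Group G] {s t b : G} (h : Commute s t) :
    s * (t * b * t⁻¹) * s⁻¹ = t * (s * b * s⁻¹) * t⁻¹ := by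
  calc s * (t * b * t⁻¹) * s⁻¹ = (s * t) * b * (s * t)⁻¹ := by group
    _ = (t * s) * b * (t * s)⁻¹ := by rw [h.eq]
    _ = t * (s * b * s⁻¹) * t⁻¹ := by group

theorem mid_comm {G : Type*} [Group G] {x y B : G} (hb : x * y * x = y * x * y)
    (hB : Commute y B) : Commute x (y * (x * B * x⁻¹) * y⁻¹) := by
  have key : x * (y * (x * B * x⁻¹) * y⁻¹) = (y * (x * B * x⁻¹) * y⁻¹) * x := by
    calc x * (y * (x * B * x⁻¹) * y⁻¹) = (x * y * x) * B * (x * y * x)⁻¹ * x := by group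
      _ = (y * x * y) * B * (y * x * y)⁻¹ * x := by rw [hb]
      _ = y * x * (y * B) * y⁻¹ * x⁻¹ * y⁻¹ * x := by group
      _ = y * x * (B * y) * y⁻¹ * x⁻¹ * y⁻¹ * x := by rw [hB.eq]
      _ = (y * (x * B * x⁻¹) * y⁻¹) * x := by group
  exact key

def bandSet (n : ℕ) : Set (Braid n) := {x | ∃ i j : ℕ, i < j ∧ j ≤ n ∧ x = band n i j}

def bandSub (n : ℕ) : Subgroup (Braid n) := Subgroup.closure (bandSet n)

theorem band_mem {i j : ℕ} (hij : i < j) (hj : j ≤ n) : (band n i j : Braid n) ∈ bandSub n :=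
  Subgroup.subset_closure ⟨i, j, hij, hj, rfl⟩

theorem σB_sq_mem {k : ℕ} (hk : k < n) : (σB k * σB k : Braid n) ∈ bandSub n := by
  rw [← band_base]
  exact band_mem (by omega) (by omega)

/-- `σ_i A_{i,j} σ_i⁻¹ = A_{i+1,j}` for `i+1 < j`. -/
theorem conj_band_i {i j : ℕ} (hij : i + 1 < j) (hj : j ≤ n) :
    (σB i : Braid n) * band n i j * (σB i)⁻¹ = band n (i+1) j := by
  induction j, hij using Nat.le_induction with
  | base =>
      show (σB i : Braid n) * band n i ((i+1)+1) * (σB i)⁻¹ = band n (i+1) ((i+1)+1)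
      rw [band_succ (by omega), band_base, band_base]
      exact conj_E (σB_braid (by omega))
  | succ j hij ih =>
      rw [band_succ (by omega), band_succ (by omega), ← ih (by omega),
        conj_swap (σB_commute (Or.inl (by omega)))]

/-- `σ_i⁻¹ A_{i+1,j} σ_i = A_{i,j}` for `i+1 < j`. -/
theorem conj_band_pred {i j : ℕ} (hij : i + 1 < j) (hj : j ≤ n) :
    (σB i : Braid n)⁻¹ * band n (i+1) j * σB i = band n i j := by
  induction j, hij using Nat.le_induction with
  | base =>
      show ((σB i : Braid n))⁻¹ * band n (i+1) ((i+1)+1) * σB i = band n i ((i+1)+1)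
      rw [band_base, band_succ (by omega), band_base]
      exact conj_sq (σB_braid (by omega))
  | succ j hij ih =>
      have hc : Commute ((σB i : Braid n))⁻¹ (σB j) :=
        (σB_commute (Or.inl (by omega))).inv_left
      rw [band_succ (by omega), band_succ (by omega), ← ih (by omega)]
      calc (σB i)⁻¹ * (σB j * band n (i+1) j * (σB j)⁻¹) * σB i
          = (σB i)⁻¹ * (σB j * band n (i+1) j * (σB j)⁻¹) * ((σB i)⁻¹)⁻¹ := by group
        _ = σB j * ((σB i)⁻¹ * band n (i+1) j * ((σB i)⁻¹)⁻¹) * (σB j)⁻¹ := conj_swap hc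
        _ = σB j * ((σB i)⁻¹ * band n (i+1) j * σB i) * (σB j)⁻¹ := by group

/-- `σ_k` commutes with `A_{i,j}` for `i < k < j - 1`. -/
theorem σB_commute_band_mid {i k j : ℕ} (h1 : i < k) (h2 : k + 1 < j) (hj : j ≤ n) :
    Commute (σB k : Braid n) (band n i j) := by
  induction j, h2 using Nat.le_induction with
  | base =>
      show Commute (σB k : Braid n) (band n i ((k+1)+1))
      rw [band_succ (by omega), band_succ (by omega)]
      exact mid_comm (σB_braid (by omega))
        (σB_commute_band h1 (by omega) (Or.inr (by omega)))
  | succ j h2 ih =>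
      rw [band_succ (by omega)]
      have hc : Commute (σB k : Braid n) (σB j) := σB_commute (Or.inl (by omega))
      exact (hc.mul_right (ih (by omega))).mul_right hc.inv_right

theorem conj_band_mem {k i j : ℕ} (hk : k < n) (hij : i < j) (hj : j ≤ n) :
    (σB k : Braid n) * band n i j * (σB k)⁻¹ ∈ bandSub n := by
  have sandwich : ∀ b : Braid n, b ∈ bandSub n →
      (σB k * σB k : Braid n) * b * (σB k * σB k)⁻¹ ∈ bandSub n := fun b hb =>
    mul_mem (mul_mem (σB_sq_mem hk) hb) (inv_mem (σB_sq_mem hk))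
  rcases Nat.lt_trichotomy (k+1) i with h | h | h
  · -- far left
    have e : (σB k : Braid n) * band n i j * (σB k)⁻¹ = band n i j := by
      rw [(σB_commute_band hij hj (Or.inl h)).eq]; group
    rw [e]; exact band_mem hij hj
  · -- k + 1 = i
    subst h
    have e : (σB k : Braid n) * band n (k+1) j * (σB k)⁻¹ =
        (σB k * σB k) * ((σB k)⁻¹ * band n (k+1) j * σB k) * (σB k * σB k)⁻¹ := by group
    rw [e, conj_band_pred hij hj]
    exact sandwich _ (band_mem (by omega) hj)
  · -- i ≤ k
    have hik : i ≤ k := by omega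
    rcases Nat.lt_trichotomy k j with h2 | h2 | h2
    · rcases Nat.eq_or_lt_of_le (Nat.succ_le_of_lt h2) with h3 | h3
      · -- k + 1 = j
        rcases Nat.eq_or_lt_of_le hik with h4 | h4
        · -- i = k, j = k+1 : band = σ_k²
          subst h4
          rw [← h3, band_base]
          have e : (σB i : Braid n) * (σB i * σB i) * (σB i)⁻¹ = σB i * σB i := by group
          rw [e]; exact σB_sq_mem hk
        · -- i < k, k+1 = j
          rw [← h3]
          have e : (σB k : Braid n) * band n i (k+1) * (σB k)⁻¹ =
              (σB k * σB k) * ((σB k)⁻¹ * band n i (k+1) * σB k) * (σB k * σB k)⁻¹ := by group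
          have e2 : ((σB k : Braid n))⁻¹ * band n i (k+1) * σB k = band n i k := by
            rw [band_succ h4]; group
          rw [e, e2]
          exact sandwich _ (band_mem h4 (by omega))
      · -- k + 1 < j
        rcases Nat.eq_or_lt_of_le hik with h4 | h4
        · -- i = k, k + 1 < j
          subst h4
          rw [conj_band_i h3 hj]
          exact band_mem (by omega) hj
        · -- i < k < j - 1 : mid commute
          have e : (σB k : Braid n) * band n i j * (σB k)⁻¹ = band n i j := by
            rw [(σB_commute_band_mid h4 h3 hj).eq]; group
          rw [e]; exact band_mem hij hj
    · -- k = j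
      subst h2
      have e : (σB k : Braid n) * band n i k * (σB k)⁻¹ = band n i (k+1) :=
        (band_succ hij).symm
      rw [e]; exact band_mem (by omega) (by omega)
    · -- j < k : far right
      have e : (σB k : Braid n) * band n i j * (σB k)⁻¹ = band n i j := by
        rw [(σB_commute_band hij hj (Or.inr h2)).eq]; group
      rw [e]; exact band_mem hij hj

theorem conj_band_mem' {k i j : ℕ} (hk : k < n) (hij : i < j) (hj : j ≤ n) :
    ((σB k : Braid n))⁻¹ * band n i j * σB k ∈ bandSub n := by
  have e : ((σB k : Braid n))⁻¹ * band n i j * σB k =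
      (σB k * σB k)⁻¹ * (σB k * band n i j * (σB k)⁻¹) * (σB k * σB k) := by group
  rw [e]
  exact mul_mem (mul_mem (inv_mem (σB_sq_mem hk)) (conj_band_mem hk hij hj)) (σB_sq_mem hk)

theorem conj_mem_bandSub {k : ℕ} (hk : k < n) {h : Braid n} (hh : h ∈ bandSub n) :
    σB k * h * (σB k)⁻¹ ∈ bandSub n := by
  induction hh using Subgroup.closure_induction with
  | mem x hx =>
      obtain ⟨i, j, hij, hj, rfl⟩ := hx
      exact conj_band_mem hk hij hj
  | one => simpa using one_mem _
  | mul x y hx hy ihx ihy =>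
      have e : (σB k : Braid n) * (x * y) * (σB k)⁻¹ =
          (σB k * x * (σB k)⁻¹) * (σB k * y * (σB k)⁻¹) := by group
      rw [e]; exact mul_mem ihx ihy
  | inv x hx ihx =>
      have e : (σB k : Braid n) * x⁻¹ * (σB k)⁻¹ = (σB k * x * (σB k)⁻¹)⁻¹ := by group
      rw [e]; exact inv_mem ihx

theorem conj_mem_bandSub' {k : ℕ} (hk : k < n) {h : Braid n} (hh : h ∈ bandSub n) :
    (σB k : Braid n)⁻¹ * h * σB k ∈ bandSub n := by
  induction hh using Subgroup.closure_induction with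
  | mem x hx =>
      obtain ⟨i, j, hij, hj, rfl⟩ := hx
      exact conj_band_mem' hk hij hj
  | one => simpa using one_mem _
  | mul x y hx hy ihx ihy =>
      have e : ((σB k : Braid n))⁻¹ * (x * y) * σB k =
          ((σB k)⁻¹ * x * σB k) * ((σB k)⁻¹ * y * σB k) := by group
      rw [e]; exact mul_mem ihx ihy
  | inv x hx ihx =>
      have e : ((σB k : Braid n))⁻¹ * x⁻¹ * σB k = ((σB k)⁻¹ * x * σB k)⁻¹ := by group
      rw [e]; exact inv_mem ihx

theorem bandSub_normal : (bandSub n).Normal := by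
  rw [← Subgroup.normalizer_eq_top_iff]
  rw [eq_top_iff, ← PresentedGroup.closure_range_of (braidRels n)]
  rw [Subgroup.closure_le]
  rintro x ⟨k, rfl⟩
  rw [SetLike.mem_coe, Subgroup.mem_normalizer_iff]
  intro h
  have hσ : (PresentedGroup.of k : Braid n) = σB (k : ℕ) := (σB_eq_of _ k.isLt).symm
  rw [hσ]
  constructor
  · intro hh
    have := conj_mem_bandSub k.isLt hh
    simpa [mul_assoc] using this
  · intro hh
    have := conj_mem_bandSub' k.isLt hh
    have e : ((σB (k:ℕ) : Braid n))⁻¹ * (σB (k:ℕ) * h * (σB (k:ℕ))⁻¹) * σB (k:ℕ) = h := by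
      group
    rw [← e]
    exact conj_mem_bandSub' k.isLt (by simpa [mul_assoc] using hh)

end BandSubgroup

end Stmt18


namespace Stmt18

section CoxeterCard

variable {G : Type*} [Group G]

/-- The descending word `g k * g (k-1) * ⋯ * g t`. -/
def uWord (g : ℕ → G) (k t : ℕ) : G := ((List.range' t (k+1-t)).reverse.map g).prod

theorem uWord_top (g : ℕ → G) (k : ℕ) : uWord g k (k+1) = 1 := by
  simp [uWord]

theorem uWord_succ (g : ℕ → G) {k t : ℕ} (ht : t ≤ k) :
    uWord g k t = uWord g k (t+1) * g t := by
  have h1 : k + 1 - t = (k - t) + 1 := by omega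
  have h2 : k + 1 - (t+1) = k - t := by omega
  rw [uWord, uWord, h1, h2, List.range'_succ]
  simp

variable {g : ℕ → G} {N : ℕ}
variable (hsq : ∀ i, i < N → g i * g i = 1)
    (hbr : ∀ i, i + 1 < N → g i * g (i+1) * g i = g (i+1) * g i * g (i+1))
    (hcm : ∀ i j, i + 1 < j → j < N → g i * g j = g j * g i)

include hcm in
theorem commute_g_prod {a : ℕ} : ∀ (len s : ℕ), a + 2 ≤ s → s + len ≤ N →
    Commute (g a) (((List.range' s len).reverse.map g).prod) := by
  intro len
  induction len with
  | zero => intro s _ _; simp [Commute.one_right]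
  | succ len ih =>
      intro s hs hN
      rw [List.range'_succ]
      simp only [List.reverse_cons, List.map_append, List.map_cons, List.map_nil,
        List.prod_append, List.prod_cons, List.prod_nil, mul_one]
      exact Commute.mul_right (ih (s+1) (by omega) (by omega)) (hcm a s (by omega) (by omega))

include hcm in
theorem commute_g_u {k a t : ℕ} (ht : a + 2 ≤ t) (htk : t ≤ k + 1) (hkN : k < N) :
    Commute (g a) (uWord g k t) :=
  commute_g_prod hcm _ _ ht (by omega)

include hbr hcm in
theorem uWord_shift {k b : ℕ} (hb : b + 1 ≤ k) (hkN : k < N) :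
    ∀ r t, t + r = b → uWord g k t * g (b+1) = g b * uWord g k t := by
  intro r
  induction r with
  | zero =>
      intro t ht
      have htb : t = b := by omega
      subst htb
      rw [uWord_succ g (show t ≤ k by omega), uWord_succ g (show t + 1 ≤ k by omega)]
      have hcom : Commute (g t) (uWord g k (t+2)) := commute_g_u hcm (by omega) (by omega) hkN
      calc uWord g k (t+1+1) * g (t+1) * g t * g (t+1)
          = uWord g k (t+2) * (g (t+1) * g t * g (t+1)) := by group
        _ = uWord g k (t+2) * (g t * g (t+1) * g t) := by rw [← hbr t (by omega)]
        _ = uWord g k (t+2) * g t * (g (t+1) * g t) := by group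
        _ = g t * uWord g k (t+2) * (g (t+1) * g t) := by rw [← hcom.eq]
        _ = g t * (uWord g k (t+1+1) * g (t+1) * g t) := by group
  | succ r ih =>
      intro t ht
      rw [uWord_succ g (show t ≤ k by omega)]
      calc uWord g k (t+1) * g t * g (b+1)
          = uWord g k (t+1) * (g t * g (b+1)) := by group
        _ = uWord g k (t+1) * (g (b+1) * g t) := by rw [hcm t (b+1) (by omega) (by omega)]
        _ = (uWord g k (t+1) * g (b+1)) * g t := by group
        _ = (g b * uWord g k (t+1)) * g t := by rw [ih (t+1) (by omega)]
        _ = g b * (uWord g k (t+1) * g t) := by group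

include hsq hbr hcm in
theorem mem_coset_form {k : ℕ} (hkN : k < N) {x : G}
    (hx : x ∈ Subgroup.closure (g '' Set.Iio (k+1))) :
    ∃ (t : ℕ) (h : G), t ≤ k + 1 ∧ h ∈ Subgroup.closure (g '' Set.Iio k) ∧
      x = h * uWord g k t := by
  induction hx using Subgroup.closure_induction_right with
  | one => exact ⟨k+1, 1, le_refl _, one_mem _, by rw [uWord_top, mul_one]⟩
  | mul_right x hx y hy ih =>
      obtain ⟨a, ha, rfl⟩ := hy
      have ha' : a < k + 1 := ha
      obtain ⟨t, h, ht, hh, rfl⟩ := ih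
      rcases Nat.lt_trichotomy (a+1) t with h1 | h1 | h1
      · refine ⟨t, h * g a, ht, mul_mem hh (Subgroup.subset_closure ⟨a, by
          simp only [Set.mem_Iio]; omega, rfl⟩), ?_⟩
        rw [mul_assoc, mul_assoc, ← (commute_g_u hcm (show a + 2 ≤ t by omega) ht hkN).eq]
      · refine ⟨a, h, by omega, hh, ?_⟩
        rw [uWord_succ g (show a ≤ k by omega), ← h1, mul_assoc]
      · rcases Nat.eq_or_lt_of_le (Nat.le_of_lt_succ h1) with h2 | h2
        · refine ⟨t+1, h, by omega, hh, ?_⟩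
          rw [uWord_succ g (show t ≤ k by omega)]
          rw [← h2, mul_assoc, mul_assoc, hsq t (by omega), mul_one]
        · obtain ⟨b, rfl⟩ : ∃ b, a = b + 1 := ⟨a - 1, by omega⟩
          refine ⟨t, h * g b, ht, mul_mem hh (Subgroup.subset_closure ⟨b, by
            simp only [Set.mem_Iio]; omega, rfl⟩), ?_⟩
          rw [mul_assoc, uWord_shift hbr hcm (show b + 1 ≤ k by omega) hkN (b - t) t (by omega),
            mul_assoc]
  | mul_inv_cancel x hx y hy ih =>
      obtain ⟨a, ha, rfl⟩ := hy
      have ha' : a < k + 1 := ha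
      have hinv : (g a)⁻¹ = g a := inv_eq_of_mul_eq_one_right (hsq a (by omega))
      rw [hinv]
      obtain ⟨t, h, ht, hh, rfl⟩ := ih
      rcases Nat.lt_trichotomy (a+1) t with h1 | h1 | h1
      · refine ⟨t, h * g a, ht, mul_mem hh (Subgroup.subset_closure ⟨a, by
          simp only [Set.mem_Iio]; omega, rfl⟩), ?_⟩
        rw [mul_assoc, mul_assoc, ← (commute_g_u hcm (show a + 2 ≤ t by omega) ht hkN).eq]
      · refine ⟨a, h, by omega, hh, ?_⟩
        rw [uWord_succ g (show a ≤ k by omega), ← h1, mul_assoc]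
      · rcases Nat.eq_or_lt_of_le (Nat.le_of_lt_succ h1) with h2 | h2
        · refine ⟨t+1, h, by omega, hh, ?_⟩
          rw [uWord_succ g (show t ≤ k by omega)]
          rw [← h2, mul_assoc, mul_assoc, hsq t (by omega), mul_one]
        · obtain ⟨b, rfl⟩ : ∃ b, a = b + 1 := ⟨a - 1, by omega⟩
          refine ⟨t, h * g b, ht, mul_mem hh (Subgroup.subset_closure ⟨b, by
            simp only [Set.mem_Iio]; omega, rfl⟩), ?_⟩
          rw [mul_assoc, uWord_shift hbr hcm (show b + 1 ≤ k by omega) hkN (b - t) t (by omega),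
            mul_assoc]

include hsq hbr hcm in
theorem coxeter_finite : ∀ k : ℕ, k ≤ N →
    ((Subgroup.closure (g '' Set.Iio k) : Subgroup G) : Set G).Finite ∧
      Nat.card (Subgroup.closure (g '' Set.Iio k)) ≤ (k+1).factorial := by
  intro k
  induction k with
  | zero =>
      intro _
      have he : g '' Set.Iio 0 = ∅ := by
        have : (Set.Iio 0 : Set ℕ) = ∅ := by ext x; simp
        rw [this, Set.image_empty]
      rw [he, Subgroup.closure_empty]
      constructor
      · simp only [Subgroup.coe_bot]
        exact Set.finite_singleton 1
      · rw [Subgroup.card_bot]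
        simp
  | succ k ih =>
      intro hkN
      obtain ⟨ih1, ih2⟩ := ih (by omega)
      haveI : Finite (Subgroup.closure (g '' Set.Iio k) : Subgroup G) := ih1.to_subtype
      set H := Subgroup.closure (g '' Set.Iio k) with hH
      set K := Subgroup.closure (g '' Set.Iio (k+1)) with hK
      set f : Fin (k+2) × H → G := fun p => (p.2 : G) * uWord g k (p.1 : ℕ) with hf
      have hsub : (K : Set G) ⊆ Set.range f := by
        intro x hx
        obtain ⟨t, h, ht, hh, rfl⟩ := mem_coset_form hsq hbr hcm (by omega) hx
        exact ⟨(⟨t, by omega⟩, ⟨h, hh⟩), rfl⟩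
      have hfr : (Set.range f).Finite := Set.finite_range f
      constructor
      · exact hfr.subset hsub
      · calc Nat.card K = (K : Set G).ncard := Nat.card_coe_set_eq _
          _ ≤ (Set.range f).ncard := Set.ncard_le_ncard hsub hfr
          _ = Nat.card (Set.range f) := (Nat.card_coe_set_eq _).symm
          _ ≤ Nat.card (Fin (k+2) × H) :=
              Nat.card_le_card_of_surjective _ Set.rangeFactorization_surjective
          _ = (k+2) * Nat.card H := by
              rw [Nat.card_prod, Nat.card_eq_fintype_card (α := Fin (k+2)), Fintype.card_fin]
          _ ≤ (k+2) * (k+1).factorial := Nat.mul_le_mul_left _ ih2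
          _ = (k+2).factorial := (Nat.factorial_succ (k+1)).symm

end CoxeterCard

end Stmt18


namespace Stmt18

section CoxeterBraid

def coxRels (n : ℕ) : Set (FreeGroup (Fin n)) :=
  braidRels n ∪ {r | ∃ i : Fin n, r = FreeGroup.of i * FreeGroup.of i}

abbrev CoxP (n : ℕ) := PresentedGroup (coxRels n)

theorem braidPerm_mk (n : ℕ) (w : FreeGroup (Fin n)) :
    braidPerm n (PresentedGroup.mk _ w) =
      FreeGroup.lift (fun i : Fin n => Equiv.swap i.castSucc i.succ) w := rfl

def coxPerm (n : ℕ) : CoxP n →* Equiv.Perm (Fin (n+1)) :=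
  PresentedGroup.toGroup (f := fun i => Equiv.swap i.castSucc i.succ) (by
    rintro r (hr | ⟨i, rfl⟩)
    · rw [← braidPerm_mk n r, rel_one hr, map_one]
    · rw [map_mul, FreeGroup.lift_apply_of, Equiv.swap_mul_self])

theorem coxPerm_of (n : ℕ) (i : Fin n) :
    coxPerm n (PresentedGroup.of i) = Equiv.swap i.castSucc i.succ :=
  PresentedGroup.toGroup.of _

theorem lift_of_eq_mk {α : Type*} (rels : Set (FreeGroup α)) (w : FreeGroup α) :
    FreeGroup.lift (fun a => (PresentedGroup.of a : PresentedGroup rels)) w =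
      PresentedGroup.mk rels w := by
  have h : FreeGroup.lift (fun a => (PresentedGroup.of a : PresentedGroup rels)) =
      PresentedGroup.mk rels := by
    ext a
    simp [FreeGroup.lift_apply_of]
    rfl
  exact DFunLike.congr_fun h w

def toCox (n : ℕ) : Braid n →* CoxP n :=
  PresentedGroup.toGroup (f := fun i => PresentedGroup.of i) (by
    intro r hr
    rw [lift_of_eq_mk]
    exact rel_one (Set.mem_union_left _ hr))

theorem braidPerm_of (n : ℕ) (x : Fin n) :
    braidPerm n (PresentedGroup.of x) = Equiv.swap x.castSucc x.succ := by
  unfold braidPerm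
  exact PresentedGroup.toGroup.of _

theorem coxPerm_comp (n : ℕ) : (coxPerm n).comp (toCox n) = braidPerm n := by
  refine PresentedGroup.ext fun x => ?_
  show coxPerm n (toCox n (PresentedGroup.of x)) = braidPerm n (PresentedGroup.of x)
  rw [show toCox n (PresentedGroup.of x) = PresentedGroup.of x from
    PresentedGroup.toGroup.of _, coxPerm_of, braidPerm_of]

def gC (n : ℕ) (i : ℕ) : CoxP n := if h : i < n then PresentedGroup.of ⟨i, h⟩ else 1

theorem gC_sq {n i : ℕ} (h : i < n) : gC n i * gC n i = 1 := by
  have hr : (FreeGroup.of (⟨i, h⟩ : Fin n) * FreeGroup.of (⟨i, h⟩ : Fin n)) ∈ coxRels n :=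
    Set.mem_union_right _ ⟨⟨i, h⟩, rfl⟩
  have h1 := rel_one hr
  rw [map_mul] at h1
  simp only [gC, h, dif_pos]
  exact h1

theorem gC_braid {n i : ℕ} (h : i + 1 < n) :
    gC n i * gC n (i+1) * gC n i = gC n (i+1) * gC n i * gC n (i+1) := by
  have hi : i < n := by omega
  have hr : (FreeGroup.of (⟨i, hi⟩ : Fin n) * FreeGroup.of (⟨i+1, h⟩ : Fin n) *
      FreeGroup.of (⟨i, hi⟩ : Fin n) *
      (FreeGroup.of (⟨i+1, h⟩ : Fin n) * FreeGroup.of (⟨i, hi⟩ : Fin n) *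
       FreeGroup.of (⟨i+1, h⟩ : Fin n))⁻¹) ∈ coxRels n :=
    Set.mem_union_left _ (Or.inr ⟨⟨i, hi⟩, ⟨i+1, h⟩, rfl, rfl⟩)
  have h1 := rel_one hr
  rw [map_mul, map_inv, map_mul, map_mul] at h1
  simp only [gC, hi, h, dif_pos]
  exact braid_of_rel h1

theorem gC_comm {n i j : ℕ} (hij : i + 1 < j) (hj : j < n) :
    gC n i * gC n j = gC n j * gC n i := by
  have hi : i < n := by omega
  have hr : (FreeGroup.of (⟨i, hi⟩ : Fin n) * FreeGroup.of (⟨j, hj⟩ : Fin n) *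
      (FreeGroup.of (⟨i, hi⟩ : Fin n))⁻¹ * (FreeGroup.of (⟨j, hj⟩ : Fin n))⁻¹) ∈ coxRels n :=
    Set.mem_union_left _ (Or.inl ⟨⟨i, hi⟩, ⟨j, hj⟩, hij, rfl⟩)
  have h1 := rel_one hr
  rw [map_mul, map_mul, map_mul, map_inv, map_inv] at h1
  simp only [gC, hi, hj, dif_pos]
  exact comm_of_rel h1

theorem gC_image (n : ℕ) :
    gC n '' Set.Iio n = Set.range (PresentedGroup.of : Fin n → CoxP n) := by
  ext x
  constructor
  · rintro ⟨i, hi, rfl⟩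
    have hi' : i < n := hi
    exact ⟨⟨i, hi'⟩, by simp [gC, hi']⟩
  · rintro ⟨⟨i, hi⟩, rfl⟩
    exact ⟨i, hi, by simp [gC, hi]⟩

theorem coxP_finite (n : ℕ) : Finite (CoxP n) ∧ Nat.card (CoxP n) ≤ (n+1).factorial := by
  have h := coxeter_finite (g := gC n) (N := n)
    (fun i hi => gC_sq hi) (fun i hi => gC_braid hi) (fun i j hij hj => gC_comm hij hj)
    n le_rfl
  rw [gC_image, PresentedGroup.closure_range_of] at h
  constructor
  · have h1 := h.1
    rw [Subgroup.coe_top] at h1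
    exact Set.finite_univ_iff.mp h1
  · have h2 := h.2
    rwa [Nat.card_congr Subgroup.topEquiv.toEquiv] at h2

theorem coxPerm_surjective (n : ℕ) : Function.Surjective (coxPerm n) := by
  have adj : ∀ (a : ℕ), a < n → ∀ (x y : Fin (n+1)), (x : ℕ) = a → (y : ℕ) = a + 1 →
      Equiv.swap x y ∈ (coxPerm n).range := by
    intro a h x y hx hy
    refine ⟨PresentedGroup.of ⟨a, h⟩, ?_⟩
    rw [coxPerm_of]
    congr 1
    · exact Fin.ext (by simpa using hx.symm)
    · exact Fin.ext (by simpa using hy.symm)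
  have hswap : ∀ (d a : ℕ), a + d ≤ n → 1 ≤ d → ∀ (x y : Fin (n+1)),
      (x : ℕ) = a → (y : ℕ) = a + d → Equiv.swap x y ∈ (coxPerm n).range := by
    intro d
    induction d with
    | zero => intro a _ h; omega
    | succ d ih =>
        intro a ha _ x y hx hy
        rcases Nat.eq_zero_or_pos d with hd | hd
        · subst hd
          exact adj a (by omega) x y hx hy
        · set z : Fin (n+1) := ⟨a + d, by omega⟩ with hz
          set w : Fin (n+1) := ⟨a + d + 1, by omega⟩ with hw
          have hyw : y = w := Fin.ext (by simp only [hw, hy]; omega)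
          have hfx : Equiv.swap z w x = x := by
            apply Equiv.swap_apply_of_ne_of_ne <;>
              · intro hc
                rw [Fin.ext_iff] at hc
                simp only [hx, hz, hw] at hc
                omega
          have hfz : Equiv.swap z w z = w := Equiv.swap_apply_left _ _
          have key : Equiv.swap x y =
              Equiv.swap z w * Equiv.swap x z * (Equiv.swap z w)⁻¹ := by
            have h0 := Equiv.swap_apply_apply (Equiv.swap z w) x z
            rw [hfx, hfz] at h0
            rw [hyw]
            exact h0
          rw [key]
          have h1 : Equiv.swap z w ∈ (coxPerm n).range :=
            adj (a + d) (by omega) z w rfl rfl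
          have h2 : Equiv.swap x z ∈ (coxPerm n).range :=
            ih a (by omega) hd x z hx rfl
          exact mul_mem (mul_mem h1 h2) (inv_mem h1)
  have htop : (⊤ : Subgroup (Equiv.Perm (Fin (n+1)))) ≤ (coxPerm n).range := by
    rw [← Equiv.Perm.closure_isSwap, Subgroup.closure_le]
    rintro σ ⟨x, y, hxy, rfl⟩
    have hne : (x : ℕ) ≠ (y : ℕ) := fun hc => hxy (Fin.ext hc)
    rcases Nat.lt_or_ge (x : ℕ) (y : ℕ) with h | h
    · exact hswap ((y:ℕ) - (x:ℕ)) (x:ℕ) (by omega) (by omega) x y rfl (by omega)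
    · rw [Equiv.swap_comm]
      exact hswap ((x:ℕ) - (y:ℕ)) (y:ℕ) (by omega) (by omega) y x rfl (by omega)
  intro π
  obtain ⟨u, hu⟩ := htop (Subgroup.mem_top π)
  exact ⟨u, hu⟩

theorem coxPerm_injective (n : ℕ) : Function.Injective (coxPerm n) := by
  obtain ⟨hfin, hcard⟩ := coxP_finite n
  haveI := hfin
  have hcardPerm : Nat.card (Equiv.Perm (Fin (n+1))) = (n+1).factorial := by
    rw [Nat.card_eq_fintype_card, Fintype.card_perm, Fintype.card_fin]
  have hbij : Function.Bijective (coxPerm n) :=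
    (Nat.bijective_iff_surjective_and_card _).2 ⟨coxPerm_surjective n,
      le_antisymm (by rw [hcardPerm]; exact hcard)
        (Nat.card_le_card_of_surjective _ (coxPerm_surjective n))⟩
  exact hbij.1

theorem ker_braidPerm_le_bandSub {n : ℕ} {x : Braid n} (hx : braidPerm n x = 1) :
    x ∈ bandSub n := by
  haveI : (bandSub n).Normal := bandSub_normal
  have hlift : FreeGroup.lift
      (fun i : Fin n => ((PresentedGroup.of i : Braid n) : Braid n ⧸ bandSub n)) =
      (QuotientGroup.mk' (bandSub n)).comp (PresentedGroup.mk (braidRels n)) := by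
    ext a
    rfl
  have hrels : ∀ r ∈ coxRels n, FreeGroup.lift
      (fun i : Fin n => ((PresentedGroup.of i : Braid n) : Braid n ⧸ bandSub n)) r = 1 := by
    rintro r (hr | ⟨i, rfl⟩)
    · rw [DFunLike.congr_fun hlift r]
      show ((PresentedGroup.mk (braidRels n) r : Braid n) : Braid n ⧸ bandSub n) = 1
      rw [rel_one hr]
      rfl
    · rw [map_mul, FreeGroup.lift_apply_of]
      show ((PresentedGroup.of i * PresentedGroup.of i : Braid n) : Braid n ⧸ bandSub n) = 1
      rw [QuotientGroup.eq_one_iff]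
      have := σB_sq_mem (n := n) i.isLt
      rwa [σB_eq_of _ i.isLt] at this
  let χ : CoxP n →* Braid n ⧸ bandSub n := PresentedGroup.toGroup hrels
  have hcomp : (QuotientGroup.mk' (bandSub n)) = χ.comp (toCox n) := by
    refine PresentedGroup.ext fun i => ?_
    show ((PresentedGroup.of i : Braid n) : Braid n ⧸ bandSub n) = χ (toCox n (PresentedGroup.of i))
    rw [show toCox n (PresentedGroup.of i) = PresentedGroup.of i from
      PresentedGroup.toGroup.of _]
    exact (PresentedGroup.toGroup.of hrels).symm
  have h2 : toCox n x = 1 := by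
    apply coxPerm_injective n
    rw [map_one]
    have := DFunLike.congr_fun (coxPerm_comp n) x
    simp only [MonoidHom.comp_apply] at this
    rw [this, hx]
  have h3 : QuotientGroup.mk' (bandSub n) x = 1 := by
    rw [hcomp]
    simp only [MonoidHom.comp_apply, h2, map_one]
  rwa [← QuotientGroup.eq_one_iff]

end CoxeterBraid



end Stmt18


namespace Stmt18

section Deletion

variable (n : ℕ)

/-- The permutation action on tuples of braids. -/
def permAct : Equiv.Perm (Fin (n+2)) →* MulAut (Fin (n+2) → Braid n) where
  toFun π := MulEquiv.arrowCongr π (MulEquiv.refl _)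
  map_one' := by ext f m; rfl
  map_mul' := by intro π ρ; ext f m; rfl

theorem permAct_apply (π : Equiv.Perm (Fin (n+2))) (f : Fin (n+2) → Braid n) (m : Fin (n+2)) :
    permAct n π f m = f (π⁻¹ m) := rfl

abbrev Wr := (Fin (n+2) → Braid n) ⋊[permAct n] Equiv.Perm (Fin (n+2))

/-- Strand-deletion data on `ℕ`-indices. -/
def Fg (k : ℕ) : ℕ → Braid n := fun v => if v = k ∨ v = k + 1 then 1 else σB (dl v k)

/-- Action of the transposition `(k, k+1)` on `ℕ`. -/
def sv (k v : ℕ) : ℕ := if v = k then k + 1 else if v = k + 1 then k else v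

variable {n}

theorem Fg_one {k v : ℕ} (h : v = k ∨ v = k + 1) : Fg n k v = 1 := if_pos h

theorem Fg_σ {k v : ℕ} (h : ¬(v = k ∨ v = k + 1)) : Fg n k v = σB (dl v k) := if_neg h

theorem sv1 {k v : ℕ} (h : v = k) : sv k v = k + 1 := by unfold sv; rw [if_pos h]

theorem sv2 {k v : ℕ} (h : v = k + 1) : sv k v = k := by
  unfold sv; rw [if_neg (by omega), if_pos h]

theorem sv3 {k v : ℕ} (h1 : v ≠ k) (h2 : v ≠ k + 1) : sv k v = v := by
  unfold sv; rw [if_neg h1, if_neg h2]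

theorem dl_lt {m x : ℕ} (h : x < m) : dl m x = x := if_pos h

theorem dl_ge {m x : ℕ} (h : ¬ x < m) : dl m x = x - 1 := if_neg h

theorem σB_braid' {a b : ℕ} (hab : b = a + 1) (h : b < n) :
    (σB a : Braid n) * σB b * σB a = σB b * σB a * σB b := by
  subst hab; exact σB_braid h

theorem Fcomm {i j v : ℕ} (hij : i + 1 < j) (hj : j < n + 1) (hv : v < n + 2) :
    Fg n i v * Fg n j (sv i v) = Fg n j v * Fg n i (sv j v) := by
  by_cases h1 : v = i
  · rw [Fg_one (Or.inl h1), sv1 h1, sv3 (by omega) (by omega), Fg_one (Or.inl h1),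
      Fg_σ (by omega), Fg_σ (by omega), dl_ge (by omega), dl_ge (by omega),
      one_mul, mul_one]
  · by_cases h2 : v = i + 1
    · rw [Fg_one (Or.inr h2), sv2 h2, sv3 (by omega) (by omega), Fg_one (Or.inr h2),
        Fg_σ (by omega), Fg_σ (by omega), dl_ge (by omega), dl_ge (by omega),
        one_mul, mul_one]
    · by_cases h3 : v = j
      · rw [Fg_one (Or.inl h3), sv1 h3, sv3 (by omega) (by omega), Fg_one (Or.inl h3),
          Fg_σ (by omega), Fg_σ (by omega), dl_lt (by omega), dl_lt (by omega),
          one_mul, mul_one]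
      · by_cases h4 : v = j + 1
        · rw [Fg_one (Or.inr h4), sv2 h4, sv3 (by omega) (by omega), Fg_one (Or.inr h4),
            Fg_σ (by omega), Fg_σ (by omega), dl_lt (by omega), dl_lt (by omega),
            one_mul, mul_one]
        · rw [sv3 h1 h2, sv3 h3 h4, Fg_σ (by omega), Fg_σ (by omega)]
          have hc : Commute (σB (dl v i) : Braid n) (σB (dl v j)) := by
            apply σB_commute
            unfold dl
            split_ifs <;> omega
          exact hc.eq

theorem Fbraid {i v : ℕ} (hi : i + 1 < n + 1) (hv : v < n + 2) :
    Fg n i v * Fg n (i+1) (sv i v) * Fg n i (sv (i+1) (sv i v)) =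
      Fg n (i+1) v * Fg n i (sv (i+1) v) * Fg n (i+1) (sv i (sv (i+1) v)) := by
  by_cases h1 : v = i
  · subst h1
    rw [show sv (v+1) v = v from sv3 (by omega) (by omega), sv1 rfl,
      show sv (v+1) (v+1) = v+2 from sv1 rfl,
      Fg_one (Or.inl rfl), show Fg n (v+1) (v+1) = 1 from Fg_one (Or.inl rfl),
      Fg_σ (show ¬(v+2 = v ∨ v+2 = v+1) by omega),
      Fg_σ (show ¬(v = v+1 ∨ v = v+1+1) by omega),
      dl_lt (by omega), dl_ge (by omega), one_mul, one_mul, mul_one, mul_one]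
    congr 1 <;> omega
  · by_cases h2 : v = i + 1
    · subst h2
      set w := i + 1 with hw
      rw [sv2 hw, show sv w w = w + 1 from sv1 rfl,
        show sv w i = i from sv3 (by omega) (by omega),
        show sv i (w+1) = w+1 from sv3 (by omega) (by omega),
        Fg_one (Or.inr hw), show Fg n w w = 1 from Fg_one (Or.inl rfl),
        show Fg n i i = 1 from Fg_one (Or.inl rfl),
        show Fg n w (w+1) = 1 from Fg_one (Or.inr rfl),
        Fg_σ (show ¬(i = w ∨ i = w + 1) by omega),
        Fg_σ (show ¬(w+1 = i ∨ w+1 = i+1) by omega),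
        dl_ge (by omega), dl_lt (by omega), one_mul, one_mul, mul_one, mul_one]
      congr 1 <;> omega
    · by_cases h3 : v = i + 2
      · subst h3
        set w := i + 2 with hw
        rw [show sv i w = w from sv3 (by omega) (by omega),
          show sv (i+1) w = i+1 from sv2 (by omega),
          show sv i (i+1) = i from sv2 rfl,
          Fg_σ (show ¬(w = i ∨ w = i + 1) by omega),
          show Fg n (i+1) w = 1 from Fg_one (Or.inr (by omega)),
          show Fg n i (i+1) = 1 from Fg_one (Or.inr rfl),
          show Fg n (i+1) i = σB (dl i (i+1)) from Fg_σ (by omega),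
          dl_lt (by omega), dl_ge (by omega), one_mul, one_mul, mul_one, mul_one]
        congr 1 <;> omega
      · simp only [sv3 h1 h2, sv3 h2 (show v ≠ i + 1 + 1 by omega)]
        rw [Fg_σ (show ¬(v = i ∨ v = i+1) by omega),
          Fg_σ (show ¬(v = i + 1 ∨ v = i + 1 + 1) by omega)]
        have hab : dl v (i+1) = dl v i + 1 := by unfold dl; split_ifs <;> omega
        have hb : dl v (i+1) < n := by unfold dl; split_ifs <;> omega
        exact σB_braid' hab hb

def fGen (k : ℕ) : Fin (n+2) → Braid n := fun m => Fg n k (m : ℕ)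

def sGen (k : Fin (n+1)) : Equiv.Perm (Fin (n+2)) := Equiv.swap k.castSucc k.succ

def ΘGen (k : Fin (n+1)) : Wr n := ⟨fGen (k : ℕ), sGen k⟩

theorem swap_val {a : Fin (n+1)} {m : Fin (n+2)} :
    ((sGen (n := n) a) m : ℕ) = sv (a : ℕ) (m : ℕ) := by
  unfold sGen
  by_cases h1 : (m : ℕ) = (a : ℕ)
  · have hm : m = a.castSucc := Fin.ext (by simpa using h1)
    rw [hm, Equiv.swap_apply_left, sv1 (show ((a.castSucc : Fin (n+2)) : ℕ) = (a : ℕ) by simp)]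
    simp
  · by_cases h2 : (m : ℕ) = (a : ℕ) + 1
    · have hm : m = a.succ := Fin.ext (by simpa using h2)
      rw [hm, Equiv.swap_apply_right, sv2 (show ((a.succ : Fin (n+2)) : ℕ) = (a : ℕ) + 1 by simp)]
      simp
    · rw [Equiv.swap_apply_of_ne_of_ne
        (fun hc => h1 (by rw [hc]; simp))
        (fun hc => h2 (by rw [hc]; simp)), sv3 h1 h2]

theorem sGen_inv (a : Fin (n+1)) : (sGen (n := n) a)⁻¹ = sGen a :=
  Equiv.swap_inv _ _

theorem sGen_comm {i j : Fin (n+1)} (h : (i : ℕ) + 1 < (j : ℕ)) :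
    sGen (n := n) i * sGen j = sGen j * sGen i := by
  have h0 := congrArg (braidPerm (n+1)) (σB_comm (n := n+1) h j.isLt)
  rw [map_mul, map_mul, braidPerm_σB (show (i:ℕ) < n+1 from i.isLt),
    braidPerm_σB (show (j:ℕ) < n+1 from j.isLt)] at h0
  exact h0

theorem sGen_braid {i : Fin (n+1)} (h : (i : ℕ) + 1 < n + 1) :
    sGen (n := n) i * sGen ⟨(i:ℕ)+1, h⟩ * sGen i =
      sGen ⟨(i:ℕ)+1, h⟩ * sGen i * sGen ⟨(i:ℕ)+1, h⟩ := by
  have h0 := congrArg (braidPerm (n+1)) (σB_braid (n := n+1) (a := (i:ℕ)) h)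
  rw [map_mul, map_mul, map_mul, map_mul, braidPerm_σB (show (i:ℕ) < n+1 by omega),
    braidPerm_σB (show (i:ℕ)+1 < n+1 from h)] at h0
  exact h0

theorem ΘGen_rels : ∀ r ∈ braidRels (n+1), FreeGroup.lift (ΘGen (n := n)) r = 1 := by
  rintro r (⟨i, j, hij, rfl⟩ | ⟨i, j, hij, rfl⟩) <;>
    simp only [map_mul, map_inv, FreeGroup.lift_apply_of]
  · -- far commutation
    suffices h : ΘGen (n := n) i * ΘGen j = ΘGen j * ΘGen i by rw [h]; group
    apply SemidirectProduct.ext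
    · funext m
      show (ΘGen (n:=n) i * ΘGen j).left m = (ΘGen (n:=n) j * ΘGen i).left m
      simp only [SemidirectProduct.mul_left, Pi.mul_apply, ΘGen, permAct_apply]
      show fGen (i:ℕ) m * fGen (j:ℕ) ((sGen i)⁻¹ m) = fGen (j:ℕ) m * fGen (i:ℕ) ((sGen j)⁻¹ m)
      rw [sGen_inv, sGen_inv]
      unfold fGen
      rw [swap_val, swap_val]
      exact Fcomm hij j.isLt m.isLt
    · show (ΘGen (n:=n) i * ΘGen j).right = (ΘGen (n:=n) j * ΘGen i).right
      simp only [SemidirectProduct.mul_right, ΘGen]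
      exact sGen_comm hij
  · -- braid relation
    have hj : j = ⟨(i:ℕ)+1, by omega⟩ := Fin.ext (by simp [← hij])
    rw [hj]
    suffices h : ΘGen (n := n) i * ΘGen ⟨(i:ℕ)+1, by omega⟩ * ΘGen i =
        ΘGen ⟨(i:ℕ)+1, by omega⟩ * ΘGen i * ΘGen ⟨(i:ℕ)+1, by omega⟩ by rw [h]; group
    apply SemidirectProduct.ext
    · funext m
      set j' : Fin (n+1) := ⟨(i:ℕ)+1, by omega⟩ with hj'
      show (ΘGen (n:=n) i * ΘGen j' * ΘGen i).left m = (ΘGen (n:=n) j' * ΘGen i * ΘGen j').left m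
      simp only [SemidirectProduct.mul_left, SemidirectProduct.mul_right, Pi.mul_apply,
        ΘGen, permAct_apply]
      show fGen (i:ℕ) m * fGen (j':ℕ) ((sGen i)⁻¹ m) *
          fGen (i:ℕ) ((sGen i * sGen j')⁻¹ m) =
        fGen (j':ℕ) m * fGen (i:ℕ) ((sGen j')⁻¹ m) *
          fGen (j':ℕ) ((sGen j' * sGen i)⁻¹ m)
      rw [mul_inv_rev, mul_inv_rev, sGen_inv, sGen_inv]
      simp only [Equiv.Perm.mul_apply]
      unfold fGen
      rw [swap_val, swap_val, swap_val, swap_val, swap_val, swap_val]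
      have hjv : ((j' : Fin (n+1)) : ℕ) = (i : ℕ) + 1 := rfl
      rw [hjv]
      exact Fbraid (by omega) m.isLt
    · show (ΘGen (n:=n) i * _ * ΘGen i).right = _
      simp only [SemidirectProduct.mul_right, ΘGen]
      exact sGen_braid (by omega)

def Θ : Braid (n+1) →* Wr n := PresentedGroup.toGroup ΘGen_rels

theorem Θ_of (k : Fin (n+1)) : Θ (PresentedGroup.of k) = ΘGen (n := n) k :=
  PresentedGroup.toGroup.of _

theorem Θ_σB {k : ℕ} (h : k < n + 1) :
    Θ (σB k : Braid (n+1)) = ΘGen (n := n) ⟨k, h⟩ := by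
  rw [σB_eq_of k h, Θ_of]

theorem Θ_right (x : Braid (n+1)) :
    (Θ (n := n) x).right = braidPerm (n+1) x := by
  have h : (SemidirectProduct.rightHom.comp (Θ (n := n))) = braidPerm (n+1) := by
    refine PresentedGroup.ext fun k => ?_
    show ((Θ (n := n)) (PresentedGroup.of k)).right = braidPerm (n+1) (PresentedGroup.of k)
    rw [Θ_of, braidPerm_of]
    rfl
  exact DFunLike.congr_fun h x

theorem wr_mul_pure (f g : Fin (n+2) → Braid n) (s : Equiv.Perm (Fin (n+2))) :
    (⟨f, s⟩ : Wr n) * ⟨g, 1⟩ * (⟨f, s⟩ : Wr n)⁻¹ =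
      ⟨fun m => f m * g (s⁻¹ m) * (f m)⁻¹, 1⟩ := by
  apply SemidirectProduct.ext
  · funext m
    simp only [SemidirectProduct.mul_left, SemidirectProduct.mul_right,
      SemidirectProduct.inv_left, SemidirectProduct.inv_right, Pi.mul_apply,
      permAct_apply, Pi.inv_apply, mul_one, inv_inv, Equiv.Perm.coe_inv, Equiv.apply_symm_apply]
  · simp only [SemidirectProduct.mul_right, SemidirectProduct.inv_right, mul_one,
      mul_inv_cancel]

theorem wr_sq (f : Fin (n+2) → Braid n) (s : Equiv.Perm (Fin (n+2))) :
    (⟨f, s⟩ : Wr n) * ⟨f, s⟩ = ⟨fun m => f m * f (s⁻¹ m), s * s⟩ := by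
  apply SemidirectProduct.ext
  · funext m
    simp only [SemidirectProduct.mul_left, Pi.mul_apply, permAct_apply]
  · rfl

theorem Fg_sq {i v : ℕ} (hi : i < n + 1) (hv : v < n + 2) :
    Fg n i v * Fg n i (sv i v) =
      if v = i ∨ v = i + 1 then 1 else band n (dl v i) (dl v (i+1)) := by
  by_cases h1 : v = i
  · rw [if_pos (Or.inl h1), Fg_one (Or.inl h1), sv1 h1, Fg_one (Or.inr rfl), one_mul]
  · by_cases h2 : v = i + 1
    · rw [if_pos (Or.inr h2), Fg_one (Or.inr h2), sv2 h2, Fg_one (Or.inl rfl), one_mul]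
    · rw [if_neg (by omega), sv3 h1 h2, Fg_σ (by omega)]
      have hd : dl v (i+1) = dl v i + 1 := by unfold dl; split_ifs <;> omega
      rw [hd, band_base]

theorem Fg_step {i j v : ℕ} (hij : i < j) (hj : j < n + 1) (hv : v < n + 2) :
    Fg n j v * (if sv j v = i ∨ sv j v = j then 1
        else band n (dl (sv j v) i) (dl (sv j v) j)) * (Fg n j v)⁻¹ =
      if v = i ∨ v = j + 1 then 1 else band n (dl v i) (dl v (j+1)) := by
  by_cases h1 : v = j
  · rw [Fg_one (Or.inl h1), sv1 h1, if_neg (by omega), if_neg (by omega),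
      dl_lt (by omega), dl_lt (by omega), dl_lt (by omega), dl_ge (by omega),
      one_mul, inv_one, mul_one]
    congr 1 <;> omega
  · by_cases h2 : v = j + 1
    · rw [Fg_one (Or.inr h2), sv2 h2, if_pos (Or.inr rfl), if_pos (Or.inr h2),
        one_mul, one_mul, inv_one]
    · by_cases h3 : v = i
      · rw [sv3 h1 h2, if_pos (Or.inl h3), if_pos (Or.inl h3), mul_one, mul_inv_cancel]
      · rw [sv3 h1 h2, if_neg (by omega), if_neg (by omega), Fg_σ (by omega)]
        have hd : dl v (j+1) = dl v j + 1 := by unfold dl; split_ifs <;> omega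
        have hlt : dl v i < dl v j := by unfold dl; split_ifs <;> omega
        rw [hd, band_succ hlt]

theorem Θ_band {i j : ℕ} (hij : i < j) (hj : j ≤ n + 1) :
    Θ (band (n+1) i j) = (⟨fun m => if (m:ℕ) = i ∨ (m:ℕ) = j then 1
      else band n (dl (m:ℕ) i) (dl (m:ℕ) j), 1⟩ : Wr n) := by
  induction j, hij using Nat.le_induction with
  | base =>
      rw [band_base, map_mul, Θ_σB (show i < n+1 by omega), ΘGen, wr_sq]
      apply SemidirectProduct.ext
      · funext m
        show fGen (n := n) i m * fGen i ((sGen ⟨i, by omega⟩)⁻¹ m) = _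
        rw [sGen_inv]
        unfold fGen
        rw [swap_val]
        exact Fg_sq (by omega) m.isLt
      · show sGen (n := n) ⟨i, by omega⟩ * sGen ⟨i, by omega⟩ = 1
        unfold sGen
        exact Equiv.swap_mul_self _ _
  | succ j hij ih =>
      rw [band_succ (by omega), map_mul, map_mul, map_inv, ih (by omega),
        Θ_σB (show j < n+1 by omega), ΘGen, wr_mul_pure]
      apply SemidirectProduct.ext
      · funext m
        show fGen (n := n) j m * _ * (fGen (n := n) j m)⁻¹ = _
        rw [sGen_inv]
        unfold fGen
        rw [swap_val]
        exact Fg_step hij (by omega) m.isLt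
      · rfl

/-- The strand-deletion map on pure braids, valued in `Braid n`. -/
def pDel0 (m : Fin (n+2)) : PureBraid (n+1) →* Braid n where
  toFun x := (Θ (n := n) (x : Braid (n+1))).left m
  map_one' := by
    simp only [OneMemClass.coe_one, map_one, SemidirectProduct.one_left, Pi.one_apply]
  map_mul' x y := by
    have hx : braidPerm (n+1) (x : Braid (n+1)) = 1 := MonoidHom.mem_ker.mp x.2
    simp only [MulMemClass.coe_mul, map_mul, SemidirectProduct.mul_left,
      Pi.mul_apply, permAct_apply, Θ_right, hx, inv_one, Equiv.Perm.one_apply]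

theorem theta_left_pure {g : Braid (n+1)} (hg : g ∈ bandSub (n+1)) :
    braidPerm (n+1) g = 1 ∧
      ∀ m' : Fin (n+2), braidPerm n ((Θ (n := n) g).left m') = 1 := by
  induction hg using Subgroup.closure_induction with
  | mem x hx =>
      obtain ⟨i, j, hij, hj, rfl⟩ := hx
      refine ⟨band_perm hij hj, fun m' => ?_⟩
      rw [Θ_band hij hj]
      show braidPerm n (if ((m' : ℕ) = i ∨ (m' : ℕ) = j) then 1
        else band n (dl (m' : ℕ) i) (dl (m' : ℕ) j)) = 1
      split_ifs with h
      · exact map_one _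
      · have hm' : (m' : ℕ) < n + 2 := m'.isLt
        exact band_perm (by unfold dl; split_ifs <;> omega) (by unfold dl; split_ifs <;> omega)
  | one => exact ⟨map_one _, fun m' => by rw [map_one]; exact map_one _⟩
  | mul x y hx hy ihx ihy =>
      refine ⟨by rw [map_mul, ihx.1, ihy.1, mul_one], fun m' => ?_⟩
      rw [map_mul, SemidirectProduct.mul_left]
      simp only [Pi.mul_apply, permAct_apply, Θ_right, ihx.1, inv_one, Equiv.Perm.one_apply]
      rw [map_mul, ihx.2 m', ihy.2 m', mul_one]
  | inv x hx ihx =>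
      refine ⟨by rw [map_inv, ihx.1, inv_one], fun m' => ?_⟩
      rw [map_inv, SemidirectProduct.inv_left]
      simp only [Θ_right, ihx.1, inv_one, map_one, MulAut.one_apply, Pi.inv_apply]
      rw [map_inv, ihx.2 m', inv_one]

theorem pDel0_pure (m : Fin (n+2)) (x : PureBraid (n+1)) :
    braidPerm n (pDel0 m x) = 1 := by
  have hx : (x : Braid (n+1)) ∈ bandSub (n+1) :=
    ker_braidPerm_le_bandSub (MonoidHom.mem_ker.mp x.2)
  exact (theta_left_pure hx).2 m

/-- The strand-deletion homomorphism on pure braid groups. -/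
def pDel (m : Fin (n+2)) : PureBraid (n+1) →* PureBraid n :=
  (pDel0 m).codRestrict (PureBraid n) (fun x => MonoidHom.mem_ker.mpr (pDel0_pure m x))

theorem pDel_pCond (m' : ℕ) (hm : m' < n + 2) : pCond n m' (pDel ⟨m', hm⟩) := by
  intro i j hij hj x hx
  show (Θ (n := n) (x : Braid (n+1))).left ⟨m', hm⟩ = _
  rw [hx, Θ_band hij (by omega)]
  show (if (m' = i ∨ m' = j) then 1 else band n (dl m' i) (dl m' j)) = _
  by_cases h : i = m' ∨ j = m'
  · rw [if_pos (by omega), if_pos h]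
  · rw [if_neg (by omega), if_neg h]
    rfl

end Deletion

end Stmt18

namespace Stmt18

section Insertion

variable {n : ℕ}

/-- Insertion of a strand at position `m`: index shift. -/
def insIdx (m x : ℕ) : ℕ := if x < m then x else x + 1

/-- The image of the generator `σ_k` under insertion of a trivial strand at position `m`. -/
def iw (m k : ℕ) : Braid (n+1) :=
  if k + 1 < m then σB k
  else if k + 1 = m then σB m * σB (m-1) * (σB m)⁻¹
  else σB (k+1)

theorem iw1 {m k : ℕ} (h : k + 1 < m) : (iw m k : Braid (n+1)) = σB k := if_pos h

theorem iw2 {m k : ℕ} (h : k + 1 = m) :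
    (iw m k : Braid (n+1)) = σB m * σB (m-1) * (σB m)⁻¹ := by
  unfold iw; rw [if_neg (by omega), if_pos h]

theorem iw3 {m k : ℕ} (h1 : ¬ k + 1 < m) (h2 : k + 1 ≠ m) :
    (iw m k : Braid (n+1)) = σB (k+1) := by
  unfold iw; rw [if_neg h1, if_neg h2]

theorem comm3r {G : Type*} [Group G] {x u v : G} (h1 : Commute x u) (h2 : Commute x v) :
    Commute x (u * v * u⁻¹) :=
  (h1.mul_right h2).mul_right h1.inv_right

theorem iw_commute {m i j : ℕ} (hij : i + 1 < j) (hj : j < n) :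
    Commute (iw m i : Braid (n+1)) (iw m j) := by
  unfold iw
  split_ifs <;>
    first
      | (exfalso; omega)
      | exact σB_commute (by omega)
      | exact comm3r (σB_commute (by omega)) (σB_commute (by omega))
      | exact (comm3r (σB_commute (by omega)) (σB_commute (by omega))).symm

theorem iw_rels (m : ℕ) :
    ∀ r ∈ braidRels n, FreeGroup.lift (fun k : Fin n => (iw m (k : ℕ) : Braid (n+1))) r = 1 := by
  rintro r (⟨i, j, hij, rfl⟩ | ⟨i, j, hij, rfl⟩) <;>
    simp only [map_mul, map_inv, FreeGroup.lift_apply_of]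
  · have h := (iw_commute (m := m) hij j.isLt).eq
    rw [h]; group
  · suffices h : (iw m (i:ℕ) : Braid (n+1)) * iw m (j:ℕ) * iw m (i:ℕ) =
        iw m (j:ℕ) * iw m (i:ℕ) * iw m (j:ℕ) by rw [h]; group
    have hj : (j : ℕ) = (i : ℕ) + 1 := hij.symm
    have hjn : (j : ℕ) < n := j.isLt
    rw [hj] at *
    rcases Nat.lt_trichotomy ((i:ℕ) + 2) m with h1 | h1 | h1
    · rw [iw1 (by omega), iw1 (by omega)]
      exact σB_braid' rfl (by omega)
    · rw [iw1 (by omega), iw2 (by omega)]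
      exact ins_braid2 (σB_commute (Or.inl (by omega))).eq
        (σB_braid' (by omega) (by omega))
    · rcases Nat.lt_trichotomy ((i:ℕ) + 1) m with h2 | h2 | h2
      · omega
      · rw [iw2 (by omega), iw3 (by omega) (by omega)]
        exact ins_braid1 (σB_braid' (by omega) (by omega))
          (σB_commute (Or.inl (by omega))).eq (σB_braid' (by omega) (by omega))
      · rw [iw3 (by omega) (by omega), iw3 (by omega) (by omega)]
        exact σB_braid' rfl (by omega)

/-- Insertion of a trivial strand at position `m`. -/
def ι (m : ℕ) : Braid n →* Braid (n+1) :=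
  PresentedGroup.toGroup (iw_rels m)

theorem ι_σB {m k : ℕ} (h : k < n) : ι m (σB k : Braid n) = iw m k := by
  rw [σB_eq_of k h]
  exact PresentedGroup.toGroup.of _

theorem insIdx_lt {m x : ℕ} (h : x < m) : insIdx m x = x := if_pos h
theorem insIdx_ge {m x : ℕ} (h : ¬ x < m) : insIdx m x = x + 1 := if_neg h

theorem ι_band {m a b : ℕ} (hab : a < b) (hb : b ≤ n) :
    ι m (band n a b) = band (n+1) (insIdx m a) (insIdx m b) := by
  induction b, hab using Nat.le_induction with
  | base =>
      rw [band_base, map_mul, ι_σB (by omega)]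
      rcases Nat.lt_trichotomy (a + 1) m with h1 | h1 | h1
      · rw [iw1 h1, insIdx_lt (by omega), insIdx_lt (by omega), band_base]
      · rw [iw2 h1, insIdx_lt (by omega), insIdx_ge (by omega)]
        have hm1 : m - 1 = a := by omega
        have : a + 1 + 1 = a + 1 + 1 := rfl
        rw [show a + 1 + 1 = (a+1) + 1 from rfl, band_succ (by omega), band_base, hm1, ← h1]
        group
      · rw [iw3 (by omega) (by omega), insIdx_ge (by omega), insIdx_ge (by omega), band_base]
  | succ b hab ih =>
      rw [band_succ (by omega), map_mul, map_mul, map_inv, ih (by omega), ι_σB (by omega)]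
      rcases Nat.lt_trichotomy (b + 1) m with h1 | h1 | h1
      · rw [iw1 h1, insIdx_lt (by omega), insIdx_lt (by omega), insIdx_lt (by omega),
          band_succ (by omega)]
      · rw [iw2 h1, insIdx_lt (by omega), insIdx_lt (by omega), insIdx_ge (by omega)]
        have hm1 : m - 1 = b := by omega
        rw [hm1, ← h1]
        have hcm : Commute (σB (b+1) : Braid (n+1)) (band (n+1) a b) :=
          σB_commute_band (by omega) (by omega) (Or.inr (by omega))
        rw [show b + 1 + 1 = (b+1) + 1 from rfl, band_succ (by omega), band_succ (by omega)]
        calc σB (b+1) * σB b * (σB (b+1))⁻¹ * band (n+1) a b *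
              (σB (b+1) * σB b * (σB (b+1))⁻¹)⁻¹
            = σB (b+1) * σB b * ((σB (b+1))⁻¹ * (band (n+1) a b * σB (b+1))) *
              (σB b)⁻¹ * (σB (b+1))⁻¹ := by group
          _ = σB (b+1) * σB b * ((σB (b+1))⁻¹ * (σB (b+1) * band (n+1) a b)) *
              (σB b)⁻¹ * (σB (b+1))⁻¹ := by rw [← hcm.eq]
          _ = σB (b+1) * (σB b * band (n+1) a b * (σB b)⁻¹) * (σB (b+1))⁻¹ := by group
      · rw [iw3 (by omega) (by omega), insIdx_ge (x := b) (by omega),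
          insIdx_ge (x := b+1) (by omega)]
        exact (band_succ (by unfold insIdx; split_ifs <;> omega)).symm

theorem ι_pure {m : ℕ} {x : Braid n} (hx : braidPerm n x = 1) :
    braidPerm (n+1) (ι m x) = 1 := by
  have hxb := ker_braidPerm_le_bandSub hx
  clear hx
  induction hxb using Subgroup.closure_induction with
  | mem g hg =>
      obtain ⟨i, j, hij, hj, rfl⟩ := hg
      rw [ι_band hij hj]
      exact band_perm (by unfold insIdx; split_ifs <;> omega)
        (by unfold insIdx; split_ifs <;> omega)
  | one => rw [map_one, map_one]
  | mul x y hx hy ihx ihy => rw [map_mul, map_mul, ihx, ihy, mul_one]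
  | inv x hx ihx => rw [map_inv, map_inv, ihx, inv_one]

/-- Insertion on pure braid groups. -/
def ιPure (m : ℕ) : PureBraid n →* PureBraid (n+1) :=
  ((ι m).comp (PureBraid n).subtype).codRestrict (PureBraid (n+1))
    (fun x => MonoidHom.mem_ker.mpr (ι_pure (MonoidHom.mem_ker.mp x.2)))

theorem ιPure_coe (m : ℕ) (x : PureBraid n) :
    ((ιPure m x : PureBraid (n+1)) : Braid (n+1)) = ι m (x : Braid n) := rfl

end Insertion

end Stmt18

namespace Stmt18

section QKill

variable {n m : ℕ} {q : Gn3 (n+2) →* Gn3 (n+1)}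

theorem q_cc_kill (hq : qCond (n+1) m q) {i j : ℕ} (hij : i < j) (hj : j < n + 2)
    (hm : m = i ∨ m = j) : q (cc (n+2) i j) = 1 := by
  unfold cc
  rw [map_mul, MonoidHom.map_list_prod, MonoidHom.map_list_prod, List.map_map, List.map_map]
  rw [List.prod_eq_one, List.prod_eq_one, one_mul]
  · intro x hx
    obtain ⟨k, hk, rfl⟩ := List.mem_map.mp hx
    simp only [List.mem_filter, List.mem_range, decide_eq_true_eq] at hk
    show q (a3 (n+2) i j k) = 1
    rw [hq i j k (by omega) hj hk.1 (by omega) (by omega) (by omega), if_pos (by omega)]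
  · intro x hx
    obtain ⟨k, hk, rfl⟩ := List.mem_map.mp hx
    simp only [List.mem_filter, List.mem_range, decide_eq_true_eq] at hk
    show q (a3 (n+2) i j k) = 1
    rw [hq i j k (by omega) hj hk.1 (by omega) (by omega) (by omega), if_pos (by omega)]

theorem q_phiW_kill (hq : qCond (n+1) m q) {i j : ℕ} (hij : i < j) (hj : j < n + 2)
    (hm : m = i ∨ m = j) : q (phiW (n+2) i j) = 1 := by
  unfold phiW
  rw [map_mul, map_mul, map_inv, map_pow, q_cc_kill hq hij hj hm]
  rcases hm with hm | hm
  · rw [MonoidHom.map_list_prod, List.map_map, List.prod_eq_one]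
    · group
    · intro x hx
      obtain ⟨k, hk, rfl⟩ := List.mem_map.mp hx
      rw [List.mem_reverse, List.mem_range'_1] at hk
      show q (cc (n+2) i k) = 1
      exact q_cc_kill hq (by omega) (by omega) (Or.inl hm)
  · group

end QKill

end Stmt18

/-- if `β` is a Brunnian pure braid on `n+2` strands (i.e. `p_m β = 1` for
every strand-deletion homomorphism `p_m`), then `φ(β)` is Brunnian in `G_{n+2}^3` (i.e.
`q_m (φ β) = 1` for every index-deletion homomorphism `q_m`). -/
theorem stmt18 (n : ℕ) (φ : PureBraid (n + 1) →* Gn3 (n + 2)) (hφ : phiCond (n + 1) φ)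
    (β : PureBraid (n + 1))
    (hβ : ∀ m : ℕ, m < n + 2 → ∀ p : PureBraid (n + 1) →* PureBraid n,
      pCond n m p → p β = 1) :
    ∀ m : ℕ, m < n + 2 → ∀ q : Gn3 (n + 2) →* Gn3 (n + 1),
      qCond (n + 1) m q → q (φ β) = 1 := by
  intro m hm q hq
  set p := Stmt18.pDel (n := n) ⟨m, hm⟩ with hp
  have hpc : pCond n m p := Stmt18.pDel_pCond m hm
  have hβ1 : p β = 1 := hβ m hm p hpc
  set Ψ₁ : PureBraid (n+1) →* Gn3 (n+2) := φ with hΨ₁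
  have hkey : q (φ β) = q (φ (Stmt18.ιPure m (p β))) := by
    have hβb : (β : Braid (n+1)) ∈ Stmt18.bandSub (n+1) :=
      Stmt18.ker_braidPerm_le_bandSub (MonoidHom.mem_ker.mp β.2)
    have main : ∀ g ∈ Stmt18.bandSub (n+1), ∃ hg : g ∈ PureBraid (n+1),
        q (φ ⟨g, hg⟩) = q (φ (Stmt18.ιPure m (p ⟨g, hg⟩))) := by
      intro g hg
      induction hg using Subgroup.closure_induction with
      | mem x hx =>
          obtain ⟨i, j, hij, hj, rfl⟩ := hx
          have hxp : band (n+1) i j ∈ PureBraid (n+1) :=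
            MonoidHom.mem_ker.mpr (Stmt18.band_perm hij hj)
          refine ⟨hxp, ?_⟩
          have hcoe : ((⟨band (n+1) i j, hxp⟩ : PureBraid (n+1)) : Braid (n+1)) =
            band (n+1) i j := rfl
          rw [hφ i j hij (by omega) _ hcoe]
          have hpx := hpc i j hij (by omega) _ hcoe
          by_cases hc : i = m ∨ j = m
          · rw [if_pos hc] at hpx
            have hp1 : p (⟨band (n+1) i j, hxp⟩ : PureBraid (n+1)) = 1 := by
              apply Subtype.ext
              simpa using hpx
            rw [hp1, map_one, map_one, map_one]
            exact Stmt18.q_phiW_kill hq hij (by omega) (by omega)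
          · rw [if_neg hc] at hpx
            have hcoe2 : ((Stmt18.ιPure m (p (⟨band (n+1) i j, hxp⟩ : PureBraid (n+1))) :
                PureBraid (n+1)) : Braid (n+1)) = band (n+1) i j := by
              rw [Stmt18.ιPure_coe, hpx]
              have hdl : dl m i < dl m j := by unfold dl; split_ifs <;> omega
              have hdlj : dl m j ≤ n := by unfold dl; split_ifs <;> omega
              show Stmt18.ι m (band n (dl m i) (dl m j)) = band (n + 1) i j
              rw [Stmt18.ι_band hdl hdlj]
              congr 1
              · unfold Stmt18.insIdx dl; split_ifs <;> omega
              · unfold Stmt18.insIdx dl; split_ifs <;> omega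
            rw [hφ i j hij (by omega) _ hcoe2]
      | one =>
          refine ⟨one_mem _, ?_⟩
          have h1 : (⟨(1 : Braid (n+1)), one_mem _⟩ : PureBraid (n+1)) = 1 := rfl
          rw [h1]
          simp only [map_one]
      | mul x y hx hy ihx ihy =>
          obtain ⟨hgx, ex⟩ := ihx
          obtain ⟨hgy, ey⟩ := ihy
          refine ⟨mul_mem hgx hgy, ?_⟩
          have hsplit : (⟨x * y, mul_mem hgx hgy⟩ : PureBraid (n+1)) =
              ⟨x, hgx⟩ * ⟨y, hgy⟩ := rfl
          rw [hsplit, map_mul, map_mul, map_mul, map_mul, map_mul, map_mul, ex, ey]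
      | inv x hx ihx =>
          obtain ⟨hgx, ex⟩ := ihx
          refine ⟨inv_mem hgx, ?_⟩
          have hsplit : (⟨x⁻¹, inv_mem hgx⟩ : PureBraid (n+1)) =
              (⟨x, hgx⟩ : PureBraid (n+1))⁻¹ := rfl
          rw [hsplit, map_inv, map_inv, map_inv, map_inv, map_inv, map_inv, ex]
    obtain ⟨hg, e⟩ := main (β : Braid (n+1)) hβb
    have hββ : (⟨(β : Braid (n+1)), hg⟩ : PureBraid (n+1)) = β := Subtype.ext rfl
    rw [hββ] at e
    exact e
  rw [hkey, hβ1, map_one, map_one, map_one]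
end
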